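/- arXiv:2006.16119 — 7 statements merged into one kernel-verified Lean document; each statement's English description precedes it below -/
import Mathlib

section
/- Let m1 > m2 be positive integers and let q > 1 satisfy m2 < m1 < q − 1. Then D_{m1,m2}(q) contains the point log(m2+1)/log q; that is, there exists t ∈ U_{m1,m2}(q) with dim_H(Γ_{q,m1} ∩ (Γ_{q,m2} + t)) = log(m2+1)/log q. -/
open scoped ENNReal NNReal
open Filter Set

/-- `Gamma q m` is the set of sums `∑ cᵢ/qⁱ` with digits `cᵢ ∈ {0,…,m}`. -/
noncomputable def Gamma (q : ℝ) (m : ℕ) : Set ℝ :=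
  {x | ∃ c : ℕ → ℕ, (∀ i, c i ≤ m) ∧ x = ∑' i : ℕ, (c i : ℝ) / q ^ (i + 1)}

/-- `(a i)` is an expansion of `t` in base `q` over the alphabet `{-m2,…,m1}`. -/
def IsExpansion (q : ℝ) (m1 m2 : ℕ) (a : ℕ → ℤ) (t : ℝ) : Prop :=
  (∀ i, -(m2 : ℤ) ≤ a i ∧ a i ≤ (m1 : ℤ)) ∧ t = ∑' i : ℕ, (a i : ℝ) / q ^ (i + 1)

/-- `U_{m1,m2}(q)`: reals with a unique expansion over `{-m2,…,m1}`. -/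
def uniqSet (q : ℝ) (m1 m2 : ℕ) : Set ℝ :=
  {t | ∃! a : ℕ → ℤ, IsExpansion q m1 m2 a t}

/-- `D_{m1,m2}(q)`: the set of Hausdorff dimensions of `Γ_{q,m1} ∩ (Γ_{q,m2} + t)`
for `t ∈ U_{m1,m2}(q)`. -/
noncomputable def dimSet (q : ℝ) (m1 m2 : ℕ) : Set ℝ≥0∞ :=
  {d | ∃ t ∈ uniqSet q m1 m2,
    dimH (Gamma q m1 ∩ ((fun x => x + t) '' Gamma q m2)) = d}

open Filter Set

lemma aux_summable {q : ℝ} (hq : 1 < q) {b : ℕ → ℝ} {M : ℝ} (hb : ∀ i, |b i| ≤ M) :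
    Summable (fun i => b i / q ^ (i + 1)) := by
  have hq0 : 0 < q := lt_trans one_pos hq
  have hM : 0 ≤ M := le_trans (abs_nonneg _) (hb 0)
  have hr : (0:ℝ) ≤ q⁻¹ := by positivity
  have hr1 : q⁻¹ < 1 := inv_lt_one_of_one_lt₀ hq
  apply Summable.of_norm_bounded (g := fun i => M * q⁻¹ ^ i)
    ((summable_geometric_of_lt_one hr hr1).mul_left M)
  intro i
  rw [Real.norm_eq_abs, abs_div, abs_of_pos (pow_pos hq0 (i+1))]
  calc |b i| / q ^ (i+1) ≤ M / q ^ (i+1) := by gcongr; exact hb i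
    _ ≤ M * q⁻¹ ^ i := by
        rw [div_eq_mul_inv, ← inv_pow]
        exact mul_le_mul_of_nonneg_left (pow_le_pow_of_le_one hr hr1.le (Nat.le_succ i)) hM

lemma aux_geom_tsum {q : ℝ} (hq : 1 < q) (M : ℝ) :
    ∑' i : ℕ, M / q ^ (i + 1) = M / (q - 1) := by
  have hq0 : 0 < q := lt_trans one_pos hq
  have hq1 : (0:ℝ) < q - 1 := by linarith
  have hr : (0:ℝ) ≤ q⁻¹ := by positivity
  have hr1 : q⁻¹ < 1 := inv_lt_one_of_one_lt₀ hq
  have h : ∀ i : ℕ, M / q ^ (i+1) = (M / q) * q⁻¹ ^ i := by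
    intro i; rw [pow_succ']; field_simp; rw [one_div, mul_assoc, ← mul_pow, mul_inv_cancel₀ hq0.ne', one_pow, mul_one]
  rw [tsum_congr h, tsum_mul_left, tsum_geometric_of_lt_one hr hr1]
  rw [div_mul_eq_mul_div, div_eq_div_iff (by positivity) hq1.ne']
  field_simp

lemma aux_abs_div {q : ℝ} (hq : 1 < q) (b : ℕ → ℝ) :
    (fun i => |b i / q ^ (i + 1)|) = (fun i => |b i| / q ^ (i+1)) := by
  funext i
  rw [abs_div, abs_of_pos (pow_pos (lt_trans one_pos hq) (i+1))]

lemma aux_tsum_bound {q : ℝ} (hq : 1 < q) {b : ℕ → ℝ} {M : ℝ} (hb : ∀ i, |b i| ≤ M) :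
    |∑' i, b i / q ^ (i + 1)| ≤ M / (q - 1) := by
  have hq0 : 0 < q := lt_trans one_pos hq
  have hsum : Summable (fun i => |b i| / q ^ (i + 1)) :=
    aux_summable hq (M := M) (fun i => by rw [abs_abs]; exact hb i)
  have hsum' : Summable (fun i => |b i / q ^ (i + 1)|) := by
    rw [aux_abs_div hq]; exact hsum
  have h2 : Summable (fun i : ℕ => M / q ^ (i + 1)) :=
    aux_summable hq (b := fun _ => M) (M := |M|) (fun _ => by simp)
  calc |∑' i, b i / q ^ (i + 1)| ≤ ∑' i, |b i / q ^ (i+1)| := by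
        have h := norm_tsum_le_tsum_norm (f := fun i : ℕ => b i / q ^ (i+1)) ?_
        · simpa only [Real.norm_eq_abs] using h
        · simpa only [Real.norm_eq_abs] using hsum'
    _ ≤ ∑' i : ℕ, M / q ^ (i + 1) := by
        refine Summable.tsum_le_tsum (fun i => ?_) hsum' h2
        rw [abs_div, abs_of_pos (pow_pos hq0 (i+1))]
        gcongr
        exact hb i
    _ = M / (q - 1) := aux_geom_tsum hq M

lemma aux_split {q : ℝ} (hq : 1 < q) {b : ℕ → ℝ} {M : ℝ} (hb : ∀ i, |b i| ≤ M) (n : ℕ) :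
    ∑' i, b i / q ^ (i + 1) = (∑ i ∈ Finset.range n, b i / q ^ (i+1))
      + (q ^ n)⁻¹ * ∑' i, b (i + n) / q ^ (i + 1) := by
  have hq0 : 0 < q := lt_trans one_pos hq
  have hs := aux_summable hq hb
  rw [← Summable.sum_add_tsum_nat_add (f := fun i => b i / q ^ (i+1)) n hs]
  congr 1
  have h : ∀ i : ℕ, b (i + n) / q ^ (i + n + 1) = (q^n)⁻¹ * (b (i+n) / q ^ (i+1)) := by
    intro i
    rw [show i + n + 1 = n + (i+1) by ring, pow_add]
    field_simp
  rw [tsum_congr h, tsum_mul_left]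

lemma aux_upper {q : ℝ} (hq : 1 < q) {b : ℕ → ℝ} {M : ℝ} (hb : ∀ i, |b i| ≤ M)
    (n : ℕ) (h0 : ∀ i < n, b i = 0) :
    |∑' i, b i / q ^ (i + 1)| ≤ (M / (q - 1)) / q ^ n := by
  have hq0 : 0 < q := lt_trans one_pos hq
  rw [aux_split hq hb n, Finset.sum_eq_zero (fun i hi => by
    rw [h0 i (Finset.mem_range.mp hi)]; simp), zero_add, abs_mul,
    abs_of_pos (by positivity : (0:ℝ) < (q ^ n)⁻¹), mul_comm, ← div_eq_mul_inv]
  exact div_le_div_of_nonneg_right (aux_tsum_bound hq (fun i => hb (i + n))) (pow_pos hq0 n).le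

lemma aux_lower {q : ℝ} (hq : 1 < q) {b : ℕ → ℤ} {M : ℝ} (hb : ∀ i, |(b i : ℝ)| ≤ M)
    (n : ℕ) (h0 : ∀ i < n, b i = 0) (hn : b n ≠ 0) :
    (1 - M / (q - 1)) / q ^ (n + 1) ≤ |∑' i, (b i : ℝ) / q ^ (i + 1)| := by
  have hq0 : 0 < q := lt_trans one_pos hq
  have hsplit := aux_split hq hb (n + 1)
  have hsum : ∑ i ∈ Finset.range (n+1), (b i : ℝ) / q ^ (i+1) = (b n : ℝ) / q ^ (n+1) := by
    rw [Finset.sum_eq_single_of_mem n (Finset.mem_range.mpr (Nat.lt_succ_self n))]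
    intro i hi hne
    rw [h0 i (lt_of_le_of_ne (Nat.lt_succ_iff.mp (Finset.mem_range.mp hi)) hne)]
    simp
  have hT : |∑' i, (b (i + (n+1)) : ℝ) / q ^ (i + 1)| ≤ M / (q - 1) :=
    aux_tsum_bound hq (fun i => hb (i + (n+1)))
  have hbn : (1:ℝ) ≤ |(b n : ℝ)| := by
    rw [← Int.cast_abs]
    exact_mod_cast Int.one_le_abs hn
  calc (1 - M / (q - 1)) / q ^ (n + 1)
      ≤ |(b n : ℝ)| / q ^ (n+1) - (M / (q-1)) / q ^ (n+1) := by
        rw [sub_div]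
        gcongr
    _ ≤ |(b n : ℝ) / q ^ (n+1)| - |(q ^ (n+1))⁻¹ * ∑' i, (b (i + (n+1)) : ℝ) / q ^ (i + 1)| := by
        rw [abs_div, abs_of_pos (pow_pos hq0 (n+1)), abs_mul,
          abs_of_pos (by positivity : (0:ℝ) < (q ^ (n+1))⁻¹), mul_comm, ← div_eq_mul_inv]
        gcongr
    _ ≤ |(b n : ℝ) / q ^ (n+1) + (q ^ (n+1))⁻¹ * ∑' i, (b (i + (n+1)) : ℝ) / q ^ (i + 1)| := by
        simpa using abs_sub_abs_le_abs_sub ((b n : ℝ) / q ^ (n+1))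
          (-((q ^ (n+1))⁻¹ * ∑' i, (b (i + (n+1)) : ℝ) / q ^ (i + 1)))
    _ = |∑' i, (b i : ℝ) / q ^ (i + 1)| := by rw [hsplit, hsum]

lemma aux_inj {q : ℝ} (hq : 1 < q) {b : ℕ → ℤ} {M : ℝ} (hM : M < q - 1)
    (hb : ∀ i, |(b i : ℝ)| ≤ M) (h : ∑' i, (b i : ℝ) / q ^ (i + 1) = 0) : ∀ i, b i = 0 := by
  have hq0 : 0 < q := lt_trans one_pos hq
  by_contra hc
  push_neg at hc
  have hex : ∃ n, b n ≠ 0 := hc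
  classical
  let n := Nat.find hex
  have hlow := aux_lower hq hb n (fun i hi => by
    by_contra hne; exact absurd (Nat.find_le hne) (not_le.mpr hi)) (Nat.find_spec hex)
  rw [h, abs_zero] at hlow
  have hMq : M / (q - 1) < 1 := (div_lt_one (by linarith)).mpr hM
  have : 0 < (1 - M / (q - 1)) / q ^ (n + 1) := by
    apply div_pos (by linarith) (pow_pos hq0 (n+1))
  linarith

lemma greedy {m : ℕ} (hm : 1 ≤ m) {x : ℝ} (hx : x ∈ Ico (0:ℝ) 1) :
    x ∈ Gamma ((m:ℝ)+1) m := by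
  set p : ℝ := (m:ℝ) + 1 with hp
  set P : ℤ := (m:ℤ) + 1 with hP
  have hPp : (P : ℝ) = p := by simp [hP, hp]
  have hp1 : 1 < p := by rw [hp]; exact_mod_cast Nat.lt_succ_of_le (le_trans hm le_rfl)
  have hp0 : 0 < p := lt_trans one_pos hp1
  set a : ℕ → ℤ := fun n => ⌊p ^ n * x⌋ with ha
  have ha0 : a 0 = 0 := by
    simp only [ha, pow_zero, one_mul]
    exact Int.floor_eq_zero_iff.mpr (by simpa using hx)
  have hlow : ∀ i, P * a i ≤ a (i+1) := by
    intro i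
    apply Int.le_floor.mpr
    push_cast [hPp]
    calc p * (⌊p ^ i * x⌋ : ℝ) ≤ p * (p ^ i * x) :=
          mul_le_mul_of_nonneg_left (Int.floor_le _) hp0.le
      _ = p ^ (i+1) * x := by ring
  have hhigh : ∀ i, a (i+1) ≤ P * a i + m := by
    intro i
    have h1 : a (i+1) < P * a i + P := by
      apply Int.floor_lt.mpr
      push_cast [hPp]
      calc p ^ (i+1) * x = p * (p ^ i * x) := by ring
        _ < p * ((⌊p ^ i * x⌋ : ℝ) + 1) :=
            mul_lt_mul_of_pos_left (Int.lt_floor_add_one _) hp0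
        _ = p * (⌊p ^ i * x⌋ : ℝ) + p := by ring
    omega
  set c : ℕ → ℕ := fun i => (a (i+1) - P * a i).toNat with hc
  have hcZ : ∀ i, (c i : ℤ) = a (i+1) - P * a i := by
    intro i; rw [hc]; exact Int.toNat_of_nonneg (by linarith [hlow i])
  have hcm : ∀ i, c i ≤ m := by
    intro i
    have := hhigh i
    have h2 := hcZ i
    omega
  refine ⟨c, hcm, ?_⟩
  have hsum : Summable (fun i => (c i : ℝ) / p ^ (i+1)) := by
    apply aux_summable hp1 (M := (m:ℝ))
    intro i
    rw [abs_of_nonneg (by positivity)]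
    exact_mod_cast hcm i
  symm
  apply HasSum.tsum_eq
  rw [hsum.hasSum_iff_tendsto_nat]
  have hterm : ∀ i : ℕ, (c i : ℝ) / p ^ (i+1) = (a (i+1) : ℝ) / p ^ (i+1) - (a i : ℝ) / p ^ i := by
    intro i
    have h2 : ((c i : ℤ) : ℝ) = (a (i+1) : ℝ) - p * (a i : ℝ) := by
      rw [hcZ i]; push_cast [hPp]; ring
    rw [show ((c i : ℕ) : ℝ) = ((c i : ℤ) : ℝ) by push_cast; ring, h2]
    field_simp
    ring
  have hps : ∀ n : ℕ, ∑ i ∈ Finset.range n, (c i : ℝ) / p ^ (i+1) = (a n : ℝ) / p ^ n := by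
    intro n
    rw [Finset.sum_congr rfl (fun i _ => hterm i),
      Finset.sum_range_sub (fun j => (a j : ℝ) / p ^ j), ha0]
    simp
  simp only [hps]
  have hub : ∀ n : ℕ, (a n : ℝ) / p ^ n ≤ x := by
    intro n
    rw [div_le_iff₀ (pow_pos hp0 n)]
    calc ((a n : ℝ)) ≤ p ^ n * x := Int.floor_le _
      _ = x * p ^ n := by ring
  have hlb : ∀ n : ℕ, x - p⁻¹ ^ n ≤ (a n : ℝ) / p ^ n := by
    intro n
    rw [sub_le_iff_le_add, div_add' _ _ _ (pow_pos hp0 n).ne', le_div_iff₀ (pow_pos hp0 n)]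
    have := (Int.lt_floor_add_one (p ^ n * x)).le
    calc x * p ^ n = p ^ n * x := by ring
      _ ≤ (a n : ℝ) + 1 := this
      _ = (a n : ℝ) + p⁻¹ ^ n * p ^ n := by
          rw [inv_pow, inv_mul_cancel₀ (pow_pos hp0 n).ne']
  have h0 : Tendsto (fun n : ℕ => x - p⁻¹ ^ n) atTop (nhds x) := by
    have : Tendsto (fun n : ℕ => p⁻¹ ^ n) atTop (nhds 0) :=
      tendsto_pow_atTop_nhds_zero_of_lt_one (by positivity) (inv_lt_one_of_one_lt₀ hp1)
    simpa using tendsto_const_nhds.sub this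
  exact tendsto_of_tendsto_of_tendsto_of_le_of_le h0 tendsto_const_nhds hlb hub

lemma q_rpow_s {q : ℝ} (hq : 1 < q) {m : ℕ} (hm : 1 ≤ m) :
    q ^ (Real.log (m+1) / Real.log q) = (m : ℝ) + 1 := by
  have hq0 : 0 < q := lt_trans one_pos hq
  have hlq : Real.log q ≠ 0 := ne_of_gt (Real.log_pos hq)
  rw [Real.rpow_def_of_pos hq0,
    show Real.log q * (Real.log (m+1) / Real.log q) = Real.log (m+1) by field_simp,
    Real.exp_log (by positivity)]

lemma dimH_upper {q : ℝ} (hq : 1 < q) {m : ℕ} (hm : 1 ≤ m) (h1 : (m:ℝ) < q - 1) :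
    dimH (Gamma q m) ≤ ENNReal.ofReal (Real.log (m+1) / Real.log q) := by
  have hq0 : 0 < q := lt_trans one_pos hq
  set s : ℝ := Real.log (m+1) / Real.log q with hsdef
  have hm' : (1:ℝ) ≤ (m:ℝ) := by exact_mod_cast hm
  have hs0 : 0 < s := div_pos (Real.log_pos (by linarith)) (Real.log_pos hq)
  have hofr : (s.toNNReal : ℝ≥0∞) = ENNReal.ofReal s := rfl
  rw [← hofr]
  apply dimH_le_of_hausdorffMeasure_ne_top
  have hco : (s.toNNReal : ℝ) = s := Real.coe_toNNReal _ hs0.le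
  rw [hco]
  set K : ℝ := (m:ℝ) / (q - 1) with hK
  have hK0 : 0 < K := div_pos (by exact_mod_cast hm) (by linarith)
  -- the cover
  set t : ∀ n : ℕ, (Fin n → Fin (m+1)) → Set ℝ := fun n w =>
    Icc (∑ i ∈ Finset.range n, (fun j : ℕ => if h : j < n then ((w ⟨j, h⟩ : ℕ) : ℝ) / q ^ (j+1) else 0) i)
        ((∑ i ∈ Finset.range n, (fun j : ℕ => if h : j < n then ((w ⟨j, h⟩ : ℕ) : ℝ) / q ^ (j+1) else 0) i) + K * (q⁻¹) ^ n) with ht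
  have hcover : ∀ n : ℕ, Gamma q m ⊆ ⋃ w, t n w := by
    intro n x hx
    obtain ⟨c, hc, hxe⟩ := hx
    have hb : ∀ i, |((c i : ℝ))| ≤ (m : ℝ) := fun i => by
      rw [abs_of_nonneg (by positivity)]; exact_mod_cast hc i
    refine mem_iUnion.mpr ⟨fun i => ⟨c i, Nat.lt_succ_of_le (hc i)⟩, ?_⟩
    have hsumeq : (∑ i ∈ Finset.range n,
        (fun j : ℕ => if h : j < n then (((c j : ℕ)) : ℝ) / q ^ (j+1) else 0) i)
        = ∑ i ∈ Finset.range n, (c i : ℝ) / q ^ (i+1) := by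
      apply Finset.sum_congr rfl
      intro i hi
      simp [Finset.mem_range.mp hi]
    have hsplit := aux_split hq hb n
    have hT0 : 0 ≤ ∑' i, (c (i+n) : ℝ) / q ^ (i + 1) := tsum_nonneg (fun i => by positivity)
    have hT1 : ∑' i, (c (i+n) : ℝ) / q ^ (i + 1) ≤ (m:ℝ)/(q-1) := by
      have := aux_tsum_bound hq (fun i => hb (i + n))
      exact (abs_le.mp this).2
    constructor
    · rw [hsumeq, hxe, hsplit]
      have : 0 ≤ (q ^ n)⁻¹ * ∑' i, (c (i+n) : ℝ) / q ^ (i + 1) := by positivity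
      linarith
    · rw [hsumeq, hxe, hsplit]
      have h2 : (q ^ n)⁻¹ * ∑' i, (c (i+n) : ℝ) / q ^ (i + 1) ≤ K * q⁻¹ ^ n := by
        rw [hK, mul_comm, inv_pow]
        exact mul_le_mul_of_nonneg_right hT1 (by positivity) |>.trans_eq (by ring)
      linarith
  have hdiam : ∀ n w, EMetric.diam (t n w) ≤ ENNReal.ofReal (K * q⁻¹ ^ n) := by
    intro n w
    rw [ht]
    simp only [EMetric.diam]; rw [Real.ediam_Icc]
    simp
  have hmain := MeasureTheory.Measure.hausdorffMeasure_le_liminf_sum (X := ℝ) (l := atTop) s (Gamma q m)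
    (fun n => ENNReal.ofReal (K * q⁻¹ ^ n)) ?_ t
    (Eventually.of_forall hdiam) (Eventually.of_forall hcover)
  · refine ne_of_lt (lt_of_le_of_lt
      (hmain.trans (?_ : _ ≤ ENNReal.ofReal (K ^ s))) ENNReal.ofReal_lt_top)
    have hsum : ∀ n : ℕ, (∑ w : Fin n → Fin (m+1), EMetric.diam (t n w) ^ s)
        = ENNReal.ofReal (K ^ s) := by
      intro n
      have hqs : q ^ s = (m:ℝ) + 1 := q_rpow_s hq hm
      have hdiam' : ∀ w, EMetric.diam (t n w) = ENNReal.ofReal (K * q⁻¹ ^ n) := by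
        intro w; rw [ht]; simp only [EMetric.diam]; rw [Real.ediam_Icc]; simp
      calc (∑ w : Fin n → Fin (m+1), EMetric.diam (t n w) ^ s)
          = (Fintype.card (Fin n → Fin (m+1))) •
              (ENNReal.ofReal (K * q⁻¹ ^ n)) ^ s := by
            rw [Finset.sum_congr rfl (fun w _ => by rw [hdiam' w]), Finset.sum_const,
              Finset.card_univ]
        _ = ((m+1) ^ n : ℕ) * ENNReal.ofReal ((K * q⁻¹ ^ n) ^ s) := by
            rw [Fintype.card_fun, Fintype.card_fin, Fintype.card_fin, nsmul_eq_mul,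
              ENNReal.ofReal_rpow_of_pos (by positivity)]
        _ = ENNReal.ofReal (((m+1) ^ n : ℕ) * (K * q⁻¹ ^ n) ^ s) := by
            rw [ENNReal.ofReal_mul (by positivity)]
            congr 1
            rw [ENNReal.ofReal_natCast]
        _ = ENNReal.ofReal (K ^ s) := by
            congr 1
            rw [Real.mul_rpow hK0.le (by positivity)]
            have hps : (q⁻¹ ^ n : ℝ) ^ s = (((m:ℝ)+1) ^ n)⁻¹ := by
              rw [inv_pow, Real.inv_rpow (by positivity), ← Real.rpow_natCast q n,
                ← Real.rpow_mul hq0.le, mul_comm, Real.rpow_mul hq0.le, hqs,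
                Real.rpow_natCast]
            rw [hps]
            have hpn : (((m:ℝ)+1) ^ n) ≠ 0 := by positivity
            push_cast
            field_simp
    have hlim : liminf (fun n => ∑ w : Fin n → Fin (m+1), EMetric.diam (t n w) ^ s) atTop
        ≤ ENNReal.ofReal (K ^ s) := by
      rw [funext hsum, liminf_const]
    exact hlim
  · have h3 : Tendsto (fun n : ℕ => K * q⁻¹ ^ n) atTop (nhds 0) := by
      simpa using (tendsto_pow_atTop_nhds_zero_of_lt_one (by positivity)
        (inv_lt_one_of_one_lt₀ hq)).const_mul K
    simpa using ENNReal.tendsto_ofReal h3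

section
variable {q : ℝ} {m : ℕ}

lemma digit_abs_le {c c' : ℕ → ℕ} (hc : ∀ i, c i ≤ m) (hc' : ∀ i, c' i ≤ m) (i : ℕ) :
    |(((c i : ℤ) - (c' i : ℤ) : ℤ) : ℝ)| ≤ (m : ℝ) := by
  have h1 : (0:ℝ) ≤ (c i : ℝ) := by positivity
  have h2 : (c i : ℝ) ≤ m := by exact_mod_cast hc i
  have h3 : (0:ℝ) ≤ (c' i : ℝ) := by positivity
  have h4 : (c' i : ℝ) ≤ m := by exact_mod_cast hc' i
  rw [abs_le]
  push_cast
  constructor <;> linarith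

lemma tsum_digit_sub (hq : 1 < q) {c c' : ℕ → ℕ} (hc : ∀ i, c i ≤ m) (hc' : ∀ i, c' i ≤ m) :
    ∑' i, ((((c i : ℤ) - (c' i : ℤ) : ℤ)) : ℝ) / q ^ (i + 1)
      = (∑' i, (c i : ℝ) / q ^ (i+1)) - ∑' i, (c' i : ℝ) / q ^ (i+1) := by
  have hs1 : Summable (fun i => (c i : ℝ) / q ^ (i+1)) :=
    aux_summable hq (M := (m:ℝ)) (fun i => by
      rw [abs_of_nonneg (by positivity)]; exact_mod_cast hc i)
  have hs2 : Summable (fun i => (c' i : ℝ) / q ^ (i+1)) :=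
    aux_summable hq (M := (m:ℝ)) (fun i => by
      rw [abs_of_nonneg (by positivity)]; exact_mod_cast hc' i)
  rw [← Summable.tsum_sub hs1 hs2]
  apply tsum_congr
  intro i
  push_cast
  ring

lemma code_inj (hq : 1 < q) (h1 : (m:ℝ) < q - 1) {c c' : ℕ → ℕ}
    (hc : ∀ i, c i ≤ m) (hc' : ∀ i, c' i ≤ m)
    (h : ∑' i, (c i : ℝ) / q ^ (i+1) = ∑' i, (c' i : ℝ) / q ^ (i+1)) : c = c' := by
  have hz := aux_inj hq h1 (digit_abs_le hc hc')
    (by rw [tsum_digit_sub hq hc hc', h, sub_self])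
  funext i
  have := hz i
  omega

lemma dimH_lower (hq : 1 < q) (hm : 1 ≤ m) (h1 : (m:ℝ) < q - 1) :
    ENNReal.ofReal (Real.log (m+1) / Real.log q) ≤ dimH (Gamma q m) := by
  classical
  have hq0 : 0 < q := lt_trans one_pos hq
  have hm' : (1:ℝ) ≤ (m:ℝ) := by exact_mod_cast hm
  set p : ℝ := (m:ℝ) + 1 with hp
  have hp1 : 1 < p := by rw [hp]; linarith
  set s : ℝ := Real.log (m+1) / Real.log q with hsdef
  have hs0 : 0 < s := div_pos (Real.log_pos (by linarith)) (Real.log_pos hq)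
  have hqs : q ^ s = p := q_rpow_s hq hm
  set ε : ℝ := 1 - (m:ℝ)/(q-1) with he
  have hε0 : 0 < ε := by
    rw [he, sub_pos, div_lt_one (by linarith)]
    linarith
  set C : ℝ := p * ε ^ (-s) with hC
  have hC0 : 0 < C := mul_pos (by linarith) (Real.rpow_pos_of_pos hε0 _)
  set F : ℝ → ℝ := fun x =>
    if h : x ∈ Gamma q m then ∑' i, ((Classical.choose h) i : ℝ) / p ^ (i+1) else 0 with hF
  have hr0 : 0 < s.toNNReal := Real.toNNReal_pos.mpr hs0
  -- Hölder continuity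
  have hHolder : HolderOnWith C.toNNReal s.toNNReal F (Gamma q m) := by
    intro x hx y hy
    by_cases hxy : x = y
    · subst hxy
      simp
    obtain ⟨hcx, hxe⟩ := Classical.choose_spec hx
    obtain ⟨hcy, hye⟩ := Classical.choose_spec hy
    set cx := Classical.choose hx
    set cy := Classical.choose hy
    have hcc : cx ≠ cy := by
      intro hee
      exact hxy (by rw [hxe, hye, hee])
    have hex : ∃ n, cx n ≠ cy n := Function.ne_iff.mp hcc
    set n := Nat.find hex with hn
    have hbne : cx n ≠ cy n := Nat.find_spec hex
    have hbmin : ∀ i < n, cx i = cy i := fun i hi => by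
      by_contra hne
      exact absurd (Nat.find_le hne) (not_le.mpr hi)
    set b : ℕ → ℤ := fun i => (cx i : ℤ) - (cy i : ℤ) with hb
    have hbabs : ∀ i, |(b i : ℝ)| ≤ (m:ℝ) := digit_abs_le hcx hcy
    have hb0 : ∀ i < n, b i = 0 := fun i hi => by
      rw [hb]; simp [hbmin i hi]
    have hbn : b n ≠ 0 := sub_ne_zero.mpr (by exact_mod_cast hbne)
    have hxyeq : x - y = ∑' i, (b i : ℝ) / q ^ (i+1) := by
      rw [hxe, hye, tsum_digit_sub hq hcx hcy]
    have hlow : ε / q ^ (n+1) ≤ |x - y| := by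
      rw [hxyeq]
      exact aux_lower hq hbabs n hb0 hbn
    have hFx : F x = ∑' i, (cx i : ℝ) / p ^ (i+1) := dif_pos hx
    have hFy : F y = ∑' i, (cy i : ℝ) / p ^ (i+1) := dif_pos hy
    have hFxy : F x - F y = ∑' i, (b i : ℝ) / p ^ (i+1) := by
      rw [hFx, hFy, tsum_digit_sub hp1 hcx hcy]
    have hupp : |F x - F y| ≤ 1 / p ^ n := by
      rw [hFxy]
      have := aux_upper hp1 hbabs n (fun i hi => by rw [hb0 i hi]; simp)
      have hone : ((m:ℝ)) / (p - 1) = 1 := by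
        rw [hp]; field_simp; rw [add_sub_cancel_right, div_self (show (m:ℝ) ≠ 0 from ne_of_gt (by linarith))]
      rwa [hone] at this
    -- the real inequality
    have hkey : |F x - F y| ≤ C * |x - y| ^ s := by
      have h5 : (ε/q^(n+1)) ^ s ≤ |x - y| ^ s :=
        Real.rpow_le_rpow (by positivity) hlow hs0.le
      have hqns : ((q:ℝ) ^ (n+1)) ^ s = p ^ (n+1) := by
        rw [← Real.rpow_natCast q (n+1), ← Real.rpow_mul hq0.le, mul_comm,
          Real.rpow_mul hq0.le, hqs, Real.rpow_natCast]
      have h6 : C * (ε/q^(n+1)) ^ s = 1 / p ^ n := by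
        rw [Real.div_rpow hε0.le (by positivity), hqns, hC,
          Real.rpow_neg hε0.le]
        have hεs : (0:ℝ) < ε ^ s := Real.rpow_pos_of_pos hε0 _
        rw [pow_succ]
        field_simp
      calc |F x - F y| ≤ 1 / p ^ n := hupp
        _ = C * (ε/q^(n+1)) ^ s := h6.symm
        _ ≤ C * |x - y| ^ s := mul_le_mul_of_nonneg_left h5 hC0.le
    -- convert to edist
    have habs : 0 < |x - y| := abs_pos.mpr (sub_ne_zero.mpr hxy)
    rw [edist_dist, edist_dist, Real.dist_eq, Real.dist_eq, Real.coe_toNNReal _ hs0.le,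
      ENNReal.ofReal_rpow_of_pos habs]
    calc ENNReal.ofReal |F x - F y| ≤ ENNReal.ofReal (C * |x - y| ^ s) :=
          ENNReal.ofReal_le_ofReal hkey
      _ = ↑C.toNNReal * ENNReal.ofReal (|x - y| ^ s) := by
          rw [ENNReal.ofReal_mul hC0.le]
          rfl
  -- the image contains [0,1)
  have himg : Ico (0:ℝ) 1 ⊆ F '' Gamma q m := by
    intro x hx
    obtain ⟨c, hc, hxe⟩ := greedy hm hx
    have hy : (∑' i, (c i : ℝ) / q ^ (i+1)) ∈ Gamma q m := ⟨c, hc, rfl⟩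
    refine ⟨∑' i, (c i : ℝ) / q ^ (i+1), hy, ?_⟩
    obtain ⟨hc2, hy2⟩ := Classical.choose_spec hy
    have hce : Classical.choose hy = c := code_inj hq h1 hc2 hc hy2.symm
    have : F (∑' i, (c i : ℝ) / q ^ (i+1)) = ∑' i, ((Classical.choose hy) i : ℝ) / p ^ (i+1) :=
      dif_pos hy
    rw [this, hce]
    exact hxe.symm
  -- conclude
  have h7 : dimH (F '' Gamma q m) ≤ dimH (Gamma q m) / s.toNNReal :=
    hHolder.dimH_image_le hr0
  have h9 : dimH (Ico (0:ℝ) 1) = 1 := by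
    rw [Real.dimH_of_nonempty_interior (by rw [interior_Ico]; exact ⟨1/2, by norm_num⟩)]
    simp
  have h8 : (1:ℝ≥0∞) ≤ dimH (F '' Gamma q m) := by
    rw [← h9]
    exact dimH_mono himg
  have h10 := h8.trans h7
  rw [ENNReal.le_div_iff_mul_le (Or.inl (by exact_mod_cast hr0.ne'))
    (Or.inl ENNReal.coe_ne_top), one_mul] at h10
  exact le_trans (le_of_eq rfl) h10

end

theorem stmt2 (m1 m2 : ℕ) (hm2 : 1 ≤ m2) (hm : m2 < m1) (q : ℝ) (hq : 1 < q)
    (h1 : (m1 : ℝ) < q - 1) :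
    ENNReal.ofReal (Real.log (m2 + 1) / Real.log q) ∈ dimSet q m1 m2 := by
  have hm1R : (m1:ℝ) ≥ 1 := by exact_mod_cast Nat.one_le_of_lt hm
  have h2 : (m2:ℝ) < q - 1 := by
    have : (m2:ℝ) < (m1:ℝ) := by exact_mod_cast hm
    linarith
  -- 0 has a unique expansion
  have huniq : (0:ℝ) ∈ uniqSet q m1 m2 := by
    refine ⟨fun _ => 0, ⟨fun i => by simp, by simp⟩, ?_⟩
    rintro a ⟨hab, hae⟩
    funext i
    refine aux_inj hq (M := (m1:ℝ)) h1 ?_ hae.symm i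
    intro j
    obtain ⟨hl, hr⟩ := hab j
    rw [abs_le]
    constructor
    · have : -(m2:ℝ) ≤ (a j : ℝ) := by exact_mod_cast hl
      have hmm : (m2:ℝ) ≤ (m1:ℝ) := by exact_mod_cast hm.le
      linarith
    · exact_mod_cast hr
  refine ⟨0, huniq, ?_⟩
  have himg : (fun x => x + (0:ℝ)) '' Gamma q m2 = Gamma q m2 := by
    simp
  have hsub : Gamma q m2 ⊆ Gamma q m1 := by
    rintro x ⟨c, hc, he⟩
    exact ⟨c, fun i => le_trans (hc i) hm.le, he⟩
  have hint : Gamma q m1 ∩ ((fun x => x + (0:ℝ)) '' Gamma q m2) = Gamma q m2 := by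
    rw [himg]
    exact Set.inter_eq_self_of_subset_right hsub
  rw [hint]
  have hcast : ((m2:ℝ) + 1) = (((m2:ℕ)+1 : ℕ) : ℝ) := by push_cast; ring
  exact le_antisymm (dimH_upper hq hm2 h2) (dimH_lower hq hm2 h2)
end

section
/- Let M ≥ 1 and ℓ ≥ 1 be integers, and let (τ_i)_{i≥0} be the mirror sequence generated by an initial word τ_0⋯τ_{ℓ−1} ∈ {0,...,M}^ℓ. Then every nonempty finite word δ over {0,...,M} has a density d(δ) := lim_{m→∞} N^δ(τ_0⋯τ_{m−1})/m in (τ_i). Moreover, for every integer n ≥ 0 satisfying 4^n·ℓ ≥ |δ| − 1 one has d(δ) = d(δ̄) = (P − N)/(6·4^n·ℓ), where N = N^δ(τ_0⋯τ_{4^nℓ−1}) + N^{δ̄}(τ_0⋯τ_{4^nℓ−1}) and P = N^δ(τ_0⋯τ_{4^{n+1}ℓ−1}) + N^{δ̄}(τ_0⋯τ_{4^{n+1}ℓ−1}). -/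
/-- Number of starting positions at which `d` occurs as a consecutive subword of `e`. -/
def countOcc (d e : List ℕ) : ℕ :=
  ((Finset.range (e.length + 1 - d.length)).filter
    (fun i => (e.drop i).take d.length = d)).card

lemma countOcc_le (d e : List ℕ) : countOcc d e ≤ e.length + 1 - d.length := by
  classical
  calc countOcc d e ≤ (Finset.range (e.length + 1 - d.length)).card :=
        Finset.card_filter_le _ _
    _ = e.length + 1 - d.length := Finset.card_range _

lemma countOcc_eq_zero {d e : List ℕ} (h : e.length < d.length) : countOcc d e = 0 := by
  unfold countOcc
  have h0 : e.length + 1 - d.length = 0 := by omega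
  rw [h0]
  simp

lemma countOcc_eq_card_range (d e : List ℕ) (hd : d ≠ []) :
    countOcc d e = ((Finset.range e.length).filter
      (fun i => (e.drop i).take d.length = d)).card := by
  have hk : 1 ≤ d.length := List.length_pos_iff.mpr hd
  unfold countOcc
  congr 1
  apply Finset.ext
  intro i
  simp only [Finset.mem_filter, Finset.mem_range]
  constructor
  · rintro ⟨h1, h2⟩
    exact ⟨by omega, h2⟩
  · rintro ⟨h1, h2⟩
    refine ⟨?_, h2⟩
    have := congrArg List.length h2
    simp only [List.length_take, List.length_drop] at this
    omega

lemma countOcc_cons (d : List ℕ) (hd : d ≠ []) (x : ℕ) (e : List ℕ) :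
    countOcc d (x :: e) = (if (x :: e).take d.length = d then 1 else 0) + countOcc d e := by
  classical
  rw [countOcc_eq_card_range d _ hd, countOcc_eq_card_range d e hd]
  rw [Finset.card_filter, Finset.card_filter]
  simp only [List.length_cons]
  rw [Finset.sum_range_succ']
  simp only [List.drop_succ_cons, List.drop_zero]
  ring

lemma countOcc_append (d : List ℕ) (hd : d ≠ []) (u v : List ℕ) :
    countOcc d (u ++ v) = countOcc d u + countOcc d v +
      countOcc d (u.drop (u.length - (d.length - 1)) ++ v.take (d.length - 1)) := by
  classical
  have hk : 1 ≤ d.length := List.length_pos_iff.mpr hd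
  induction u with
  | nil =>
      simp only [List.nil_append, List.length_nil, List.drop_nil]
      rw [countOcc_eq_zero (show ([] : List ℕ).length < d.length by simp only [List.length_nil]; omega),
        countOcc_eq_zero (show (v.take (d.length - 1)).length < d.length by
          simp only [List.length_take]; omega)]
      omega
  | cons x u' ih =>
      by_cases hcase : d.length - 1 ≤ u'.length
      · have h1 : countOcc d ((x :: u') ++ v) =
            (if (x :: (u' ++ v)).take d.length = d then 1 else 0) + countOcc d (u' ++ v) := by
          rw [List.cons_append]; exact countOcc_cons d hd x (u' ++ v)
        have h2 : countOcc d (x :: u') =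
            (if (x :: u').take d.length = d then 1 else 0) + countOcc d u' :=
          countOcc_cons d hd x u'
        have hind : (x :: (u' ++ v)).take d.length = (x :: u').take d.length := by
          have he : (x :: u') ++ v = x :: (u' ++ v) := rfl
          rw [← he, List.take_append_of_le_length (by simp; omega)]
        have hdropeq : (x :: u').drop ((x :: u').length - (d.length - 1)) =
            u'.drop (u'.length - (d.length - 1)) := by
          have h5 : (x :: u').length - (d.length - 1) = (u'.length - (d.length - 1)) + 1 := by
            simp only [List.length_cons]; omega
          rw [h5, List.drop_succ_cons]
        rw [h1, ih, h2, hdropeq, hind]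
        ring
      · push_neg at hcase
        have hz1 : countOcc d (x :: u') = 0 := countOcc_eq_zero (by simp; omega)
        have hz2 : countOcc d u' = 0 := countOcc_eq_zero (by omega)
        have hdrop1 : (x :: u').drop ((x :: u').length - (d.length - 1)) = x :: u' := by
          have h5 : (x :: u').length - (d.length - 1) = 0 := by simp; omega
          rw [h5]; rfl
        have hdrop2 : u'.drop (u'.length - (d.length - 1)) = u' := by
          have h5 : u'.length - (d.length - 1) = 0 := by omega
          rw [h5]; rfl
        have h1 : countOcc d ((x :: u') ++ v) =
            (if (x :: (u' ++ v)).take d.length = d then 1 else 0) + countOcc d (u' ++ v) := by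
          rw [List.cons_append]; exact countOcc_cons d hd x (u' ++ v)
        have h3 : countOcc d ((x :: u') ++ v.take (d.length - 1)) =
            (if (x :: (u' ++ v.take (d.length - 1))).take d.length = d then 1 else 0)
              + countOcc d (u' ++ v.take (d.length - 1)) := by
          rw [List.cons_append]; exact countOcc_cons d hd x _
        have hind : (x :: (u' ++ v)).take d.length
            = (x :: (u' ++ v.take (d.length - 1))).take d.length := by
          obtain ⟨t, ht⟩ : ∃ t, d.length = t + 1 := ⟨d.length - 1, by omega⟩
          have hs : u'.length ≤ t := by omega
          rw [ht]
          simp only [Nat.add_sub_cancel, List.take_succ_cons]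
          rw [List.take_append, List.take_append,
            List.take_of_length_le hs, List.take_take]
          rw [min_eq_left (Nat.sub_le t u'.length)]
        rw [h1, ih, hz1, hz2, hdrop1, hdrop2, h3, hind]
        ring

lemma map_reflect_invol (M : ℕ) (l : List ℕ) (h : ∀ x ∈ l, x ≤ M) :
    (l.map (fun x => M - x)).map (fun x => M - x) = l := by
  rw [List.map_map]
  conv_rhs => rw [← List.map_id l]
  apply List.map_congr_left
  intro x hx
  simp [Nat.sub_sub_self (h x hx)]

lemma countOcc_map_reflect (M : ℕ) (d e : List ℕ) (hd : ∀ x ∈ d, x ≤ M)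
    (he : ∀ x ∈ e, x ≤ M) :
    countOcc d (e.map (fun x => M - x)) = countOcc (d.map (fun x => M - x)) e := by
  classical
  unfold countOcc
  simp only [List.length_map]
  congr 1
  apply Finset.filter_congr
  intro i _
  have hw : ((e.map (fun x => M - x)).drop i).take d.length
      = ((e.drop i).take d.length).map (fun x => M - x) := by
    rw [← List.map_drop, ← List.map_take]
  rw [hw]
  constructor
  · intro h
    have h2 : (((e.drop i).take d.length).map (fun x => M - x)).map (fun x => M - x)
        = (e.drop i).take d.length := by
      apply map_reflect_invol
      intro x hx
      exact he x (List.mem_of_mem_drop (List.mem_of_mem_take hx))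
    simp only [h] at h2
    exact h2.symm
  · intro h
    rw [h]
    exact map_reflect_invol M d hd

set_option maxHeartbeats 8000000 in
/-- Theorem on frequencies of blocks in mirror sequences: the mirror sequence `τ` is
generated from an initial word `τ_0 ⋯ τ_{ℓ-1} ∈ {0,…,M}^ℓ` by the recursion
`τ_{2^n ℓ + i} = M - τ_i` (`0 ≤ i < 2^n ℓ`).  Every nonempty word `δ` over `{0,…,M}`
has a density `d(δ)` in `τ`, it equals the density of the reflected word `δ̄`, and for
every `n` with `4^n ℓ ≥ |δ| - 1` it is given by `(P - N)/(6·4^n·ℓ)`. -/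
theorem stmt7 (M ℓ : ℕ) (hM : 1 ≤ M) (hℓ : 1 ≤ ℓ) (τ : ℕ → ℕ)
    (hτle : ∀ i < ℓ, τ i ≤ M)
    (hrec : ∀ n : ℕ, ∀ i < 2 ^ n * ℓ, τ (2 ^ n * ℓ + i) = M - τ i)
    (δ : List ℕ) (hδ : δ ≠ []) (hδM : ∀ x ∈ δ, x ≤ M)
    (n : ℕ) (hn : δ.length - 1 ≤ 4 ^ n * ℓ) :
    ∃ dens : ℝ,
      Filter.Tendsto (fun m : ℕ =>
        (countOcc δ ((List.range m).map τ) : ℝ) / m) Filter.atTop (nhds dens) ∧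
      Filter.Tendsto (fun m : ℕ =>
        (countOcc (δ.map (fun x => M - x)) ((List.range m).map τ) : ℝ) / m)
        Filter.atTop (nhds dens) ∧
      dens = ((countOcc δ ((List.range (4 ^ (n + 1) * ℓ)).map τ) : ℝ)
            + (countOcc (δ.map (fun x => M - x)) ((List.range (4 ^ (n + 1) * ℓ)).map τ) : ℝ)
            - (countOcc δ ((List.range (4 ^ n * ℓ)).map τ) : ℝ)
            - (countOcc (δ.map (fun x => M - x)) ((List.range (4 ^ n * ℓ)).map τ) : ℝ))
          / (6 * 4 ^ n * ℓ) := by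
  classical
  set f : ℕ → ℕ := fun x => M - x with hfdef
  set δ' : List ℕ := δ.map f with hδ'def
  have hk1 : 1 ≤ δ.length := List.length_pos_iff.mpr hδ
  set k : ℕ := δ.length with hkdef
  have hδ'ne : δ' ≠ [] := by
    simp [hδ'def, hδ]
  have hδ'M : ∀ x ∈ δ', x ≤ M := by
    intro x hx
    simp only [hδ'def, List.mem_map] at hx
    obtain ⟨y, _, rfl⟩ := hx
    exact Nat.sub_le M y
  have hδ'len : δ'.length = k := by simp [hδ'def, hkdef]
  have hδ'' : δ'.map f = δ := map_reflect_invol M δ hδM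
  -- boundedness of τ
  have hscale : ∀ N : ℕ, ℓ ≤ N → ∃ j : ℕ, 2 ^ j * ℓ ≤ N ∧ N < 2 ^ (j + 1) * ℓ := by
    intro N hN
    have hq : N / ℓ ≠ 0 := by
      have := Nat.one_le_div_iff (by omega : 0 < ℓ) |>.mpr hN
      omega
    refine ⟨Nat.log 2 (N / ℓ), ?_, ?_⟩
    · have h1 : 2 ^ Nat.log 2 (N / ℓ) ≤ N / ℓ := Nat.pow_log_le_self 2 hq
      calc 2 ^ Nat.log 2 (N / ℓ) * ℓ ≤ (N / ℓ) * ℓ := Nat.mul_le_mul_right ℓ h1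
        _ ≤ N := Nat.div_mul_le_self N ℓ
    · have h2 : N / ℓ < 2 ^ (Nat.log 2 (N / ℓ) + 1) := Nat.lt_pow_succ_log_self (by norm_num) _
      have h3 : N / ℓ + 1 ≤ 2 ^ (Nat.log 2 (N / ℓ) + 1) := h2
      have h4 : (N / ℓ + 1) * ℓ ≤ 2 ^ (Nat.log 2 (N / ℓ) + 1) * ℓ := Nat.mul_le_mul_right ℓ h3
      have h5 := Nat.div_add_mod N ℓ
      have h6 : N % ℓ < ℓ := Nat.mod_lt N (by omega)
      calc N = ℓ * (N / ℓ) + N % ℓ := h5.symm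
        _ < (N / ℓ + 1) * ℓ := by ring_nf; omega
        _ ≤ 2 ^ (Nat.log 2 (N / ℓ) + 1) * ℓ := h4
  have hτM : ∀ i, τ i ≤ M := by
    intro i
    by_cases hi : i < ℓ
    · exact hτle i hi
    · push_neg at hi
      obtain ⟨j, hj1, hj2⟩ := hscale i hi
      have hpow : 2 ^ (j + 1) * ℓ = 2 ^ j * ℓ + 2 ^ j * ℓ := by rw [pow_succ]; ring
      have hr : i - 2 ^ j * ℓ < 2 ^ j * ℓ := by omega
      have : τ i = τ (2 ^ j * ℓ + (i - 2 ^ j * ℓ)) := by congr 1; omega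
      rw [this, hrec j _ hr]
      exact Nat.sub_le M _
  have hmemrange : ∀ N : ℕ, ∀ x ∈ (List.range N).map τ, x ≤ M := by
    intro N x hx
    simp only [List.mem_map, List.mem_range] at hx
    obtain ⟨i, _, rfl⟩ := hx
    exact hτM i
  -- splitting of prefixes
  have hsplit : ∀ j r : ℕ, r ≤ 2 ^ j * ℓ →
      (List.range (2 ^ j * ℓ + r)).map τ
        = (List.range (2 ^ j * ℓ)).map τ ++ ((List.range r).map τ).map f := by
    intro j r hr
    rw [List.range_add, List.map_append]
    congr 1
    rw [List.map_map, List.map_map]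
    apply List.map_congr_left
    intro i hi
    simp only [List.mem_range] at hi
    simp only [Function.comp_apply]
    exact hrec j i (lt_of_lt_of_le hi hr)
  -- generic decomposition with bounded junction
  have hdec : ∀ d : List ℕ, d ≠ [] → d.length = k → ∀ j r : ℕ, r ≤ 2 ^ j * ℓ →
      ∃ c ≤ k - 1, countOcc d ((List.range (2 ^ j * ℓ + r)).map τ)
        = countOcc d ((List.range (2 ^ j * ℓ)).map τ)
          + countOcc d (((List.range r).map τ).map f) + c := by
    intro d hd hdlen j r hr
    rw [hsplit j r hr, countOcc_append d hd, hdlen]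
    refine ⟨_, ?_, rfl⟩
    have hlen : ((((List.range (2 ^ j * ℓ)).map τ).drop
        (((List.range (2 ^ j * ℓ)).map τ).length - (k - 1)))
        ++ ((((List.range r).map τ).map f).take (k - 1))).length ≤ 2 * (k - 1) := by
      simp only [List.length_append, List.length_drop, List.length_take, List.length_map,
        List.length_range]
      omega
    have := countOcc_le d ((((List.range (2 ^ j * ℓ)).map τ).drop
        (((List.range (2 ^ j * ℓ)).map τ).length - (k - 1)))
        ++ ((((List.range r).map τ).map f).take (k - 1)))
    rw [hdlen] at this
    omega
  -- named pieces
  set m : ℕ := 2 * n with hmdef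
  have hkm : k - 1 ≤ 2 ^ m * ℓ := by
    have h4 : (4 : ℕ) ^ n = 2 ^ m := by
      rw [hmdef, show (4 : ℕ) = 2 ^ 2 from rfl, ← pow_mul]
    rw [← h4]
    exact hn
  have hmono : ∀ j j' : ℕ, j ≤ j' → 2 ^ j * ℓ ≤ 2 ^ j' * ℓ :=
    fun j j' h => Nat.mul_le_mul_right ℓ (Nat.pow_le_pow_right (by norm_num) h)
  set T : ℕ → List ℕ := fun j => (List.range (2 ^ j * ℓ)).map τ with hTdef
  set S : ℕ → List ℕ := fun j => (T j).drop (2 ^ j * ℓ - (k - 1)) with hSdef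
  set Q : List ℕ := (List.range (k - 1)).map τ with hQdef
  have hTlen : ∀ j, (T j).length = 2 ^ j * ℓ := by
    intro j; simp [hTdef]
  have hTmem : ∀ j, ∀ x ∈ T j, x ≤ M := by
    intro j; rw [hTdef]; exact hmemrange _
  have hQj : ∀ j, m ≤ j → (T j).take (k - 1) = Q := by
    intro j hj
    rw [hTdef, hQdef]
    simp only
    rw [← List.map_take, List.take_range, min_eq_left (le_trans hkm (hmono m j hj))]
  have hTsplit : ∀ j, T (j + 1) = T j ++ (T j).map f := by
    intro j
    have h2 : 2 ^ (j + 1) * ℓ = 2 ^ j * ℓ + 2 ^ j * ℓ := by rw [pow_succ]; ring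
    rw [hTdef]
    simp only
    rw [h2, hsplit j (2 ^ j * ℓ) le_rfl]
  -- exact recursion at scales j ≥ m
  have hstepGen : ∀ d : List ℕ, d ≠ [] → d.length = k → (∀ x ∈ d, x ≤ M) →
      ∀ j, m ≤ j → countOcc d (T (j + 1))
        = countOcc d (T j) + countOcc (d.map f) (T j) + countOcc d (S j ++ Q.map f) := by
    intro d hd hdlen hdM j hj
    rw [hTsplit j, countOcc_append d hd,
      countOcc_map_reflect M d (T j) hdM (hTmem j)]
    congr 1
    have h1 : (T j).drop ((T j).length - (d.length - 1)) = S j := by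
      rw [hSdef]
      simp only
      rw [hTlen, hdlen]
    have h2 : ((T j).map f).take (d.length - 1) = Q.map f := by
      rw [← List.map_take, hdlen, hQj j hj]
    rw [h1, h2]
  set a : ℕ → ℕ := fun j => countOcc δ (T j) with hadef
  set b : ℕ → ℕ := fun j => countOcc δ' (T j) with hbdef
  set e : ℕ → ℕ := fun j => a j + b j with hedef
  set g : ℕ → ℕ := fun j => countOcc δ (S j ++ Q.map f) + countOcc δ' (S j ++ Q.map f)
    with hgdef
  have hstepA : ∀ j, m ≤ j → a (j + 1) = a j + b j + countOcc δ (S j ++ Q.map f) := by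
    intro j hj
    rw [hadef, hbdef]
    simp only
    exact hstepGen δ hδ rfl hδM j hj
  have hstepB : ∀ j, m ≤ j → b (j + 1) = b j + a j + countOcc δ' (S j ++ Q.map f) := by
    intro j hj
    rw [hadef, hbdef]
    simp only
    have := hstepGen δ' hδ'ne hδ'len hδ'M j hj
    rw [hδ''] at this
    exact this
  have hE1 : ∀ j, m ≤ j → e (j + 1) = 2 * e j + g j := by
    intro j hj
    rw [hedef, hgdef]
    simp only
    rw [hstepA j hj, hstepB j hj]
    ring
  -- periodicity of junction counts
  have hSstep : ∀ j, m ≤ j → S (j + 1) = (S j).map f := by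
    intro j hj
    have hkj : k - 1 ≤ 2 ^ j * ℓ := le_trans hkm (hmono m j hj)
    have hpow : 2 ^ (j + 1) * ℓ = 2 ^ j * ℓ + 2 ^ j * ℓ := by rw [pow_succ]; ring
    have harith : 2 ^ (j + 1) * ℓ - (k - 1) = (T j).length + (2 ^ j * ℓ - (k - 1)) := by
      rw [hTlen]; omega
    rw [hSdef]
    simp only
    rw [hTsplit j, harith, List.drop_length_add_append, List.map_drop]
  have hSmem : ∀ j, ∀ x ∈ S j, x ≤ M := by
    intro j x hx
    rw [hSdef] at hx
    simp only at hx
    exact hTmem j x (List.mem_of_mem_drop hx)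
  have hSS : ∀ j, m ≤ j → S (j + 2) = S j := by
    intro j hj
    have h1 : S (j + 2) = ((S j).map f).map f := by
      rw [show j + 2 = (j + 1) + 1 from rfl, hSstep (j + 1) (by omega), hSstep j hj]
    rw [h1]
    exact map_reflect_invol M (S j) (hSmem j)
  have hgper : ∀ j, m ≤ j → g (j + 2) = g j := by
    intro j hj
    rw [hgdef]
    simp only
    rw [hSS j hj]
  have hgper' : ∀ i : ℕ, g (m + 2 * i) = g m ∧ g (m + 2 * i + 1) = g (m + 1) := by
    intro i
    induction i with
    | zero => constructor <;> norm_num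
    | succ i ih =>
        constructor
        · have h1 : m + 2 * (i + 1) = (m + 2 * i) + 2 := by ring
          rw [h1, hgper (m + 2 * i) (by omega)]
          exact ih.1
        · have h1 : m + 2 * (i + 1) + 1 = (m + 2 * i + 1) + 2 := by ring
          rw [h1, hgper (m + 2 * i + 1) (by omega)]
          exact ih.2
  -- bound on junction counts
  have hjunclen : (S m ++ Q.map f).length ≤ 2 * (k - 1) := by
    rw [hSdef, hQdef]
    simp only [List.length_append, List.length_drop, List.length_take, List.length_map,
      List.length_range, hTlen]
    omega
  have hglen : ∀ j, (S j ++ Q.map f).length ≤ 2 * (k - 1) := by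
    intro j
    rw [hSdef, hQdef]
    simp only [List.length_append, List.length_drop, List.length_map, List.length_range, hTlen]
    omega
  have hgle : ∀ j, g j ≤ 2 * (k - 1) := by
    intro j
    rw [hgdef]
    simp only
    have h1 := countOcc_le δ (S j ++ Q.map f)
    have h2 := countOcc_le δ' (S j ++ Q.map f)
    rw [hδ'len] at h2
    rw [← hkdef] at h1
    have := hglen j
    omega
  have hgale : ∀ j, countOcc δ (S j ++ Q.map f) ≤ k - 1 := by
    intro j
    have h1 := countOcc_le δ (S j ++ Q.map f)
    rw [← hkdef] at h1
    have := hglen j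
    omega
  have hgble : ∀ j, countOcc δ' (S j ++ Q.map f) ≤ k - 1 := by
    intro j
    have h1 := countOcc_le δ' (S j ++ Q.map f)
    rw [hδ'len] at h1
    have := hglen j
    omega
  -- ℕ two-step recursion
  have hE2 : ∀ i : ℕ, e (m + 2 * i + 2) = 4 * e (m + 2 * i) + (2 * g m + g (m + 1)) := by
    intro i
    have h1 : e (m + 2 * i + 1) = 2 * e (m + 2 * i) + g (m + 2 * i) :=
      hE1 (m + 2 * i) (by omega)
    have h2 : e (m + 2 * i + 2) = 2 * e (m + 2 * i + 1) + g (m + 2 * i + 1) :=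
      hE1 (m + 2 * i + 1) (by omega)
    rw [h2, h1, (hgper' i).1, (hgper' i).2]
    ring
  -- real-valued closed form
  set D : ℝ := 2 * (g m : ℝ) + (g (m + 1) : ℝ) with hDdef
  have hD0 : 0 ≤ D := by positivity
  have hDle : D ≤ 6 * (k - 1 : ℕ) := by
    rw [hDdef]
    have h1 := hgle m
    have h2 := hgle (m + 1)
    push_cast
    have c1 : (g m : ℝ) ≤ 2 * (k - 1 : ℕ) := by exact_mod_cast h1
    have c2 : (g (m + 1) : ℝ) ≤ 2 * (k - 1 : ℕ) := by exact_mod_cast h2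
    push_cast at c1 c2
    nlinarith
  set A : ℝ := (e m : ℝ) + D / 3 with hAdef
  have heven : ∀ i : ℕ, (e (m + 2 * i) : ℝ) = 4 ^ i * A - D / 3 := by
    intro i
    induction i with
    | zero => simp [hAdef]
    | succ i ih =>
        have h1 : m + 2 * (i + 1) = m + 2 * i + 2 := by ring
        rw [h1]
        have h2 := hE2 i
        have h3 : (e (m + 2 * i + 2) : ℝ)
            = 4 * (e (m + 2 * i) : ℝ) + (2 * (g m : ℝ) + (g (m + 1) : ℝ)) := by
          rw [h2]; push_cast; ring
        rw [h3, ih, ← hDdef]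
        ring
  have hodd : ∀ i : ℕ, (e (m + 2 * i + 1) : ℝ) = 2 * (4 ^ i * A - D / 3) + (g m : ℝ) := by
    intro i
    have h1 : e (m + 2 * i + 1) = 2 * e (m + 2 * i) + g (m + 2 * i) :=
      hE1 (m + 2 * i) (by omega)
    have h2 : (e (m + 2 * i + 1) : ℝ) = 2 * (e (m + 2 * i) : ℝ) + (g (m + 2 * i) : ℝ) := by
      rw [h1]; push_cast; ring
    rw [h2, heven i, (hgper' i).1]
  set dens : ℝ := A / (2 * 2 ^ m * ℓ) with hdensdef
  have hℓR : (0 : ℝ) < (ℓ : ℝ) := by exact_mod_cast hℓ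
  have hpm : (0 : ℝ) < 2 * 2 ^ m * (ℓ : ℝ) := by positivity
  -- error bound on e
  have hebound : ∀ j, m ≤ j → |(e j : ℝ) - 2 * dens * (2 ^ j * (ℓ : ℝ))| ≤ 6 * k := by
    intro j hj
    have hdens2 : ∀ i : ℕ, 2 * dens * (2 ^ (m + 2 * i) * (ℓ : ℝ)) = 4 ^ i * A := by
      intro i
      rw [hdensdef]
      have hp : (2 : ℝ) ^ (m + 2 * i) = 2 ^ m * 4 ^ i := by
        rw [pow_add]
        congr 1
        rw [pow_mul]
        norm_num
      rw [hp]
      field_simp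
    have hkcast : (6 : ℝ) * (k - 1 : ℕ) ≤ 6 * k := by
      have : ((k - 1 : ℕ) : ℝ) ≤ (k : ℝ) := by exact_mod_cast Nat.sub_le k 1
      nlinarith
    obtain ⟨i, hi⟩ : ∃ i, j = m + 2 * i ∨ j = m + 2 * i + 1 := ⟨(j - m) / 2, by omega⟩
    rcases hi with h | h
    · subst h
      rw [heven i, hdens2 i]
      have : |4 ^ i * A - D / 3 - 4 ^ i * A| = D / 3 := by
        rw [show 4 ^ i * A - D / 3 - 4 ^ i * A = -(D / 3) by ring, abs_neg,
          abs_of_nonneg (by linarith)]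
      rw [this]
      nlinarith [hDle, hkcast]
    · subst h
      rw [hodd i]
      have hp : (2 : ℝ) ^ (m + 2 * i + 1) = 2 * 2 ^ (m + 2 * i) := by rw [pow_succ]; ring
      have h2 : 2 * dens * (2 ^ (m + 2 * i + 1) * (ℓ : ℝ)) = 2 * (4 ^ i * A) := by
        rw [hp, show 2 * dens * (2 * 2 ^ (m + 2 * i) * (ℓ : ℝ))
          = 2 * (2 * dens * (2 ^ (m + 2 * i) * (ℓ : ℝ))) by ring, hdens2 i]
      rw [h2]
      have h3 : 2 * (4 ^ i * A - D / 3) + (g m : ℝ) - 2 * (4 ^ i * A)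
          = (g m : ℝ) - 2 * D / 3 := by ring
      rw [h3]
      have hgm : (0 : ℝ) ≤ (g m : ℝ) := by positivity
      have hgmle : (g m : ℝ) ≤ 2 * (k - 1 : ℕ) := by exact_mod_cast hgle m
      have hkc : ((k - 1 : ℕ) : ℝ) ≤ (k : ℝ) := by exact_mod_cast Nat.sub_le k 1
      rw [abs_le]
      constructor <;> nlinarith
  -- per-scale bounds on a and b
  have hab : ∀ j, m + 1 ≤ j → |(a j : ℝ) - dens * (2 ^ j * (ℓ : ℝ))| ≤ 8 * k
      ∧ |(b j : ℝ) - dens * (2 ^ j * (ℓ : ℝ))| ≤ 8 * k := by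
    intro j hj
    obtain ⟨j', rfl⟩ : ∃ j', j = j' + 1 := ⟨j - 1, by omega⟩
    have hj' : m ≤ j' := by omega
    have he' := hebound j' hj'
    have hp : (2 : ℝ) ^ (j' + 1) = 2 * 2 ^ j' := by rw [pow_succ]; ring
    have hdd : dens * (2 ^ (j' + 1) * (ℓ : ℝ)) = 2 * dens * (2 ^ j' * (ℓ : ℝ)) := by
      rw [hp]; ring
    have hkc : ((k - 1 : ℕ) : ℝ) ≤ (k : ℝ) := by exact_mod_cast Nat.sub_le k 1
    constructor
    · have h1 := hstepA j' hj'
      have h2 : (a (j' + 1) : ℝ) = (e j' : ℝ) + (countOcc δ (S j' ++ Q.map f) : ℝ) := by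
        rw [h1, hedef]; push_cast; ring
      rw [h2, hdd]
      have h3 : (countOcc δ (S j' ++ Q.map f) : ℝ) ≤ ((k - 1 : ℕ) : ℝ) := by
        exact_mod_cast hgale j'
      have h4 : (0 : ℝ) ≤ (countOcc δ (S j' ++ Q.map f) : ℝ) := by positivity
      rw [abs_le] at he' ⊢
      constructor <;> nlinarith
    · have h1 := hstepB j' hj'
      have h2 : (b (j' + 1) : ℝ) = (e j' : ℝ) + (countOcc δ' (S j' ++ Q.map f) : ℝ) := by
        rw [h1, hedef]; push_cast; ring
      rw [h2, hdd]
      have h3 : (countOcc δ' (S j' ++ Q.map f) : ℝ) ≤ ((k - 1 : ℕ) : ℝ) := by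
        exact_mod_cast hgble j'
      have h4 : (0 : ℝ) ≤ (countOcc δ' (S j' ++ Q.map f) : ℝ) := by positivity
      rw [abs_le] at he' ⊢
      constructor <;> nlinarith
  -- master estimate
  have master : ∀ ε : ℝ, 0 < ε → ∃ C : ℝ, 0 ≤ C ∧ ∀ N : ℕ,
      |(countOcc δ ((List.range N).map τ) : ℝ) - dens * N| ≤ ε * N + C ∧
      |(countOcc δ' ((List.range N).map τ) : ℝ) - dens * N| ≤ ε * N + C := by
    intro ε hε
    obtain ⟨J₀, hJ₀⟩ := pow_unbounded_of_one_lt (R := ℝ) ((16 * k) / ε) one_lt_two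
    set J : ℕ := max (m + 1) J₀ with hJdef
    have hJ16 : (16 * (k : ℝ)) < ε * 2 ^ J := by
      rw [div_lt_iff₀ hε] at hJ₀
      have h2 : (2 : ℝ) ^ J₀ ≤ 2 ^ J := by
        apply pow_le_pow_right₀ (by norm_num)
        exact le_max_right _ _
      nlinarith
    refine ⟨(1 + |dens|) * ((2 ^ J * ℓ : ℕ) : ℝ), by positivity, ?_⟩
    intro N
    induction N using Nat.strong_induction_on with
    | _ N ih =>
      by_cases hbig : 2 ^ J * ℓ ≤ N
      · -- recursive case
        have hℓN : ℓ ≤ N := le_trans (by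
          have : 1 ≤ 2 ^ J := Nat.one_le_two_pow
          nlinarith) hbig
        obtain ⟨j, hj1, hj2⟩ := hscale N hℓN
        have hJj : J ≤ j := by
          have h1 : 2 ^ J * ℓ < 2 ^ (j + 1) * ℓ := lt_of_le_of_lt hbig hj2
          have h2 : 2 ^ J < 2 ^ (j + 1) := Nat.lt_of_mul_lt_mul_right h1
          have h3 : J < j + 1 := by
            by_contra hcon
            push_neg at hcon
            have : (2 : ℕ) ^ (j + 1) ≤ 2 ^ J := Nat.pow_le_pow_right (by norm_num) hcon
            omega
          omega
        have hmj : m + 1 ≤ j := le_trans (le_max_left _ _) hJj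
        have hpow : 2 ^ (j + 1) * ℓ = 2 ^ j * ℓ + 2 ^ j * ℓ := by rw [pow_succ]; ring
        set r : ℕ := N - 2 ^ j * ℓ with hrdef
        have hrle : r ≤ 2 ^ j * ℓ := by omega
        have hNeq : N = 2 ^ j * ℓ + r := by omega
        have hposj : 1 ≤ 2 ^ j * ℓ := by
          have : 1 ≤ 2 ^ j := Nat.one_le_two_pow
          nlinarith
        have hrN : r < N := by omega
        obtain ⟨c1, hc1le, hc1⟩ := hdec δ hδ rfl j r hrle
        obtain ⟨c2, hc2le, hc2⟩ := hdec δ' hδ'ne hδ'len j r hrle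
        have hrefl1 : countOcc δ (((List.range r).map τ).map f)
            = countOcc δ' ((List.range r).map τ) :=
          countOcc_map_reflect M δ _ hδM (hmemrange r)
        have hrefl2 : countOcc δ' (((List.range r).map τ).map f)
            = countOcc δ ((List.range r).map τ) := by
          rw [countOcc_map_reflect M δ' _ hδ'M (hmemrange r), hδ'']
        rw [hrefl1] at hc1
        rw [hrefl2] at hc2
        have hihr := ih r hrN
        have hja := (hab j hmj).1
        have hjb := (hab j hmj).2
        have hNcast : (N : ℝ) = 2 ^ j * (ℓ : ℝ) + (r : ℝ) := by
          rw [hNeq]; push_cast; ring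
        have hℓ1R : (1 : ℝ) ≤ (ℓ : ℝ) := by exact_mod_cast hℓ
        have hscaleR : (9 : ℝ) * k ≤ ε * (2 ^ j * (ℓ : ℝ)) := by
          have h1 : (2 : ℝ) ^ J ≤ 2 ^ j := by
            apply pow_le_pow_right₀ (by norm_num) hJj
          have h2 : (2 : ℝ) ^ j ≤ 2 ^ j * (ℓ : ℝ) := by
            nlinarith [pow_pos (show (0:ℝ) < 2 by norm_num) j]
          have hk0 : (0 : ℝ) ≤ (k : ℝ) := Nat.cast_nonneg k
          have h3 : ε * (2 : ℝ) ^ J ≤ ε * (2 ^ j * (ℓ : ℝ)) := by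
            apply mul_le_mul_of_nonneg_left _ (le_of_lt hε)
            linarith
          linarith
        have hc1R : (c1 : ℝ) ≤ (k : ℝ) := by
          have : c1 ≤ k := le_trans hc1le (Nat.sub_le k 1)
          exact_mod_cast this
        have hc2R : (c2 : ℝ) ≤ (k : ℝ) := by
          have : c2 ≤ k := le_trans hc2le (Nat.sub_le k 1)
          exact_mod_cast this
        constructor
        · have hGN : (countOcc δ ((List.range N).map τ) : ℝ)
              = (a j : ℝ) + (countOcc δ' ((List.range r).map τ) : ℝ) + (c1 : ℝ) := by
            rw [hNeq]
            exact_mod_cast congrArg (Nat.cast (R := ℝ)) hc1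
          rw [hGN, hNcast]
          have htri : |(a j : ℝ) + (countOcc δ' ((List.range r).map τ) : ℝ) + (c1 : ℝ)
              - dens * (2 ^ j * (ℓ : ℝ) + (r : ℝ))|
              ≤ |(a j : ℝ) - dens * (2 ^ j * (ℓ : ℝ))|
                + |(countOcc δ' ((List.range r).map τ) : ℝ) - dens * r| + (c1 : ℝ) := by
            have h0 : (0 : ℝ) ≤ (c1 : ℝ) := Nat.cast_nonneg c1
            calc |(a j : ℝ) + (countOcc δ' ((List.range r).map τ) : ℝ) + (c1 : ℝ)
                - dens * (2 ^ j * (ℓ : ℝ) + (r : ℝ))|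
                = |((a j : ℝ) - dens * (2 ^ j * (ℓ : ℝ)))
                  + (((countOcc δ' ((List.range r).map τ) : ℝ)) - dens * r) + (c1 : ℝ)| := by
                    ring_nf
              _ ≤ |((a j : ℝ) - dens * (2 ^ j * (ℓ : ℝ)))
                  + (((countOcc δ' ((List.range r).map τ) : ℝ)) - dens * r)| + |(c1 : ℝ)| :=
                    abs_add_le _ _
              _ ≤ |(a j : ℝ) - dens * (2 ^ j * (ℓ : ℝ))|
                  + |(countOcc δ' ((List.range r).map τ) : ℝ) - dens * r| + |(c1 : ℝ)| := by
                    have := abs_add_le ((a j : ℝ) - dens * (2 ^ j * (ℓ : ℝ)))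
                      (((countOcc δ' ((List.range r).map τ) : ℝ)) - dens * r)
                    linarith
              _ = _ := by rw [abs_of_nonneg h0]
          have h8k : |(a j : ℝ) - dens * (2 ^ j * (ℓ : ℝ))| ≤ 8 * k := hja
          have hr2 := hihr.2
          calc |(a j : ℝ) + (countOcc δ' ((List.range r).map τ) : ℝ) + (c1 : ℝ)
              - dens * (2 ^ j * (ℓ : ℝ) + (r : ℝ))|
              ≤ |(a j : ℝ) - dens * (2 ^ j * (ℓ : ℝ))|
                + |(countOcc δ' ((List.range r).map τ) : ℝ) - dens * r| + (c1 : ℝ) := htri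
            _ ≤ 8 * k + (ε * r + (1 + |dens|) * ((2 ^ J * ℓ : ℕ) : ℝ)) + (k : ℝ) := by
                  linarith
            _ ≤ ε * (2 ^ j * (ℓ : ℝ) + (r : ℝ)) + (1 + |dens|) * ((2 ^ J * ℓ : ℕ) : ℝ) := by
                  have hexp : ε * (2 ^ j * (ℓ : ℝ) + (r : ℝ))
                      = ε * (2 ^ j * (ℓ : ℝ)) + ε * (r : ℝ) := by ring
                  linarith
        · have hGN : (countOcc δ' ((List.range N).map τ) : ℝ)
              = (b j : ℝ) + (countOcc δ ((List.range r).map τ) : ℝ) + (c2 : ℝ) := by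
            rw [hNeq]
            exact_mod_cast congrArg (Nat.cast (R := ℝ)) hc2
          rw [hGN, hNcast]
          have htri : |(b j : ℝ) + (countOcc δ ((List.range r).map τ) : ℝ) + (c2 : ℝ)
              - dens * (2 ^ j * (ℓ : ℝ) + (r : ℝ))|
              ≤ |(b j : ℝ) - dens * (2 ^ j * (ℓ : ℝ))|
                + |(countOcc δ ((List.range r).map τ) : ℝ) - dens * r| + (c2 : ℝ) := by
            have h0 : (0 : ℝ) ≤ (c2 : ℝ) := Nat.cast_nonneg c2
            calc |(b j : ℝ) + (countOcc δ ((List.range r).map τ) : ℝ) + (c2 : ℝ)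
                - dens * (2 ^ j * (ℓ : ℝ) + (r : ℝ))|
                = |((b j : ℝ) - dens * (2 ^ j * (ℓ : ℝ)))
                  + (((countOcc δ ((List.range r).map τ) : ℝ)) - dens * r) + (c2 : ℝ)| := by
                    ring_nf
              _ ≤ |((b j : ℝ) - dens * (2 ^ j * (ℓ : ℝ)))
                  + (((countOcc δ ((List.range r).map τ) : ℝ)) - dens * r)| + |(c2 : ℝ)| :=
                    abs_add_le _ _
              _ ≤ |(b j : ℝ) - dens * (2 ^ j * (ℓ : ℝ))|
                  + |(countOcc δ ((List.range r).map τ) : ℝ) - dens * r| + |(c2 : ℝ)| := by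
                    have := abs_add_le ((b j : ℝ) - dens * (2 ^ j * (ℓ : ℝ)))
                      (((countOcc δ ((List.range r).map τ) : ℝ)) - dens * r)
                    linarith
              _ = _ := by rw [abs_of_nonneg h0]
          have hr1 := hihr.1
          calc |(b j : ℝ) + (countOcc δ ((List.range r).map τ) : ℝ) + (c2 : ℝ)
              - dens * (2 ^ j * (ℓ : ℝ) + (r : ℝ))|
              ≤ |(b j : ℝ) - dens * (2 ^ j * (ℓ : ℝ))|
                + |(countOcc δ ((List.range r).map τ) : ℝ) - dens * r| + (c2 : ℝ) := htri
            _ ≤ 8 * k + (ε * r + (1 + |dens|) * ((2 ^ J * ℓ : ℕ) : ℝ)) + (k : ℝ) := by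
                  linarith
            _ ≤ ε * (2 ^ j * (ℓ : ℝ) + (r : ℝ)) + (1 + |dens|) * ((2 ^ J * ℓ : ℕ) : ℝ) := by
                  have hexp : ε * (2 ^ j * (ℓ : ℝ) + (r : ℝ))
                      = ε * (2 ^ j * (ℓ : ℝ)) + ε * (r : ℝ) := by ring
                  linarith
      · -- base case
        push_neg at hbig
        have hbase : ∀ d : List ℕ, d.length = k →
            |(countOcc d ((List.range N).map τ) : ℝ) - dens * N|
              ≤ ε * N + (1 + |dens|) * ((2 ^ J * ℓ : ℕ) : ℝ) := by
          intro d hdlen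
          have hc := countOcc_le d ((List.range N).map τ)
          simp only [List.length_map, List.length_range] at hc
          have hcN : countOcc d ((List.range N).map τ) ≤ N := by omega
          have hcNR : (countOcc d ((List.range N).map τ) : ℝ) ≤ (N : ℝ) := by
            exact_mod_cast hcN
          have h0 : (0 : ℝ) ≤ (countOcc d ((List.range N).map τ) : ℝ) := Nat.cast_nonneg _
          have hNle : (N : ℝ) ≤ ((2 ^ J * ℓ : ℕ) : ℝ) := by
            exact_mod_cast le_of_lt hbig
          have hN0 : (0 : ℝ) ≤ (N : ℝ) := Nat.cast_nonneg N
          have htri : |(countOcc d ((List.range N).map τ) : ℝ) - dens * N|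
              ≤ (countOcc d ((List.range N).map τ) : ℝ) + |dens| * N := by
            calc |(countOcc d ((List.range N).map τ) : ℝ) - dens * N|
                ≤ |(countOcc d ((List.range N).map τ) : ℝ)| + |dens * N| := abs_sub _ _
              _ = (countOcc d ((List.range N).map τ) : ℝ) + |dens| * N := by
                  rw [abs_of_nonneg h0, abs_mul, abs_of_nonneg hN0]
          have hεN : (0 : ℝ) ≤ ε * N := by positivity
          have habs0 : (0 : ℝ) ≤ |dens| := abs_nonneg dens
          nlinarith
        exact ⟨hbase δ rfl, hbase δ' hδ'len⟩
  -- conclusions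
  have htend : ∀ d : List ℕ,
      (∀ ε : ℝ, 0 < ε → ∃ C : ℝ, 0 ≤ C ∧ ∀ N : ℕ,
        |(countOcc d ((List.range N).map τ) : ℝ) - dens * N| ≤ ε * N + C) →
      Filter.Tendsto (fun N : ℕ => (countOcc d ((List.range N).map τ) : ℝ) / N)
        Filter.atTop (nhds dens) := by
    intro d hmast
    rw [Metric.tendsto_atTop]
    intro ε hε
    obtain ⟨C, hC0, hC⟩ := hmast (ε / 4) (by positivity)
    obtain ⟨N₀, hN₀⟩ := exists_nat_gt (4 * C / ε)
    refine ⟨max N₀ 1, fun N hN => ?_⟩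
    have hN1 : 1 ≤ N := le_trans (le_max_right _ _) hN
    have hNN₀ : N₀ ≤ N := le_trans (le_max_left _ _) hN
    have hNR : (1 : ℝ) ≤ (N : ℝ) := by exact_mod_cast hN1
    have hNpos : (0 : ℝ) < (N : ℝ) := by linarith
    rw [Real.dist_eq]
    have heq : (countOcc d ((List.range N).map τ) : ℝ) / N - dens
        = ((countOcc d ((List.range N).map τ) : ℝ) - dens * N) / N := by
      field_simp
    rw [heq, abs_div, abs_of_pos hNpos]
    have hCN : C / N < ε / 4 := by
      have h1 : (N₀ : ℝ) ≤ (N : ℝ) := by exact_mod_cast hNN₀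
      have h2 : 4 * C / ε < (N : ℝ) := lt_of_lt_of_le hN₀ h1
      rw [div_lt_iff₀ hε] at h2
      rw [div_lt_iff₀ hNpos]
      nlinarith
    have hkey := hC N
    have h3 : |(countOcc d ((List.range N).map τ) : ℝ) - dens * N| / N
        ≤ (ε / 4 * N + C) / N := by
      gcongr
    have h4 : (ε / 4 * N + C) / N = ε / 4 + C / N := by
      field_simp
    linarith [h3, h4.le, h4.ge, hCN, hε]
  refine ⟨dens, ?_, ?_, ?_⟩
  · apply htend δ
    intro ε hε
    obtain ⟨C, hC0, hC⟩ := master ε hε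
    exact ⟨C, hC0, fun N => (hC N).1⟩
  · apply htend δ'
    intro ε hε
    obtain ⟨C, hC0, hC⟩ := master ε hε
    exact ⟨C, hC0, fun N => (hC N).2⟩
  · -- the closed formula
    have h4n : (4 : ℕ) ^ n * ℓ = 2 ^ m * ℓ := by
      rw [hmdef, show (4 : ℕ) = 2 ^ 2 from rfl, ← pow_mul]
    have h4n1 : (4 : ℕ) ^ (n + 1) * ℓ = 2 ^ (m + 2) * ℓ := by
      rw [hmdef, show (4 : ℕ) = 2 ^ 2 from rfl, ← pow_mul]
      congr 2
    rw [h4n, h4n1]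
    have hden : (4 : ℝ) ^ n = 2 ^ m := by
      rw [show (4 : ℝ) = 2 ^ 2 by norm_num, ← pow_mul, ← hmdef]
    rw [hden]
    have hem : (e m : ℝ) = A - D / 3 := by
      have h := heven 0
      norm_num at h
      exact h
    have hem2 : (e (m + 2) : ℝ) = 4 * A - D / 3 := by
      have h := heven 1
      norm_num at h
      exact h
    have hcaste : ∀ j : ℕ, (a j : ℝ) + (b j : ℝ) = (e j : ℝ) := by
      intro j
      rw [hedef]
      push_cast
      ring
    have hnum : (countOcc δ ((List.range (2 ^ (m + 2) * ℓ)).map τ) : ℝ)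
          + (countOcc δ' ((List.range (2 ^ (m + 2) * ℓ)).map τ) : ℝ)
          - (countOcc δ ((List.range (2 ^ m * ℓ)).map τ) : ℝ)
          - (countOcc δ' ((List.range (2 ^ m * ℓ)).map τ) : ℝ)
        = (e (m + 2) : ℝ) - (e m : ℝ) := by
      have e1 : (countOcc δ ((List.range (2 ^ (m + 2) * ℓ)).map τ) : ℝ) = (a (m + 2) : ℝ) := rfl
      have e2 : (countOcc δ' ((List.range (2 ^ (m + 2) * ℓ)).map τ) : ℝ) = (b (m + 2) : ℝ) := rfl
      have e3 : (countOcc δ ((List.range (2 ^ m * ℓ)).map τ) : ℝ) = (a m : ℝ) := rfl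
      have e4 : (countOcc δ' ((List.range (2 ^ m * ℓ)).map τ) : ℝ) = (b m : ℝ) := rfl
      rw [e1, e2, e3, e4]
      have := hcaste (m + 2)
      have := hcaste m
      linarith
    rw [hnum, hem, hem2, hdensdef]
    have h2m : ((2 : ℝ) ^ m) ≠ 0 := by positivity
    have hℓ0 : (ℓ : ℝ) ≠ 0 := ne_of_gt hℓR
    field_simp
    ring
end

section
/- Let m be a positive integer and m+1 < q < q_c := (m+2+√(m(m+4)))/2. Then there exists δ > 0 such that D_{m,m}(q) ∩ (log(m+1)/log q − δ, log(m+1)/log q) = ∅; that is, no t ∈ U_{m,m}(q) gives a Hausdorff dimension of Γ_{q,m} ∩ (Γ_{q,m} + t) strictly between log(m+1)/log q − δ and log(m+1)/log q. -/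
open scoped ENNReal

open Filter Set MeasureTheory

section series
variable {q : ℝ}

lemma summable_digit (hq : 1 < q) {C : ℝ} {f : ℕ → ℝ} (hf : ∀ i, |f i| ≤ C) :
    Summable fun i => f i / q ^ (i + 1) := by
  have h0 : (0:ℝ) < q := by linarith
  have hgeo : Summable fun i : ℕ => C * (1 / q) ^ (i + 1) := by
    have : Summable fun i : ℕ => (1 / q) ^ i :=
      summable_geometric_of_lt_one (by positivity) (by rw [div_lt_one h0]; exact hq)
    simpa [pow_succ, mul_comm, mul_assoc, mul_left_comm] using (this.mul_left (C * (1/q)))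
  apply Summable.of_abs
  refine Summable.of_nonneg_of_le (fun i => abs_nonneg _) (fun i => ?_) hgeo
  rw [abs_div, abs_of_pos (pow_pos h0 _), div_pow, one_pow, mul_one_div]
  gcongr
  exact hf i

lemma tsum_const_div (hq : 1 < q) (C : ℝ) : ∑' i : ℕ, C / q ^ (i + 1) = C / (q - 1) := by
  have h0 : (0:ℝ) < q := by linarith
  have h1 : (1:ℝ)/q < 1 := by rw [div_lt_one h0]; exact hq
  have h2 : ∑' i : ℕ, (1/q) ^ i = (1 - 1/q)⁻¹ := tsum_geometric_of_lt_one (by positivity) h1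
  have hq0 : q ≠ 0 := ne_of_gt h0
  have hq1 : q - 1 ≠ 0 := by intro h; apply hq.ne'; linarith
  calc ∑' i : ℕ, C / q ^ (i + 1) = ∑' i : ℕ, (C/q) * (1/q) ^ i := by
        congr 1; funext i
        rw [div_pow, one_pow, pow_succ, mul_one_div, div_div, mul_comm (q^i) q]
    _ = (C/q) * (1 - 1/q)⁻¹ := by rw [tsum_mul_left, h2]
    _ = C / (q - 1) := by field_simp

lemma abs_tsum_digit_le (hq : 1 < q) {C : ℝ} {f : ℕ → ℝ} (hf : ∀ i, |f i| ≤ C) :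
    |∑' i : ℕ, f i / q ^ (i + 1)| ≤ C / (q - 1) := by
  have h0 : (0:ℝ) < q := by linarith
  have hs := summable_digit hq hf
  have hs' : Summable fun i : ℕ => ‖f i / q ^ (i + 1)‖ := by
    simp only [Real.norm_eq_abs]; exact hs.abs
  have h1 := norm_tsum_le_tsum_norm hs'
  simp only [Real.norm_eq_abs] at h1
  refine h1.trans ?_
  rw [← tsum_const_div hq C]
  refine Summable.tsum_le_tsum (fun i => ?_) hs.abs
      (summable_digit hq (C := C) (f := fun _ => C)
        (fun i => by rw [abs_of_nonneg ((abs_nonneg (f 0)).trans (hf 0))]))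
  rw [abs_div, abs_of_pos (pow_pos h0 _)]
  gcongr
  exact hf i

lemma tsum_digit_split (hq : 1 < q) {C : ℝ} {f : ℕ → ℝ} (hf : ∀ i, |f i| ≤ C) (N : ℕ) :
    ∑' i : ℕ, f i / q ^ (i + 1)
      = (∑ i ∈ Finset.range N, f i / q ^ (i + 1))
        + (∑' i : ℕ, f (N + i) / q ^ (i + 1)) / q ^ N := by
  have h0 : (0:ℝ) < q := by linarith
  have hq0 : q ≠ 0 := ne_of_gt h0
  have hs := summable_digit hq hf
  rw [← Summable.sum_add_tsum_nat_add N hs]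
  congr 1
  rw [div_eq_mul_inv _ (q ^ N), ← tsum_mul_right]
  congr 1; funext i
  have : N + i + 1 = N + (i + 1) := by ring
  rw [add_comm i N, this, pow_add]
  field_simp

end series

/-- value of the digit tail starting at position `p` -/
noncomputable def VF (q : ℝ) (a : ℕ → ℤ) (p : ℕ) : ℝ :=
  ∑' i : ℕ, ((a (p + i) : ℝ)) / q ^ (i + 1)

lemma VF_def (q : ℝ) (a : ℕ → ℤ) (p : ℕ) :
    VF q a p = ∑' i : ℕ, ((a (p + i) : ℝ)) / q ^ (i + 1) := rfl

/-- digits bounded by `m` in absolute value -/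
def Dig (m : ℕ) (a : ℕ → ℤ) : Prop := ∀ i, -(m : ℤ) ≤ a i ∧ a i ≤ m

section vf
variable {q : ℝ} {m : ℕ} {a : ℕ → ℤ}

lemma Dig.abs_le' (hd : Dig m a) (i : ℕ) : |((a i : ℝ))| ≤ (m : ℝ) := by
  rw [_root_.abs_le]
  constructor
  · exact_mod_cast (hd i).1
  · exact_mod_cast (hd i).2

lemma VF_abs_le (hq : 1 < q) (hd : Dig m a) (p : ℕ) : |VF q a p| ≤ (m : ℝ) / (q - 1) :=
  abs_tsum_digit_le hq (fun i => hd.abs_le' (p + i))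

lemma VF_succ (hq : 1 < q) (hd : Dig m a) (p : ℕ) :
    VF q a p = (a p : ℝ) / q + VF q a (p + 1) / q := by
  have h := tsum_digit_split hq (f := fun i => ((a (p + i) : ℝ))) (fun i => hd.abs_le' (p+i)) 1
  simp only [Finset.range_one, Finset.sum_singleton, add_zero, pow_one] at h
  have e2 : (∑' i : ℕ, ((a (p + (1 + i)) : ℝ)) / q ^ (i+1)) = VF q a (p+1) := by
    rw [VF_def]; congr 1; funext i; congr 3; omega
  rw [VF_def, h, e2]
  norm_num

lemma VF_zero_block (hq : 1 < q) (hd : Dig m a) {p K : ℕ} (h0 : ∀ i < K, a (p + i) = 0) :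
    VF q a p = VF q a (p + K) / q ^ K := by
  induction K with
  | zero => simp
  | succ K ih =>
    have h1 : a (p + K) = 0 := h0 K (by omega)
    have h2 := VF_succ hq hd (p + K)
    rw [h1] at h2
    simp only [Int.cast_zero, zero_div, zero_add] at h2
    rw [ih (fun i hi => h0 i (by omega)), h2]
    rw [show p + (K+1) = p + K + 1 by ring, pow_succ, div_div, mul_comm q (q^K)]

lemma VF_eq_of_isExp {t : ℝ}
    (h : t = ∑' i : ℕ, ((a i : ℝ)) / q ^ (i + 1)) : t = VF q a 0 := by
  rw [h, VF_def]
  congr 1; funext i; rw [zero_add]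

end vf

/-- greedy sequence for expansions with digits `{0, …, M}` -/
noncomputable def grSeq (q : ℝ) (M : ℕ) (y : ℝ) : ℕ → ℝ
  | 0 => y
  | (k+1) => q * grSeq q M y k - ((min (M : ℤ) ⌊q * grSeq q M y k⌋ : ℤ) : ℝ)

noncomputable def grDig (q : ℝ) (M : ℕ) (y : ℝ) (k : ℕ) : ℤ :=
  min (M : ℤ) ⌊q * grSeq q M y k⌋

lemma grSeq_mem (hq : 1 < q) {M : ℕ} (hM : q ≤ (M : ℝ) + 1) {y : ℝ}
    (hy : 0 ≤ y ∧ y ≤ (M : ℝ) / (q - 1)) (k : ℕ) :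
    0 ≤ grSeq q M y k ∧ grSeq q M y k ≤ (M : ℝ) / (q - 1) := by
  have hq0 : (0:ℝ) < q - 1 := by linarith
  induction k with
  | zero => exact hy
  | succ k ih =>
    have hM1 : (1:ℝ) ≤ (M:ℝ)/(q-1) := by
      rw [le_div_iff₀ hq0]; linarith
    rcases le_or_gt (⌊q * grSeq q M y k⌋) (M : ℤ) with hc | hc
    · have hd : min (M : ℤ) ⌊q * grSeq q M y k⌋ = ⌊q * grSeq q M y k⌋ := min_eq_right hc
      constructor
      · rw [grSeq, hd]
        have h2 := Int.floor_le (q * grSeq q M y k)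
        linarith
      · rw [grSeq, hd]
        have := Int.lt_floor_add_one (q * grSeq q M y k)
        linarith
    · have hd : min (M : ℤ) ⌊q * grSeq q M y k⌋ = (M : ℤ) := min_eq_left hc.le
      constructor
      · rw [grSeq, hd]
        have h2 : ((M:ℝ)) + 1 ≤ (⌊q * grSeq q M y k⌋ : ℝ) := by exact_mod_cast hc
        have h3 := Int.floor_le (q * grSeq q M y k)
        push_cast
        linarith
      · rw [grSeq, hd]
        have h4 : q * grSeq q M y k ≤ q * ((M:ℝ)/(q-1)) :=
          mul_le_mul_of_nonneg_left ih.2 (by linarith)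
        have h5 : q * ((M:ℝ)/(q-1)) - M = (M:ℝ)/(q-1) := by field_simp; ring
        push_cast
        linarith

lemma grDig_mem (hq : 1 < q) {M : ℕ} (hM : q ≤ (M : ℝ) + 1) {y : ℝ}
    (hy : 0 ≤ y ∧ y ≤ (M : ℝ) / (q - 1)) (k : ℕ) :
    0 ≤ grDig q M y k ∧ grDig q M y k ≤ M := by
  constructor
  · rw [grDig, le_min_iff]
    refine ⟨by positivity, Int.le_floor.2 ?_⟩
    push_cast
    have h1 := (grSeq_mem hq hM hy k).1
    nlinarith
  · exact min_le_left _ _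

lemma grSeq_partial (hq : 1 < q) (M : ℕ) (y : ℝ) (n : ℕ) :
    y = (∑ k ∈ Finset.range n, ((grDig q M y k : ℝ)) / q ^ (k + 1)) + grSeq q M y n / q ^ n := by
  have hq0 : q ≠ 0 := by intro h; rw [h] at hq; exact absurd hq (by norm_num)
  induction n with
  | zero => simp [grSeq]
  | succ n ih =>
    rw [Finset.sum_range_succ]
    have hrec : grSeq q M y (n+1) = q * grSeq q M y n - ((grDig q M y n : ℝ)) := by
      simp [grSeq, grDig]
    have key : grSeq q M y n / q ^ n
        = ((grDig q M y n : ℝ)) / q ^ (n+1) + grSeq q M y (n+1) / q ^ (n+1) := by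
      rw [hrec, pow_succ]
      field_simp
      ring
    conv_lhs => rw [ih]
    linarith [key]

lemma exists_expansion_nonneg (hq : 1 < q) {M : ℕ} (hM : q ≤ (M : ℝ) + 1) {y : ℝ}
    (hy : 0 ≤ y ∧ y ≤ (M : ℝ) / (q - 1)) :
    ∃ b : ℕ → ℤ, (∀ i, 0 ≤ b i ∧ b i ≤ M) ∧ y = ∑' i : ℕ, ((b i : ℝ)) / q ^ (i + 1) := by
  refine ⟨grDig q M y, fun i => grDig_mem hq hM hy i, ?_⟩
  have hq0 : (0:ℝ) < q := by linarith
  have hb : ∀ i, |((grDig q M y i : ℝ))| ≤ (M : ℝ) := by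
    intro i
    have h := grDig_mem hq hM hy i
    rw [abs_le]
    constructor
    · have h1 : (0:ℝ) ≤ ((grDig q M y i : ℝ)) := by exact_mod_cast h.1
      have h2 : (0:ℝ) ≤ (M:ℝ) := Nat.cast_nonneg M
      linarith
    · exact_mod_cast h.2
  have hs := summable_digit hq hb
  have hlim : Tendsto (fun n => ∑ k ∈ Finset.range n, ((grDig q M y k : ℝ)) / q ^ (k + 1))
      atTop (nhds y) := by
    have hbound : ∀ n : ℕ, ‖grSeq q M y n / q ^ n‖ ≤ ((M:ℝ)/(q-1)) * (1/q) ^ n := by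
      intro n
      rw [Real.norm_eq_abs, abs_div, abs_of_pos (pow_pos hq0 _), div_pow, one_pow, mul_one_div]
      gcongr
      rw [abs_le]
      exact ⟨by linarith [(grSeq_mem hq hM hy n).1, (grSeq_mem hq hM hy n).2],
        (grSeq_mem hq hM hy n).2⟩
    have hg : Tendsto (fun n : ℕ => ((M:ℝ)/(q-1)) * (1/q) ^ n) atTop (nhds 0) := by
      have := (tendsto_pow_atTop_nhds_zero_of_lt_one
        (by positivity : (0:ℝ) ≤ 1/q) (by rw [div_lt_one hq0]; exact hq)).const_mul ((M:ℝ)/(q-1))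
      simpa using this
    have h1 : Tendsto (fun n : ℕ => grSeq q M y n / q ^ n) atTop (nhds 0) :=
      squeeze_zero_norm hbound hg
    have h2 : ∀ n, ∑ k ∈ Finset.range n, ((grDig q M y k : ℝ)) / q ^ (k + 1)
        = y - grSeq q M y n / q ^ n := fun n => by
      have := grSeq_partial hq M y n; linarith
    simp only [h2]
    simpa using tendsto_const_nhds.sub h1
  exact tendsto_nhds_unique hlim hs.hasSum.tendsto_sum_nat

lemma exists_expansion (hq : 1 < q) {m : ℕ} (hM : q ≤ 2*(m:ℝ) + 1) {x : ℝ}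
    (hx : |x| ≤ (m : ℝ) / (q - 1)) :
    ∃ b : ℕ → ℤ, Dig m b ∧ x = ∑' i : ℕ, ((b i : ℝ)) / q ^ (i + 1) := by
  have hq0 : (0:ℝ) < q - 1 := by linarith
  rw [abs_le] at hx
  set y := x + (m : ℝ)/(q-1) with hy_def
  have h2m : ((2*m : ℕ) : ℝ) = 2*(m:ℝ) := by push_cast; ring
  have hsplit : ((2*m : ℕ) : ℝ)/(q-1) = (m:ℝ)/(q-1) + (m:ℝ)/(q-1) := by rw [h2m]; ring
  have hy : 0 ≤ y ∧ y ≤ ((2*m : ℕ) : ℝ) / (q - 1) := by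
    constructor
    · rw [hy_def]; linarith [hx.1]
    · rw [hy_def, hsplit]; linarith [hx.2]
  obtain ⟨c, hc, hcy⟩ := exists_expansion_nonneg hq (M := 2*m) (by rw [h2m]; linarith) hy
  refine ⟨fun i => c i - m, fun i => ⟨?_, ?_⟩, ?_⟩
  · show -(m:ℤ) ≤ c i - m
    have := hc i; omega
  · show c i - (m:ℤ) ≤ m
    have h1 := (hc i).2
    have : (2*m : ℕ) = (2*(m:ℤ)).toNat := by omega
    omega
  · have hsum : Summable fun i => ((c i : ℝ)) / q ^ (i+1) :=
      summable_digit hq (C := 2*(m:ℝ)) (fun i => by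
        rw [abs_of_nonneg (by exact_mod_cast (hc i).1 : (0:ℝ) ≤ (c i:ℝ))]
        rw [← h2m]
        exact_mod_cast (hc i).2)
    have hsum2 : Summable fun i : ℕ => ((m : ℝ)) / q ^ (i+1) :=
      summable_digit hq (C := (m:ℝ)) (fun i => by rw [abs_of_nonneg (by positivity)])
    have key : ∑' i : ℕ, (((c i - m : ℤ)) : ℝ) / q ^ (i+1)
        = (∑' i : ℕ, ((c i : ℝ)) / q ^ (i+1)) - ∑' i : ℕ, ((m:ℝ)) / q ^ (i+1) := by
      rw [← Summable.tsum_sub hsum hsum2]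
      congr 1; funext i; push_cast; ring
    rw [key, ← hcy, tsum_const_div hq, hy_def]
    ring

section uniqcond
variable {q : ℝ} {m : ℕ} {t : ℝ} {a : ℕ → ℤ}

lemma VF_neg (q : ℝ) (a : ℕ → ℤ) (p : ℕ) : VF q (fun i => -a i) p = - VF q a p := by
  rw [VF_def, VF_def, ← tsum_neg]
  congr 1; funext i; push_cast; ring

lemma isExpansion_neg (h : IsExpansion q m m a t) :
    IsExpansion q m m (fun i => -a i) (-t) := by
  constructor
  · intro i
    have := h.1 i
    refine ⟨show -(m:ℤ) ≤ -a i from by omega, show -a i ≤ (m:ℤ) from by omega⟩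
  · rw [h.2, ← tsum_neg]
    congr 1; funext i; push_cast; ring

lemma uniq_cond_pos (hm : 1 ≤ m) (hq1 : (m:ℝ) + 1 < q) (hq2 : q ≤ 2*(m:ℝ) + 1)
    (ha : IsExpansion q m m a t) (huniq : ∀ b, IsExpansion q m m b t → b = a)
    {p : ℕ} (hp : a p < m) : VF q a (p+1) < (q - 1 - m)/(q - 1) := by
  have hm' : (1:ℝ) ≤ m := by exact_mod_cast hm
  have hq : 1 < q := by linarith
  have hq0 : (0:ℝ) < q - 1 := by linarith
  have hd : Dig m a := ha.1
  by_contra hcon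
  push_neg at hcon
  set x := VF q a (p+1) - 1 with hxdef
  have hxabs : |x| ≤ (m:ℝ)/(q-1) := by
    have h1 := VF_abs_le hq hd (p+1)
    rw [abs_le] at h1 ⊢
    have he : (q-1-(m:ℝ))/(q-1) - 1 = -((m:ℝ)/(q-1)) := by field_simp; ring
    constructor
    · rw [hxdef]; linarith
    · rw [hxdef]; linarith [h1.2]
  obtain ⟨b', hb', hb'x⟩ := exists_expansion hq hq2 hxabs
  set b : ℕ → ℤ := fun i => if i < p then a i else if i = p then a p + 1 else b' (i - (p+1))
    with hbdef
  have hbd : Dig m b := by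
    intro i
    rw [hbdef]
    simp only
    split_ifs with h1 h2
    · exact hd i
    · have := (hd p).1; omega
    · exact hb' _
  have hbsum : t = ∑' i : ℕ, ((b i : ℝ)) / q ^ (i + 1) := by
    have hsplit_b := tsum_digit_split hq (f := fun i => ((b i : ℝ)))
      (fun i => hbd.abs_le' i) (p+1)
    have hsplit_a := tsum_digit_split hq (f := fun i => ((a i : ℝ)))
      (fun i => hd.abs_le' i) (p+1)
    have htail_b : (∑' i : ℕ, ((b (p+1+i) : ℝ)) / q ^ (i + 1)) = x := by
      rw [hb'x]
      congr 1; funext i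
      congr 2
      rw [hbdef]
      simp only
      rw [if_neg (by omega), if_neg (by omega)]
      congr 1
      omega
    have hsum_b : (∑ i ∈ Finset.range (p+1), ((b i : ℝ)) / q ^ (i + 1))
        = (∑ i ∈ Finset.range p, ((a i : ℝ)) / q ^ (i + 1)) + ((a p : ℝ) + 1) / q ^ (p+1) := by
      rw [Finset.sum_range_succ]
      congr 1
      · apply Finset.sum_congr rfl
        intro i hi
        rw [Finset.mem_range] at hi
        rw [hbdef]; simp only
        rw [if_pos hi]
      · have hbp : b p = a p + 1 := by rw [hbdef]; simp
        rw [hbp]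
        push_cast; ring
    have hsum_a : t = (∑ i ∈ Finset.range p, ((a i : ℝ)) / q ^ (i + 1))
        + (a p : ℝ) / q ^ (p+1) + VF q a (p+1) / q ^ (p+1) := by
      rw [ha.2, hsplit_a, Finset.sum_range_succ, VF_def]
    rw [hsplit_b, htail_b, hsum_b, hsum_a, hxdef]
    have hqp : (0:ℝ) < q ^ (p+1) := pow_pos (by linarith) _
    field_simp
    ring
  have hba := huniq b ⟨hbd, hbsum⟩
  have h6 : b p = a p := by rw [hba]
  have hbp : b p = a p + 1 := by rw [hbdef]; simp
  omega

lemma uniq_cond_neg (hm : 1 ≤ m) (hq1 : (m:ℝ) + 1 < q) (hq2 : q ≤ 2*(m:ℝ) + 1)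
    (ha : IsExpansion q m m a t) (huniq : ∀ b, IsExpansion q m m b t → b = a)
    {p : ℕ} (hp : -(m:ℤ) < a p) : -((q - 1 - m)/(q - 1)) < VF q a (p+1) := by
  have huniq' : ∀ b, IsExpansion q m m b (-t) → b = (fun i => -a i) := by
    intro b hb
    have h2 := isExpansion_neg hb
    rw [neg_neg] at h2
    have h4 := huniq _ h2
    funext i
    have h5 : -b i = a i := congrFun h4 i
    show b i = -a i
    omega
  have h := uniq_cond_pos hm hq1 hq2 (isExpansion_neg ha) huniq' (p := p)
    (show -a p < (m:ℤ) from by omega)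
  rw [VF_neg] at h
  linarith

end uniqcond

/-- the tail condition satisfied by unique expansions -/
def Gcond (q : ℝ) (m : ℕ) (a : ℕ → ℤ) : Prop :=
  ∀ p, (a p < m → VF q a (p+1) < (q - 1 - m)/(q - 1))
    ∧ (-(m:ℤ) < a p → -((q - 1 - m)/(q - 1)) < VF q a (p+1))

section struct
variable {q : ℝ} {m : ℕ} {a : ℕ → ℤ}

lemma Dig.neg (hd : Dig m a) : Dig m (fun i => -a i) := by
  intro i
  have := hd i
  exact ⟨show -(m:ℤ) ≤ -a i from by omega, show -a i ≤ (m:ℤ) from by omega⟩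

lemma Gcond.neg (hG : Gcond q m a) : Gcond q m (fun i => -a i) := by
  intro p
  constructor
  · intro h
    have h2 := (hG p).2 (show -(m:ℤ) < a p from by have : -a p < (m:ℤ) := h; omega)
    rw [VF_neg]
    linarith
  · intro h
    have h2 := (hG p).1 (show a p < (m:ℤ) from by have : -(m:ℤ) < -a p := h; omega)
    rw [VF_neg]
    linarith

lemma no_isolated_pos (hm : 1 ≤ m) (hq1 : (m:ℝ) + 1 < q)
    (hd : Dig m a) (hG : Gcond q m a)
    {K : ℕ} (hK : (m:ℝ)/(q-1) / q^K < 1 - q*((q - 1 - m)/(q - 1)))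
    {J n : ℕ} (hJn : J < n) (haJ : a J = 0)
    (hblock : ∀ i, n+1 ≤ i → i ≤ n+K → a i = 0)
    (han : 1 ≤ a n) : False := by
  have hm' : (1:ℝ) ≤ m := by exact_mod_cast hm
  have hq : 1 < q := by linarith
  have hq0 : (0:ℝ) < q := by linarith
  have hq0' : (0:ℝ) < q - 1 := by linarith
  set ε := (q - 1 - (m:ℝ))/(q - 1) with hεdef
  have hε : 0 < ε := by apply div_pos <;> linarith
  have hεq : q * ε < 1 := by
    have h0 : (0:ℝ) < (m:ℝ)/(q-1)/q^K := by positivity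
    linarith
  -- tail after n is tiny
  have hVFn : |VF q a (n+1)| ≤ (m:ℝ)/(q-1) / q^K := by
    have hz : ∀ i < K, a (n+1+i) = 0 := fun i hi => hblock (n+1+i) (by omega) (by omega)
    rw [VF_zero_block hq hd hz, abs_div, abs_of_pos (pow_pos hq0 K)]
    gcongr
    exact VF_abs_le hq hd _
  have habs : -((m:ℝ)/(q-1)/q^K) ≤ VF q a (n+1) := by
    have := abs_le.1 hVFn; exact this.1
  -- downward induction
  have claim : ∀ k, 1 ≤ k → k ≤ n - J → (a (n-k) = m ∧ ε < VF q a (n-k+1)) := by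
    intro k
    induction k with
    | zero => intro h; exact absurd h (by norm_num)
    | succ k ih =>
      intro h1 h2
      rcases Nat.eq_zero_or_pos k with rfl | hk
      · -- base case : k + 1 = 1
        have hn1 : n - 1 + 1 = n := by omega
        have hVF : ε < VF q a (n - 1 + 1) := by
          rw [hn1, VF_succ hq hd n, ← add_div, lt_div_iff₀ hq0]
          have h3 : (1:ℝ) ≤ (a n : ℝ) := by exact_mod_cast han
          linarith
        refine ⟨?_, hVF⟩
        by_contra hne
        have hlt : a (n-1) < m := lt_of_le_of_ne (hd (n-1)).2 hne
        exact absurd ((hG (n-1)).1 hlt) (by simp only [not_lt]; exact le_of_lt hVF)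
      · -- step
        obtain ⟨ham, hVF⟩ := ih hk (by omega)
        have hidx : n - (k+1) + 1 = n - k := by omega
        have hVF2 : ε < VF q a (n - (k+1) + 1) := by
          rw [hidx, VF_succ hq hd (n-k), ← add_div, lt_div_iff₀ hq0, ham]
          push_cast
          linarith
        refine ⟨?_, hVF2⟩
        by_contra hne
        have hlt : a (n-(k+1)) < m := lt_of_le_of_ne (hd (n-(k+1))).2 hne
        exact absurd ((hG (n-(k+1))).1 hlt) (by simp only [not_lt]; exact le_of_lt hVF2)
  obtain ⟨hfin, _⟩ := claim (n - J) (by omega) le_rfl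
  rw [show n - (n - J) = J from by omega] at hfin
  rw [haJ] at hfin
  omega

lemma next_nonzero_exists (hm : 1 ≤ m) (hq1 : (m:ℝ) + 1 < q)
    (hd : Dig m a) (hG : Gcond q m a)
    {K : ℕ} (hK : (m:ℝ)/(q-1) / q^K < 1 - q*((q - 1 - m)/(q - 1)))
    {J n : ℕ} (hJn : J < n) (haJ : a J = 0)
    (han : a n ≠ 0) : ∃ i, n+1 ≤ i ∧ i ≤ n+K ∧ a i ≠ 0 := by
  by_contra hcon
  push_neg at hcon
  rcases lt_or_gt_of_ne han with hneg | hpos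
  · refine no_isolated_pos hm hq1 hd.neg hG.neg hK hJn
      (show -a J = 0 from by rw [haJ]; ring) (fun i h1 h2 => ?_) (show 1 ≤ -a n from by omega)
    show -a i = 0
    rw [hcon i h1 h2]
    ring
  · exact no_isolated_pos hm hq1 hd hG hK hJn haJ
      (fun i h1 h2 => hcon i h1 h2) (by omega)

/-- counting lemma: the number of nonzero digits grows linearly -/
lemma count_nonzero {K : ℕ} (hK1 : 1 ≤ K)
    (hnext : ∀ J n, J < n → a J = 0 → a n ≠ 0 → ∃ i, n+1 ≤ i ∧ i ≤ n+K ∧ a i ≠ 0)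
    (hinf : {n | a n ≠ 0}.Infinite) :
    ∃ C : ℕ, ∀ k, k ≤ (K+1) * ((Finset.range k).filter (fun i => a i ≠ 0)).card + C := by
  by_cases hz : ∃ J, a J = 0
  · obtain ⟨J₀, hJ₀⟩ := hz
    obtain ⟨n₀, hn₀mem, hn₀gt⟩ := hinf.exists_gt J₀
    -- build the chain
    have hstep : ∀ s : {n // a n ≠ 0 ∧ J₀ < n}, ∃ i, s.1 + 1 ≤ i ∧ i ≤ s.1 + K ∧ a i ≠ 0 :=
      fun ⟨n, hn1, hn2⟩ => hnext J₀ n hn2 hJ₀ hn1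
    let f : {n // a n ≠ 0 ∧ J₀ < n} → {n // a n ≠ 0 ∧ J₀ < n} := fun s =>
      ⟨Classical.choose (hstep s), (Classical.choose_spec (hstep s)).2.2,
        by have h := (Classical.choose_spec (hstep s)).1; omega⟩
    let p : ℕ → ℕ := fun s => (f^[s] ⟨n₀, hn₀mem, hn₀gt⟩).1
    have hp0 : p 0 = n₀ := rfl
    have hpsucc : ∀ s, p s + 1 ≤ p (s+1) ∧ p (s+1) ≤ p s + K := by
      intro s
      have : f^[s+1] ⟨n₀, hn₀mem, hn₀gt⟩ = f (f^[s] ⟨n₀, hn₀mem, hn₀gt⟩) :=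
        Function.iterate_succ_apply' f s _
      constructor
      · show p s + 1 ≤ (f^[s+1] ⟨n₀, hn₀mem, hn₀gt⟩).1
        rw [this]
        exact (Classical.choose_spec (hstep _)).1
      · show (f^[s+1] ⟨n₀, hn₀mem, hn₀gt⟩).1 ≤ p s + K
        rw [this]
        exact (Classical.choose_spec (hstep _)).2.1
    have hpne : ∀ s, a (p s) ≠ 0 := fun s => (f^[s] ⟨n₀, hn₀mem, hn₀gt⟩).2.1
    have hpmono : StrictMono p := strictMono_nat_of_lt_succ (fun s => by
      have := (hpsucc s).1; omega)
    have hpbound : ∀ s, p s ≤ n₀ + s * K := by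
      intro s
      induction s with
      | zero => simp [hp0]
      | succ s ih =>
        have h5 : p (s+1) ≤ p s + K := (hpsucc s).2
        calc p (s+1) ≤ p s + K := h5
          _ ≤ n₀ + s * K + K := by omega
          _ = n₀ + (s+1) * K := by ring
    refine ⟨n₀ + K, fun k => ?_⟩
    rcases le_or_gt k n₀ with hk | hk
    · have := Nat.zero_le ((K+1) * ((Finset.range k).filter (fun i => a i ≠ 0)).card)
      linarith
    · set S := (k - n₀) / K with hS
      have hSK : S * K ≤ k - n₀ := Nat.div_mul_le_self _ _
      have hSK2 : k - n₀ < S * K + K := by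
        have h1 := Nat.div_add_mod (k - n₀) K
        rw [← hS] at h1
        have h2 : (k - n₀) % K < K := Nat.mod_lt _ (by omega)
        have h3 : K * S = S * K := by ring
        linarith
      have hcard : S ≤ ((Finset.range k).filter (fun i => a i ≠ 0)).card := by
        have : (Finset.range S).image p ⊆ (Finset.range k).filter (fun i => a i ≠ 0) := by
          intro x hx
          simp only [Finset.mem_image, Finset.mem_range] at hx
          obtain ⟨s, hs, rfl⟩ := hx
          simp only [Finset.mem_filter, Finset.mem_range]
          refine ⟨?_, hpne s⟩
          have h1 := hpbound s
          have h2 : s * K ≤ (S - 1) * K := Nat.mul_le_mul_right K (by omega)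
          have h3 : (S-1) * K + K = S * K := by
            have h9 : S - 1 + 1 = S := by omega
            calc (S-1)*K + K = ((S-1)+1)*K := by ring
              _ = S*K := by rw [h9]
          have hlink : n₀ + (k - n₀) = k := by omega
          linarith
        calc S = ((Finset.range S).image p).card := by
              rw [Finset.card_image_of_injective _ hpmono.injective, Finset.card_range]
          _ ≤ _ := Finset.card_le_card this
      set z := ((Finset.range k).filter (fun i => a i ≠ 0)).card with hz
      have hlink : n₀ + (k - n₀) = k := by omega
      have h7 : S * K ≤ z * K := Nat.mul_le_mul_right K hcard
      have h8 : (K+1) * z = z * K + z := by ring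
      linarith
  · push_neg at hz
    refine ⟨0, fun k => ?_⟩
    have : (Finset.range k).filter (fun i => a i ≠ 0) = Finset.range k := by
      apply Finset.filter_true_of_mem
      intro i _
      exact hz i
    rw [this, Finset.card_range, Nat.add_zero]
    exact Nat.le_mul_of_pos_left k (by omega)

/-- number of nonzero digits among the first `k` -/
def zc (a : ℕ → ℤ) (k : ℕ) : ℕ := ((Finset.range k).filter (fun i => a i ≠ 0)).card

section cover
variable {q : ℝ} {m : ℕ} {a : ℕ → ℤ}

/-- admissible words of length `k` -/
def Adm (m : ℕ) (a : ℕ → ℤ) (k : ℕ) (w : Fin k → Fin (m+1)) : Prop :=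
  ∀ j : Fin k, a j.1 ≤ ((w j : ℕ) : ℤ) ∧ ((w j : ℕ) : ℤ) ≤ m + a j.1

instance {m : ℕ} {a : ℕ → ℤ} {k : ℕ} : DecidablePred (Adm m a k) := fun w => by
  unfold Adm; infer_instance

/-- cylinder interval of a word -/
noncomputable def cyl (q : ℝ) (m : ℕ) (a : ℕ → ℤ) (k : ℕ) (w : Fin k → Fin (m+1)) : Set ℝ :=
  if Adm m a k w then
    Set.Icc (∑ j : Fin k, ((w j : ℕ) : ℝ) / q ^ ((j : ℕ) + 1))
      ((∑ j : Fin k, ((w j : ℕ) : ℝ) / q ^ ((j : ℕ) + 1)) + (m:ℝ)/((q-1) * q^k))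
  else ∅

lemma diam_cyl_le (hq : 1 < q) (hm : 1 ≤ m) (k : ℕ) (w : Fin k → Fin (m+1)) :
    EMetric.diam (cyl q m a k w) ≤ ENNReal.ofReal ((m:ℝ)/((q-1) * q^k)) := by
  rw [cyl]
  split_ifs with h
  · change Metric.ediam _ ≤ _
    rw [Real.ediam_Icc]
    simp
  · change Metric.ediam _ ≤ _
    simp

lemma cover_step (hq : 1 < q) (k : ℕ) {x : ℝ}
    (hx : ∃ c : ℕ → ℕ, (∀ i, c i ≤ m ∧ a i ≤ (c i : ℤ) ∧ (c i : ℤ) ≤ m + a i)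
      ∧ x = ∑' i : ℕ, (c i : ℝ) / q ^ (i + 1)) :
    x ∈ ⋃ w : Fin k → Fin (m+1), cyl q m a k w := by
  classical
  obtain ⟨c, hc, hxc⟩ := hx
  have hq0 : (0:ℝ) < q := by linarith
  have habs : ∀ i, |(c i : ℝ)| ≤ (m : ℝ) := by
    intro i
    rw [abs_of_nonneg (Nat.cast_nonneg _)]
    exact_mod_cast (hc i).1
  set w : Fin k → Fin (m+1) := fun j => ⟨c j.1, by have := (hc j.1).1; omega⟩ with hw
  refine mem_iUnion.2 ⟨w, ?_⟩
  have hadm : Adm m a k w := fun j => (hc j.1).2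
  rw [cyl, if_pos hadm]
  have hpt : (∑ j : Fin k, ((w j : ℕ) : ℝ) / q ^ ((j : ℕ) + 1))
      = ∑ i ∈ Finset.range k, (c i : ℝ) / q ^ (i + 1) := by
    rw [← Fin.sum_univ_eq_sum_range]
  have hsplit := tsum_digit_split hq habs k
  have htail_lb : 0 ≤ ∑' i : ℕ, (c (k + i) : ℝ) / q ^ (i + 1) :=
    tsum_nonneg (fun i => by positivity)
  have htail_ub : (∑' i : ℕ, (c (k + i) : ℝ) / q ^ (i + 1)) ≤ (m:ℝ)/(q-1) := by
    have := abs_tsum_digit_le hq (fun i => habs (k+i))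
    exact (le_abs_self _).trans this
  constructor
  · rw [hxc, hsplit, hpt]
    have : 0 ≤ (∑' i : ℕ, (c (k + i) : ℝ) / q ^ (i + 1)) / q ^ k := by positivity
    linarith
  · rw [hxc, hsplit, hpt]
    have h2 : (∑' i : ℕ, (c (k + i) : ℝ) / q ^ (i + 1)) / q ^ k ≤ ((m:ℝ)/(q-1)) / q ^ k := by
      gcongr
    have h3 : ((m:ℝ)/(q-1)) / q ^ k = (m:ℝ)/((q-1) * q^k) := by
      rw [div_div]
    linarith

/-- counting admissible words -/
lemma card_adm_le (hm : 1 ≤ m) (k : ℕ) :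
    (Finset.univ.filter (fun w : Fin k → Fin (m+1) => Adm m a k w)).card
      ≤ ∏ j ∈ Finset.range k, (if a j = 0 then m+1 else m) := by
  have h1 : (Finset.univ.filter (fun w : Fin k → Fin (m+1) => Adm m a k w)).card
      = Fintype.card {w : Fin k → Fin (m+1) // Adm m a k w} := (Fintype.card_subtype _).symm
  rw [h1]
  have h2 : Fintype.card {w : Fin k → Fin (m+1) // Adm m a k w}
      ≤ Fintype.card (∀ j : Fin k, {c : Fin (m+1) // a j.1 ≤ ((c:ℕ):ℤ) ∧ ((c:ℕ):ℤ) ≤ m + a j.1}) := by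
    apply Fintype.card_le_of_injective (fun w => fun j => ⟨w.1 j, w.2 j⟩)
    intro w w' h
    apply Subtype.ext
    funext j
    have := congrFun h j
    exact congrArg Subtype.val this
  refine h2.trans ?_
  rw [Fintype.card_pi]
  rw [← Fin.prod_univ_eq_prod_range (fun j => if a j = 0 then m+1 else m) k]
  apply Finset.prod_le_prod'
  intro j _
  rcases eq_or_ne (a j.1) 0 with hz | hz
  · rw [if_pos hz]
    calc Fintype.card {c : Fin (m+1) // a j.1 ≤ ((c:ℕ):ℤ) ∧ ((c:ℕ):ℤ) ≤ m + a j.1}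
        ≤ Fintype.card (Fin (m+1)) := Fintype.card_subtype_le _
      _ = m + 1 := Fintype.card_fin _
  · rw [if_neg hz]
    rw [Fintype.card_subtype]
    rcases lt_or_gt_of_ne hz with hneg | hpos
    · -- a j < 0 : the digit m is excluded
      have hbad : (Fin.last m) ∉ (Finset.univ.filter
          (fun c : Fin (m+1) => a j.1 ≤ ((c:ℕ):ℤ) ∧ ((c:ℕ):ℤ) ≤ m + a j.1)) := by
        simp only [Finset.mem_filter, Finset.mem_univ, true_and, not_and, not_le, Fin.val_last]
        intro _
        omega
      have hsub : (Finset.univ.filter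
          (fun c : Fin (m+1) => a j.1 ≤ ((c:ℕ):ℤ) ∧ ((c:ℕ):ℤ) ≤ m + a j.1))
          ⊆ Finset.univ.erase (Fin.last m) := by
        intro c hc
        rw [Finset.mem_erase]
        exact ⟨fun he => hbad (he ▸ hc), Finset.mem_univ _⟩
      calc _ ≤ (Finset.univ.erase (Fin.last m)).card := Finset.card_le_card hsub
        _ = m := by
            rw [Finset.card_erase_of_mem (Finset.mem_univ _), Finset.card_univ, Fintype.card_fin]
            omega
    · -- a j > 0 : the digit 0 is excluded
      have hbad : (0 : Fin (m+1)) ∉ (Finset.univ.filter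
          (fun c : Fin (m+1) => a j.1 ≤ ((c:ℕ):ℤ) ∧ ((c:ℕ):ℤ) ≤ m + a j.1)) := by
        simp only [Finset.mem_filter, Finset.mem_univ, true_and, not_and, not_le, Fin.val_zero]
        intro h
        omega
      have hsub : (Finset.univ.filter
          (fun c : Fin (m+1) => a j.1 ≤ ((c:ℕ):ℤ) ∧ ((c:ℕ):ℤ) ≤ m + a j.1))
          ⊆ Finset.univ.erase (0 : Fin (m+1)) := by
        intro c hc
        rw [Finset.mem_erase]
        exact ⟨fun he => hbad (he ▸ hc), Finset.mem_univ _⟩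
      calc _ ≤ (Finset.univ.erase (0 : Fin (m+1))).card := Finset.card_le_card hsub
        _ = m := by
            rw [Finset.card_erase_of_mem (Finset.mem_univ _), Finset.card_univ, Fintype.card_fin]
            omega

lemma prod_beta (k : ℕ) :
    (∏ j ∈ Finset.range k, (if a j = 0 then m+1 else m))
      = (m+1) ^ (k - zc a k) * m ^ (zc a k) := by
  simp only [zc]
  rw [Finset.prod_ite]
  simp only [Finset.prod_const]
  have h1 : (Finset.range k).filter (fun j => ¬ a j = 0)
      = (Finset.range k).filter (fun i => a i ≠ 0) := rfl
  rw [h1]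
  have h2 : ((Finset.range k).filter (fun j => a j = 0)).card
      = k - ((Finset.range k).filter (fun i => a i ≠ 0)).card := by
    have h4 := Finset.card_filter_add_card_filter_not
      (s := Finset.range k) (p := fun j => a j = 0)
    rw [Finset.card_range] at h4
    have h3 : (Finset.filter (fun j => ¬ a j = 0) (Finset.range k)).card
        = ((Finset.range k).filter (fun i => a i ≠ 0)).card := rfl
    omega
  rw [h2]

lemma dimH_upper_s9 (hq : 1 < q) (hm : 1 ≤ m) {A : Set ℝ}
    (hA : ∀ x ∈ A, ∃ c : ℕ → ℕ, (∀ i, c i ≤ m ∧ a i ≤ (c i : ℤ) ∧ (c i : ℤ) ≤ m + a i)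
      ∧ x = ∑' i : ℕ, (c i : ℝ) / q ^ (i + 1))
    {d : ℝ} (hd0 : 0 < d)
    (hlim : Tendsto (fun k : ℕ =>
        (((m+1) ^ (k - zc a k) * m ^ (zc a k) : ℕ) : ℝ) * ((m:ℝ)/((q-1) * q^k)) ^ d)
      atTop (nhds 0)) :
    dimH A ≤ ENNReal.ofReal d := by
  have hq0 : (0:ℝ) < q := by linarith
  have hq1' : (0:ℝ) < q - 1 := by linarith
  have hm0 : (0:ℝ) < m := by exact_mod_cast hm
  set len : ℕ → ℝ := fun k => (m:ℝ)/((q-1) * q^k) with hlen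
  have hlen_pos : ∀ k, 0 < len k := fun k => by positivity
  set u : ℕ → ℝ := fun k =>
    (((m+1) ^ (k - zc a k) * m ^ (zc a k) : ℕ) : ℝ) * len k ^ d with hu
  -- the Hausdorff measure bound
  have hμ : μH[d] A ≤ liminf
      (fun k : ℕ => ∑ w : Fin k → Fin (m+1), EMetric.diam (cyl q m a k w) ^ d) atTop := by
    apply MeasureTheory.Measure.hausdorffMeasure_le_liminf_sum d A
      (fun k => ENNReal.ofReal (len k)) ?_ (fun k w => cyl q m a k w) ?_ ?_
    · rw [show (0:ℝ≥0∞) = ENNReal.ofReal 0 by simp]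
      apply ENNReal.tendsto_ofReal
      have h1 : len = fun k : ℕ => ((m:ℝ)/(q-1)) * (1/q)^k := by
        funext k
        rw [hlen]
        simp only [div_pow, one_pow]
        rw [mul_one_div, div_div]
      rw [h1]
      have h2 := (tendsto_pow_atTop_nhds_zero_of_lt_one
        (by positivity : (0:ℝ) ≤ 1/q) (by rw [div_lt_one hq0]; exact hq)).const_mul ((m:ℝ)/(q-1))
      simpa using h2
    · exact Eventually.of_forall (fun k => fun w => diam_cyl_le hq hm k w)
    · exact Eventually.of_forall (fun k => fun x hx => cover_step hq k (hA x hx))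
  -- bound each sum
  have hsum : ∀ k : ℕ, (∑ w : Fin k → Fin (m+1), EMetric.diam (cyl q m a k w) ^ d)
      ≤ ENNReal.ofReal (u k) := by
    intro k
    have hterm : ∀ w : Fin k → Fin (m+1), EMetric.diam (cyl q m a k w) ^ d
        ≤ if Adm m a k w then ENNReal.ofReal (len k) ^ d else 0 := by
      intro w
      by_cases h : Adm m a k w
      · rw [if_pos h]
        exact ENNReal.rpow_le_rpow (diam_cyl_le hq hm k w) hd0.le
      · rw [if_neg h, cyl, if_neg h]; change Metric.ediam ∅ ^ d ≤ 0; rw [Metric.ediam_empty, ENNReal.zero_rpow_of_pos hd0]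
    calc (∑ w : Fin k → Fin (m+1), EMetric.diam (cyl q m a k w) ^ d)
        ≤ ∑ w : Fin k → Fin (m+1), if Adm m a k w then ENNReal.ofReal (len k) ^ d else 0 :=
          Finset.sum_le_sum (fun w _ => hterm w)
      _ = (Finset.univ.filter (fun w : Fin k → Fin (m+1) => Adm m a k w)).card
            • (ENNReal.ofReal (len k) ^ d) := by
          rw [Finset.sum_ite, Finset.sum_const, Finset.sum_const_zero, add_zero]
      _ = ((Finset.univ.filter (fun w : Fin k → Fin (m+1) => Adm m a k w)).card : ℝ≥0∞)
            * (ENNReal.ofReal (len k) ^ d) := by rw [nsmul_eq_mul]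
      _ ≤ (((m+1) ^ (k - zc a k) * m ^ (zc a k) : ℕ) : ℝ≥0∞)
            * (ENNReal.ofReal (len k) ^ d) := by
          apply mul_le_mul_left
          have h3 := (card_adm_le (a := a) hm k).trans_eq (prod_beta (a := a) k)
          exact_mod_cast Nat.cast_le.2 h3
      _ = ENNReal.ofReal (u k) := by
          rw [hu]
          simp only
          rw [ENNReal.ofReal_mul (by positivity), ENNReal.ofReal_natCast,
            ← ENNReal.ofReal_rpow_of_pos (hlen_pos k)]
  -- conclude μH[d] A = 0
  have hlim2 : Tendsto (fun k => ENNReal.ofReal (u k)) atTop (nhds 0) := by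
    rw [show (0:ℝ≥0∞) = ENNReal.ofReal 0 by simp]
    exact ENNReal.tendsto_ofReal hlim
  have hliminf : liminf (fun k : ℕ =>
      ∑ w : Fin k → Fin (m+1), EMetric.diam (cyl q m a k w) ^ d) atTop
      ≤ liminf (fun k => ENNReal.ofReal (u k)) atTop :=
    liminf_le_liminf (Eventually.of_forall hsum)
  rw [hlim2.liminf_eq] at hliminf
  have hzero : μH[d] A = 0 := le_antisymm (hμ.trans hliminf) zero_le
  have hne : μH[(d.toNNReal : ℝ)] A ≠ ⊤ := by
    rw [Real.coe_toNNReal _ hd0.le, hzero]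
    exact ENNReal.zero_ne_top
  have := dimH_le_of_hausdorffMeasure_ne_top hne
  rwa [show ((d.toNNReal : ℝ≥0∞)) = ENNReal.ofReal d from rfl] at this
end cover

section analytic
variable {q : ℝ} {m : ℕ} {a : ℕ → ℤ}

lemma analytic_limit (hm : 1 ≤ m) (hq1 : (m:ℝ) + 1 < q) {K C : ℕ} (hK1 : 1 ≤ K)
    (hcount : ∀ k, k ≤ (K+1) * (zc a k) + C) :
    0 < Real.log (((m:ℝ)+1)/m) / (2 * ((K+1 : ℕ) : ℝ) * Real.log q) ∧
    0 < Real.log ((m:ℝ)+1) / Real.log q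
        - Real.log (((m:ℝ)+1)/m) / (2 * ((K+1 : ℕ) : ℝ) * Real.log q) ∧
      Tendsto (fun k : ℕ => (((m+1) ^ (k - zc a k) * m ^ (zc a k) : ℕ) : ℝ)
        * ((m:ℝ)/((q-1) * q^k)) ^ (Real.log ((m:ℝ)+1) / Real.log q
            - Real.log (((m:ℝ)+1)/m) / (2 * ((K+1 : ℕ) : ℝ) * Real.log q))) atTop (nhds 0) := by
  have hm1 : (1:ℝ) ≤ m := by exact_mod_cast hm
  have hq : 1 < q := by linarith
  have hq0 : (0:ℝ) < q := by linarith
  have hq1' : (0:ℝ) < q - 1 := by linarith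
  have hlogq : 0 < Real.log q := Real.log_pos hq
  have hm2 : (1:ℝ) < (m:ℝ) + 1 := by linarith
  have hlogm1 : 0 < Real.log ((m:ℝ)+1) := Real.log_pos hm2
  have hm0 : (0:ℝ) < m := by linarith
  set P : ℕ := K + 1 with hP
  have hP2 : (2:ℝ) ≤ (P:ℕ) := by
    have : 2 ≤ P := by omega
    exact_mod_cast this
  have hP0 : (0:ℝ) < (P:ℕ) := by linarith
  set X : ℝ := Real.log (((m:ℝ)+1)/m) with hX
  have hXpos : 0 < X := Real.log_pos (by rw [lt_div_iff₀ hm0]; linarith)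
  have hXle : X ≤ Real.log ((m:ℝ)+1) := by
    apply Real.log_le_log (by positivity)
    rw [div_le_iff₀ hm0]
    nlinarith
  set δ : ℝ := X / (2 * P * Real.log q) with hδ
  have hδpos : 0 < δ := by
    apply div_pos hXpos
    positivity
  set L : ℝ := Real.log ((m:ℝ)+1) / Real.log q with hL
  have hLpos : 0 < L := div_pos hlogm1 hlogq
  have hdpos : 0 < L - δ := by
    have h1 : δ ≤ X / (4 * Real.log q) := by
      rw [hδ]
      gcongr
      linarith
    have h2 : X / (4 * Real.log q) ≤ Real.log ((m:ℝ)+1) / (4 * Real.log q) := by gcongr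
    have h3 : Real.log ((m:ℝ)+1) / (4 * Real.log q) = L / 4 := by
      rw [hL, div_div, mul_comm (Real.log q) 4]
    linarith
  refine ⟨hδpos, hdpos, ?_⟩
  set d : ℝ := L - δ with hd
  set θ : ℝ := (m:ℝ)/((m:ℝ)+1) with hθ
  have hθpos : 0 < θ := by positivity
  have hθlt : θ < 1 := by rw [hθ, div_lt_one (by linarith)]; linarith
  set G : ℝ := ((m:ℝ)+1) * θ ^ ((1:ℝ)/P) * (1/q) ^ d with hG
  have hGpos : 0 < G := by
    apply mul_pos (mul_pos (by linarith) (Real.rpow_pos_of_pos hθpos _))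
    exact Real.rpow_pos_of_pos (by positivity) _
  have hGlt : G < 1 := by
    rw [← Real.log_neg_iff hGpos]
    rw [hG, Real.log_mul (by positivity) (by positivity),
      Real.log_mul (by positivity) (by positivity),
      Real.log_rpow hθpos, Real.log_rpow (by positivity), one_div q, Real.log_inv]
    have hθlog : Real.log θ = -X := by
      rw [hθ, hX, ← Real.log_inv]
      congr 1
      rw [inv_div]
    have hdlog : d * Real.log q = Real.log ((m:ℝ)+1) - δ * Real.log q := by
      rw [hd, hL, sub_mul, div_mul_cancel₀ _ (ne_of_gt hlogq)]
    have hδlog : δ * Real.log q = X / (2*(P:ℝ)) := by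
      rw [hδ, div_mul_eq_mul_div, mul_comm (2*(P:ℝ)) (Real.log q), ← div_div,
        mul_div_assoc, div_self (ne_of_gt hlogq), mul_one]
    rw [hθlog]
    have : Real.log ((m:ℝ)+1) + 1/(P:ℝ) * (-X) + d * -Real.log q
        = -(X/(2*P)) := by
      rw [show d * -Real.log q = -(d * Real.log q) by ring, hdlog, hδlog]
      field_simp
      ring
    rw [this]
    have hfin : 0 < X/(2*(P:ℝ)) := by positivity
    linarith
  -- the bound u k ≤ E * G^k
  set E : ℝ := θ ^ (-(C:ℝ)/P) * ((m:ℝ)/(q-1)) ^ d with hE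
  have hEpos : 0 < E :=
    mul_pos (Real.rpow_pos_of_pos hθpos _) (Real.rpow_pos_of_pos (by positivity) _)
  have hbound : ∀ k : ℕ, (((m+1) ^ (k - zc a k) * m ^ (zc a k) : ℕ) : ℝ)
      * ((m:ℝ)/((q-1) * q^k)) ^ d ≤ E * G ^ k := by
    intro k
    set z : ℕ := zc a k with hz
    have hzk : z ≤ k := by
      rw [hz, zc]
      calc ((Finset.range k).filter (fun i => a i ≠ 0)).card
          ≤ (Finset.range k).card := Finset.card_filter_le _ _
        _ = k := Finset.card_range k
    -- step 1 : cast的 product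
    have hcast : (((m+1) ^ (k - z) * m ^ z : ℕ) : ℝ) = ((m:ℝ)+1) ^ (k-z) * (m:ℝ) ^ z := by
      push_cast
      ring
    have hsplit : ((m:ℝ)+1) ^ (k-z) * (m:ℝ) ^ z = ((m:ℝ)+1) ^ k * θ ^ z := by
      have h7 : (m:ℝ)^z = (((m:ℝ)+1)^z) * θ^z := by
        rw [← mul_pow]
        congr 1
        rw [hθ]
        field_simp
      rw [h7, ← mul_assoc, ← pow_add, show k - z + z = k from by omega]
    -- step 2 : θ^z ≤ θ^((k-C)/P)
    have hstep2 : θ ^ z ≤ θ ^ (((k:ℝ) - C)/P) := by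
      rw [← Real.rpow_natCast θ z]
      apply Real.rpow_le_rpow_of_exponent_ge hθpos hθlt.le
      have h5 := hcount k
      have h6 : (k:ℝ) ≤ P * z + C := by exact_mod_cast h5
      rw [div_le_iff₀ hP0]
      linarith
    -- step 3 : θ^((k-C)/P) = θ^(-C/P) * (θ^(1/P))^k
    have hstep3 : θ ^ (((k:ℝ) - C)/P) = θ ^ (-(C:ℝ)/P) * (θ ^ ((1:ℝ)/P)) ^ k := by
      rw [← Real.rpow_natCast (θ ^ ((1:ℝ)/P)) k, ← Real.rpow_mul hθpos.le,
        ← Real.rpow_add hθpos]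
      congr 1
      field_simp
      ring
    -- step 4 : len^d
    have hstep4 : ((m:ℝ)/((q-1) * q^k)) ^ d = ((m:ℝ)/(q-1)) ^ d * ((1/q) ^ d) ^ k := by
      rw [← Real.rpow_natCast ((1/q) ^ d) k, ← Real.rpow_mul (by positivity),
        show d * (k:ℝ) = (k:ℝ) * d from by ring, Real.rpow_mul (by positivity),
        Real.rpow_natCast, ← Real.mul_rpow (by positivity) (by positivity)]
      congr 1
      rw [div_pow, one_pow, mul_one_div, div_div]
    calc (((m+1) ^ (k - z) * m ^ z : ℕ) : ℝ) * ((m:ℝ)/((q-1) * q^k)) ^ d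
        = (((m:ℝ)+1) ^ k * θ ^ z) * (((m:ℝ)/(q-1)) ^ d * ((1/q) ^ d) ^ k) := by
          rw [hcast, hsplit, hstep4]
      _ ≤ (((m:ℝ)+1) ^ k * (θ ^ (-(C:ℝ)/P) * (θ ^ ((1:ℝ)/P)) ^ k))
            * (((m:ℝ)/(q-1)) ^ d * ((1/q) ^ d) ^ k) := by
          apply mul_le_mul_of_nonneg_right _ (by positivity)
          apply mul_le_mul_of_nonneg_left _ (by positivity)
          rw [← hstep3]
          exact hstep2
      _ = E * G ^ k := by
          rw [hE, hG, mul_pow, mul_pow]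
          ring
  -- conclude
  have hG0 : (0:ℝ) ≤ G := hGpos.le
  have hgeo : Tendsto (fun k : ℕ => E * G ^ k) atTop (nhds 0) := by
    have := (tendsto_pow_atTop_nhds_zero_of_lt_one hG0 hGlt).const_mul E
    simpa using this
  apply squeeze_zero (fun k => by positivity) hbound hgeo
end analytic


lemma delta_pos_lt {q : ℝ} {m : ℕ} (hm : 1 ≤ m) (hq1 : (m:ℝ) + 1 < q) {K : ℕ} (hK1 : 1 ≤ K) :
    0 < Real.log (((m:ℝ)+1)/m) / (2 * ((K+1 : ℕ) : ℝ) * Real.log q) ∧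
    0 < Real.log ((m:ℝ)+1) / Real.log q
        - Real.log (((m:ℝ)+1)/m) / (2 * ((K+1 : ℕ) : ℝ) * Real.log q) := by
  have hm1 : (1:ℝ) ≤ m := by exact_mod_cast hm
  have hq : 1 < q := by linarith
  have hlogq : 0 < Real.log q := Real.log_pos hq
  have hm0 : (0:ℝ) < m := by linarith
  have hlogm1 : 0 < Real.log ((m:ℝ)+1) := Real.log_pos (by linarith)
  have hXpos : 0 < Real.log (((m:ℝ)+1)/m) := Real.log_pos (by rw [lt_div_iff₀ hm0]; linarith)
  have hXle : Real.log (((m:ℝ)+1)/m) ≤ Real.log ((m:ℝ)+1) := by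
    apply Real.log_le_log (by positivity)
    rw [div_le_iff₀ hm0]
    nlinarith
  have hP2 : (2:ℝ) ≤ ((K+1 : ℕ) : ℝ) := by
    have : 2 ≤ K + 1 := by omega
    exact_mod_cast this
  have hden : 0 < 2 * ((K+1 : ℕ) : ℝ) * Real.log q := by
    apply mul_pos (by linarith) hlogq
  refine ⟨div_pos hXpos hden, ?_⟩
  have h1 : Real.log (((m:ℝ)+1)/m) / (2 * ((K+1 : ℕ) : ℝ) * Real.log q)
      ≤ Real.log (((m:ℝ)+1)/m) / (4 * Real.log q) := by
    gcongr
    linarith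
  have h2 : Real.log (((m:ℝ)+1)/m) / (4 * Real.log q)
      ≤ Real.log ((m:ℝ)+1) / (4 * Real.log q) := by gcongr
  have h3 : Real.log ((m:ℝ)+1) / (4 * Real.log q) < Real.log ((m:ℝ)+1) / Real.log q := by
    gcongr
    linarith
  linarith

section part7
variable {q : ℝ} {m : ℕ} {a : ℕ → ℤ} {t : ℝ}

lemma nat_digit_abs (hm : 1 ≤ m) {c : ℕ → ℕ} (hc : ∀ i, c i ≤ m) (i : ℕ) :
    |((c i : ℝ))| ≤ (m : ℝ) := by
  rw [abs_of_nonneg (Nat.cast_nonneg _)]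
  exact_mod_cast hc i

lemma mem_inter_digits (hq : 1 < q) (hm : 1 ≤ m)
    (huniq : ∀ b, IsExpansion q m m b t → b = a) {x : ℝ}
    (hx : x ∈ Gamma q m ∩ ((fun y => y + t) '' Gamma q m)) :
    ∃ c : ℕ → ℕ, (∀ i, c i ≤ m ∧ a i ≤ (c i : ℤ) ∧ (c i : ℤ) ≤ m + a i)
      ∧ x = ∑' i : ℕ, (c i : ℝ) / q ^ (i + 1) := by
  obtain ⟨⟨c, hc, hxc⟩, ⟨y, ⟨c', hc', hyc⟩, hyt⟩⟩ := hx
  have hs1 : Summable fun i => ((c i : ℝ)) / q ^ (i+1) := summable_digit hq (nat_digit_abs hm hc)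
  have hs2 : Summable fun i => ((c' i : ℝ)) / q ^ (i+1) := summable_digit hq (nat_digit_abs hm hc')
  set d : ℕ → ℤ := fun i => (c i : ℤ) - (c' i : ℤ) with hd
  have hdexp : IsExpansion q m m d t := by
    constructor
    · intro i
      have h1 := hc i
      have h2 := hc' i
      constructor
      · show -(m:ℤ) ≤ (c i : ℤ) - c' i
        omega
      · show (c i : ℤ) - c' i ≤ (m:ℤ)
        omega
    · have hyt' : y + t = x := hyt
      have hxy : t = x - y := by linarith
      rw [hxy, hxc, hyc, ← Summable.tsum_sub hs1 hs2]
      congr 1; funext i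
      show ((c i : ℝ))/q^(i+1) - ((c' i : ℝ))/q^(i+1) = (((c i : ℤ) - c' i : ℤ) : ℝ)/q^(i+1)
      push_cast
      ring
  have hda := huniq d hdexp
  refine ⟨c, fun i => ⟨hc i, ?_, ?_⟩, hxc⟩
  · have : d i = a i := by rw [hda]
    have h2 : d i = (c i : ℤ) - c' i := rfl
    have h3 := hc' i
    omega
  · have : d i = a i := by rw [hda]
    have h2 : d i = (c i : ℤ) - c' i := rfl
    have h3 : (c' i : ℤ) ≤ m := by exact_mod_cast hc' i
    omega

lemma dimH_finite_case (hq : 1 < q) (hm : 1 ≤ m) {N : ℕ}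
    (ha : IsExpansion q m m a t) (hN : ∀ i, N ≤ i → a i = 0) :
    dimH (Gamma q m ∩ ((fun y => y + t) '' Gamma q m)) = dimH (Gamma q m) := by
  have hq0 : (0:ℝ) < q := by linarith
  have hqN : (0:ℝ) < q ^ N := pow_pos hq0 N
  have hdig : ∀ i, |((a i : ℝ))| ≤ (m:ℝ) := by
    intro i
    have := ha.1 i
    rw [abs_le]
    constructor
    · exact_mod_cast this.1
    · exact_mod_cast this.2
  set s₀ : ℝ := ∑ j ∈ Finset.range N, (((a j).toNat : ℝ)) / q ^ (j+1) with hs₀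
  set g : ℝ → ℝ := fun x => x / q^N + s₀ with hg
  -- t is a finite sum
  have ht : t = ∑ j ∈ Finset.range N, ((a j : ℝ)) / q ^ (j+1) := by
    rw [ha.2, tsum_digit_split hq hdig N]
    have : (∑' i : ℕ, ((a (N + i) : ℝ)) / q ^ (i+1)) = 0 := by
      have : ∀ i : ℕ, ((a (N + i) : ℝ)) / q ^ (i+1) = 0 := by
        intro i
        rw [hN (N+i) (by omega)]
        simp
      rw [tsum_congr this, tsum_zero]
    rw [this]
    simp
  -- the image of Gamma under g is inside the intersection
  have himg : g '' (Gamma q m) ⊆ Gamma q m ∩ ((fun y => y + t) '' Gamma q m) := by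
    rintro _ ⟨x, ⟨e, he, hxe⟩, rfl⟩
    have hse : Summable fun i => ((e i : ℝ)) / q ^ (i+1) := summable_digit hq (nat_digit_abs hm he)
    constructor
    · -- g x ∈ Gamma
      set e1 : ℕ → ℕ := fun i => if i < N then (a i).toNat else e (i - N) with he1
      have he1b : ∀ i, e1 i ≤ m := by
        intro i
        rw [he1]
        simp only
        split_ifs with h
        · have := (ha.1 i).2; omega
        · exact he _
      refine ⟨e1, he1b, ?_⟩
      rw [tsum_digit_split hq (nat_digit_abs hm he1b) N]
      have hpre : (∑ i ∈ Finset.range N, ((e1 i : ℝ)) / q ^ (i+1)) = s₀ := by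
        apply Finset.sum_congr rfl
        intro i hi
        rw [Finset.mem_range] at hi
        rw [he1]
        simp only
        rw [if_pos hi]
      have htail : (∑' i : ℕ, ((e1 (N + i) : ℝ)) / q ^ (i+1)) = x := by
        rw [hxe]
        congr 1; funext i
        rw [he1]
        simp only
        rw [if_neg (by omega), show N + i - N = i from by omega]
      rw [hpre, htail, hg]
      simp only
      ring
    · -- g x - t ∈ Gamma (as witness for the image)
      set e2 : ℕ → ℕ := fun i => if i < N then ((a i).toNat - a i).toNat else e (i - N) with he2
      have he2b : ∀ i, e2 i ≤ m := by
        intro i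
        rw [he2]
        simp only
        split_ifs with h
        · have := (ha.1 i).1
          have := (ha.1 i).2
          omega
        · exact he _
      refine ⟨g x - t, ⟨e2, he2b, ?_⟩, by ring⟩
      rw [tsum_digit_split hq (nat_digit_abs hm he2b) N]
      have hpre : (∑ i ∈ Finset.range N, ((e2 i : ℝ)) / q ^ (i+1))
          = s₀ - ∑ j ∈ Finset.range N, ((a j : ℝ)) / q ^ (j+1) := by
        rw [hs₀, ← Finset.sum_sub_distrib]
        apply Finset.sum_congr rfl
        intro i hi
        rw [Finset.mem_range] at hi
        rw [he2]
        simp only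
        rw [if_pos hi]
        have hcast : ((((a i).toNat - a i).toNat : ℝ)) = (((a i).toNat : ℝ)) - ((a i : ℝ)) := by
          have h1 : (0:ℤ) ≤ (a i).toNat - a i := by
            have := (ha.1 i).1; omega
          rw [← Int.cast_natCast, Int.toNat_of_nonneg h1]
          push_cast
          ring
        rw [hcast]
        ring
      have htail : (∑' i : ℕ, ((e2 (N + i) : ℝ)) / q ^ (i+1)) = x := by
        rw [hxe]
        congr 1; funext i
        rw [he2]
        simp only
        rw [if_neg (by omega), show N + i - N = i from by omega]
      rw [hpre, htail, ← ht, hg]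
      simp only
      ring
  -- antilipschitz direction via a Lipschitz left inverse
  have hlip : LipschitzWith (q^N).toNNReal (fun y : ℝ => (y - s₀) * q^N) := by
    apply LipschitzWith.of_dist_le_mul
    intro x y
    rw [Real.dist_eq, Real.dist_eq, Real.coe_toNNReal _ hqN.le]
    rw [show (x - s₀) * q^N - (y - s₀) * q^N = (x - y) * q^N from by ring]
    rw [abs_mul, abs_of_pos hqN, mul_comm]
  have hid : Gamma q m = (fun y : ℝ => (y - s₀) * q^N) '' (g '' (Gamma q m)) := by
    rw [Set.image_image]
    have : (fun x => (g x - s₀) * q ^ N) = fun x : ℝ => x := by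
      funext x
      rw [hg]
      simp only
      rw [add_sub_cancel_right, div_mul_cancel₀ _ (ne_of_gt hqN)]
    rw [this]
    exact (Set.image_id (Gamma q m)).symm
  apply le_antisymm (dimH_mono inter_subset_left)
  calc dimH (Gamma q m) = dimH ((fun y : ℝ => (y - s₀) * q^N) '' (g '' (Gamma q m))) := by
        rw [← hid]
    _ ≤ dimH (g '' (Gamma q m)) := hlip.dimH_image_le _
    _ ≤ dimH (Gamma q m ∩ ((fun y => y + t) '' Gamma q m)) := dimH_mono himg

end part7

theorem stmt9 (m : ℕ) (hm : 1 ≤ m) (q : ℝ) (hq1 : (m : ℝ) + 1 < q)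
    (hq2 : q < ((m : ℝ) + 2 + Real.sqrt (m * (m + 4))) / 2) :
    ∃ δ : ℝ, 0 < δ ∧
      dimSet q m m ∩
        Set.Ioo (ENNReal.ofReal (Real.log (m + 1) / Real.log q - δ))
          (ENNReal.ofReal (Real.log (m + 1) / Real.log q)) = ∅ := by
  have hm1 : (1:ℝ) ≤ m := by exact_mod_cast hm
  have hq : 1 < q := by linarith
  have hq0 : (0:ℝ) < q := by linarith
  have hq1' : (0:ℝ) < q - 1 := by linarith
  have hlogq : 0 < Real.log q := Real.log_pos hq
  have hLpos : 0 < Real.log ((m:ℝ)+1) / Real.log q :=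
    div_pos (Real.log_pos (by linarith)) hlogq
  -- the quadratic inequality from q < q_c
  have hqc : q^2 - ((m:ℝ)+2)*q + 1 < 0 := by
    have hs : Real.sqrt ((m:ℝ) * ((m:ℝ) + 4)) ^ 2 = (m:ℝ) * ((m:ℝ)+4) :=
      Real.sq_sqrt (by positivity)
    have h3 : (0:ℝ) ≤ 2*q - ((m:ℝ)+2) := by linarith
    have h2 : 2*q - ((m:ℝ)+2) < Real.sqrt ((m:ℝ)*((m:ℝ)+4)) := by linarith
    nlinarith [mul_self_lt_mul_self h3 h2]
  have hq2m : q ≤ 2*(m:ℝ)+1 := by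
    by_contra h
    push_neg at h
    have he : q*(q-((m:ℝ)+2)) = q^2 - ((m:ℝ)+2)*q := by ring
    have h0 : (0:ℝ) ≤ q * (q - ((m:ℝ)+2)) := mul_nonneg hq0.le (by linarith)
    linarith
  -- positivity of 1 - q ε
  have hc₀ : 0 < 1 - q * ((q - 1 - (m:ℝ))/(q-1)) := by
    have e : q * ((q-1-(m:ℝ))/(q-1)) = (q*(q-1-(m:ℝ)))/(q-1) := by ring
    have h1 : q * ((q-1-(m:ℝ))/(q-1)) < 1 := by
      rw [e, div_lt_one hq1']
      nlinarith
    linarith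
  -- choose the gap length K
  obtain ⟨K', hK'⟩ := pow_unbounded_of_one_lt
    (((m:ℝ)/(q-1)) / (1 - q * ((q - 1 - (m:ℝ))/(q-1)))) hq
  have hK1 : 1 ≤ K' + 1 := by omega
  have hKbig : ((m:ℝ)/(q-1)) / (1 - q * ((q - 1 - (m:ℝ))/(q-1))) < q ^ (K'+1) :=
    hK'.trans_le (pow_le_pow_right₀ hq.le (by omega))
  have hKprop : (m:ℝ)/(q-1) / q^(K'+1) < 1 - q*((q - 1 - (m:ℝ))/(q-1)) := by
    rw [div_lt_iff₀ (pow_pos hq0 (K'+1))]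
    rw [div_lt_iff₀ hc₀] at hKbig
    linarith [hKbig]
  obtain ⟨hδpos, hdpos⟩ := delta_pos_lt hm hq1 hK1
  by_cases hcase : dimH (Gamma q m) < ENNReal.ofReal (Real.log ((m:ℝ)+1) / Real.log q)
  · -- easy case: the dimension of Gamma itself is below L
    have hntop : dimH (Gamma q m) ≠ ⊤ := (hcase.trans ENNReal.ofReal_lt_top).ne
    have htR : (dimH (Gamma q m)).toReal < Real.log ((m:ℝ)+1) / Real.log q := by
      have := ENNReal.toReal_lt_of_lt_ofReal hcase
      exact this
    refine ⟨(Real.log ((m:ℝ)+1) / Real.log q - (dimH (Gamma q m)).toReal)/2,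
      by linarith, ?_⟩
    rw [Set.eq_empty_iff_forall_notMem]
    rintro d ⟨⟨t, ht, rfl⟩, hIoo⟩
    have hle : dimH (Gamma q m ∩ ((fun x => x + t) '' Gamma q m)) ≤ dimH (Gamma q m) :=
      dimH_mono inter_subset_left
    have hup : dimH (Gamma q m) ≤ ENNReal.ofReal (Real.log ((m:ℝ)+1) / Real.log q
        - (Real.log ((m:ℝ)+1) / Real.log q - (dimH (Gamma q m)).toReal)/2) := by
      calc dimH (Gamma q m) = ENNReal.ofReal ((dimH (Gamma q m)).toReal) :=
            (ENNReal.ofReal_toReal hntop).symm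
        _ ≤ _ := ENNReal.ofReal_le_ofReal (by linarith)
    exact absurd (hIoo.1.trans_le hle) (not_lt.2 hup)
  · -- main case
    push_neg at hcase
    refine ⟨Real.log (((m:ℝ)+1)/m) / (2 * ((K'+1+1 : ℕ) : ℝ) * Real.log q), hδpos, ?_⟩
    rw [Set.eq_empty_iff_forall_notMem]
    rintro d ⟨⟨t, ht, rfl⟩, hIoo⟩
    obtain ⟨a, ha, hau⟩ := ht
    have huniq : ∀ b, IsExpansion q m m b t → b = a := fun b hb => hau b hb
    have hDig : Dig m a := ha.1
    by_cases hinf : {n | a n ≠ 0}.Infinite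
    · -- infinitely many nonzero digits : dimension drop
      have hG : Gcond q m a := fun p =>
        ⟨fun h => uniq_cond_pos hm hq1 hq2m ha huniq h,
         fun h => uniq_cond_neg hm hq1 hq2m ha huniq h⟩
      have hnext : ∀ J n, J < n → a J = 0 → a n ≠ 0
          → ∃ i, n+1 ≤ i ∧ i ≤ n+(K'+1) ∧ a i ≠ 0 :=
        fun J n hJn hJ hn => next_nonzero_exists hm hq1 hDig hG hKprop hJn hJ hn
      obtain ⟨C, hC⟩ := count_nonzero hK1 hnext hinf
      have hC' : ∀ k, k ≤ ((K'+1)+1) * (zc a k) + C := hC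
      obtain ⟨_, hdpos', hlim⟩ := analytic_limit hm hq1 hK1 hC'
      have hA : ∀ x ∈ Gamma q m ∩ ((fun x => x + t) '' Gamma q m),
          ∃ c : ℕ → ℕ, (∀ i, c i ≤ m ∧ a i ≤ (c i : ℤ) ∧ (c i : ℤ) ≤ m + a i)
            ∧ x = ∑' i : ℕ, (c i : ℝ) / q ^ (i + 1) :=
        fun x hx => mem_inter_digits hq hm huniq hx
      have hdim := dimH_upper_s9 hq hm hA hdpos' hlim
      exact absurd hIoo.1 (not_lt.2 hdim)
    · -- finitely many nonzero digits : dimension equals that of Gamma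
      rw [Set.not_infinite] at hinf
      obtain ⟨N, hNb⟩ := hinf.bddAbove
      have hN : ∀ i, N+1 ≤ i → a i = 0 := by
        intro i hi
        by_contra hne
        have := hNb (show i ∈ {n | a n ≠ 0} from hne)
        omega
      have heq := dimH_finite_case hq hm ha hN
      rw [heq] at hIoo
      exact absurd hIoo.2 (not_lt.2 hcase)
end struct
end

section
/- Let m1 ≥ m2 be positive integers and q > 1 with q − 1 > m1. If t ∈ Γ_{q,m1} − Γ_{q,m2} (i.e., t = x − y for some x ∈ Γ_{q,m1}, y ∈ Γ_{q,m2}), then Γ_{q,m1} ∩ (Γ_{q,m2} + t) equals the union, over all expansions (t_i) ∈ {−m2,...,m1}^ℕ of t in base q, of the sets {Σ_{i=1}^∞ c_i/q^i : c_i ∈ {0,...,m1} ∩ ({0,...,m2} + t_i) for all i}. -/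
open scoped ENNReal

lemma summable_aux {q : ℝ} (hq : 1 < q) (b : ℕ → ℝ) (M : ℝ)
    (hb : ∀ i, |b i| ≤ M) : Summable (fun i => b i / q ^ (i + 1)) := by
  have hq0 : (0 : ℝ) < q := lt_trans one_pos hq
  have hr : Summable (fun i : ℕ => (q⁻¹) ^ i) :=
    summable_geometric_of_lt_one (by positivity) (inv_lt_one_of_one_lt₀ hq)
  refine Summable.of_norm_bounded (g := fun i => (M / q) * (q⁻¹) ^ i) (hr.mul_left _) ?_
  intro i
  have hpow : (0 : ℝ) < q ^ (i + 1) := pow_pos hq0 _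
  have : ‖b i / q ^ (i + 1)‖ = |b i| / q ^ (i + 1) := by
    rw [Real.norm_eq_abs, abs_div, abs_of_pos hpow]
  rw [this]
  have heq : (M / q) * (q⁻¹) ^ i = M / q ^ (i + 1) := by
    rw [pow_succ']
    field_simp
    rw [one_div, inv_pow, mul_assoc, inv_mul_cancel₀ (pow_ne_zero _ hq0.ne'), mul_one]
  show _ ≤ (M / q) * (q⁻¹) ^ i
  rw [heq]
  gcongr
  exact hb i

theorem stmt13 (m1 m2 : ℕ) (hm2 : 1 ≤ m2) (hm : m2 ≤ m1) (q : ℝ)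
    (hq : (m1 : ℝ) < q - 1) (t : ℝ)
    (ht : ∃ x ∈ Gamma q m1, ∃ y ∈ Gamma q m2, t = x - y) :
    Gamma q m1 ∩ ((fun x => x + t) '' Gamma q m2) =
      ⋃ a ∈ {a : ℕ → ℤ | IsExpansion q m1 m2 a t},
        {x | ∃ c : ℕ → ℤ,
          (∀ i, 0 ≤ c i ∧ c i ≤ (m1 : ℤ) ∧ a i ≤ c i ∧ c i ≤ a i + (m2 : ℤ)) ∧
          x = ∑' i : ℕ, (c i : ℝ) / q ^ (i + 1)} := by
  have hq1 : (1 : ℝ) < q := by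
    have : (1 : ℝ) ≤ (m1 : ℝ) := by exact_mod_cast le_trans hm2 hm
    linarith
  ext x
  simp only [Set.mem_inter_iff, Set.mem_image, Set.mem_iUnion, Set.mem_setOf_eq]
  constructor
  · rintro ⟨⟨c, hc, hcx⟩, z, ⟨b, hb, hbz⟩, hz⟩
    -- x = z + t, so t = x - z
    have hsc : Summable (fun i => ((c i : ℕ) : ℝ) / q ^ (i + 1)) :=
      summable_aux hq1 _ (m1 : ℝ) (by
        intro i
        rw [abs_of_nonneg (by positivity)]
        exact_mod_cast hc i)
    have hsb : Summable (fun i => ((b i : ℕ) : ℝ) / q ^ (i + 1)) :=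
      summable_aux hq1 _ (m2 : ℝ) (by
        intro i
        rw [abs_of_nonneg (by positivity)]
        exact_mod_cast hb i)
    refine ⟨fun i => (c i : ℤ) - (b i : ℤ), ⟨?_, ?_⟩, fun i => (c i : ℤ), ?_, ?_⟩
    · intro i
      dsimp only
      constructor
      · have h1 : (b i : ℤ) ≤ m2 := by exact_mod_cast hb i
        have h2 : (0 : ℤ) ≤ (c i : ℤ) := Int.ofNat_nonneg _
        omega
      · have h1 : (c i : ℤ) ≤ m1 := by exact_mod_cast hc i
        have h2 : (0 : ℤ) ≤ (b i : ℤ) := Int.ofNat_nonneg _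
        omega
    · have : t = x - z := by linarith [hz]
      rw [this, hcx, hbz]
      rw [← Summable.tsum_sub hsc hsb]
      congr 1
      ext i
      push_cast
      ring
    · intro i
      dsimp only
      have h1 : (c i : ℤ) ≤ m1 := by exact_mod_cast hc i
      have h2 : (0 : ℤ) ≤ (b i : ℤ) := Int.ofNat_nonneg _
      have h3 : (b i : ℤ) ≤ m2 := by exact_mod_cast hb i
      refine ⟨Int.ofNat_nonneg _, h1, by omega, by omega⟩
    · exact_mod_cast hcx
  · rintro ⟨a, ⟨ha, hat⟩, c, hc, hcx⟩
    have hsc : Summable (fun i => ((c i : ℤ) : ℝ) / q ^ (i + 1)) :=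
      summable_aux hq1 _ (m1 : ℝ) (by
        intro i
        rw [abs_of_nonneg (by exact_mod_cast (hc i).1)]
        exact_mod_cast (hc i).2.1)
    have hsa : Summable (fun i => ((a i : ℤ) : ℝ) / q ^ (i + 1)) :=
      summable_aux hq1 _ (m1 : ℝ) ?_
    · constructor
      · refine ⟨fun i => (c i).toNat, ?_, ?_⟩
        · intro i
          dsimp only
          have := (hc i).2.1
          have := Int.toNat_of_nonneg (hc i).1
          omega
        · rw [hcx]
          congr 1
          ext i
          congr 1
          exact_mod_cast congrArg (Int.cast : ℤ → ℝ) (Int.toNat_of_nonneg (hc i).1).symm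
      · refine ⟨x - t, ⟨fun i => (c i - a i).toNat, ?_, ?_⟩, by ring⟩
        · intro i
          dsimp only
          have h1 := (hc i).2.2.1
          have h2 := (hc i).2.2.2
          have := Int.toNat_of_nonneg (show (0:ℤ) ≤ c i - a i by omega)
          omega
        · have hnn : ∀ i, (0 : ℤ) ≤ c i - a i := fun i => by
            have := (hc i).2.2.1; omega
          have : (fun i => (((c i - a i).toNat : ℕ) : ℝ) / q ^ (i + 1)) =
              fun i => ((c i : ℝ) - (a i : ℝ)) / q ^ (i + 1) := by
            ext i
            congr 1
            have := Int.toNat_of_nonneg (hnn i)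
            exact_mod_cast congrArg (Int.cast : ℤ → ℝ) this
          rw [this, hcx, hat, ← Summable.tsum_sub hsc hsa]
          congr 1
          ext i
          ring
    · intro i
      rcases ha i with ⟨h1, h2⟩
      have hm2m1 : (m2 : ℤ) ≤ m1 := by exact_mod_cast hm
      rw [abs_le]
      constructor
      · have : -(m1 : ℝ) ≤ -(m2 : ℝ) := by exact_mod_cast neg_le_neg (by exact_mod_cast hm)
        refine le_trans this ?_
        exact_mod_cast h1
      · exact_mod_cast h2
end

section
/- Let (τ_i)_{i≥0} be the Thue–Morse sequence. For every positive integer n, the number of indices i with 1 ≤ i ≤ 2^n such that τ_i = τ_{i−1} equals 2^n · (−Σ_{i=1}^n (−1/2)^i). -/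
lemma tm_le_one (τ : ℕ → ℕ) (hτ0 : τ 0 = 0) (hτe : ∀ i, τ (2 * i) = τ i)
    (hτo : ∀ i, τ (2 * i + 1) = 1 - τ i) : ∀ i, τ i ≤ 1 := by
  intro i
  induction i using Nat.strong_induction_on with
  | _ i ih =>
    rcases Nat.even_or_odd i with ⟨j, hj⟩ | ⟨j, hj⟩
    · rcases Nat.eq_zero_or_pos j with hj0 | hj0
      · have : i = 0 := by omega
        simp [this, hτ0]
      · have hij : i = 2 * j := by omega
        rw [hij, hτe]
        exact ih j (by omega)
    · rw [hj, hτo]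
      omega

lemma tm_key (τ : ℕ → ℕ) (hτle : ∀ i, τ i ≤ 1) (hτe : ∀ i, τ (2 * i) = τ i)
    (hτo : ∀ i, τ (2 * i + 1) = 1 - τ i) (n : ℕ) :
    ((Finset.Icc 1 (2 ^ (n + 1))).filter (fun i => τ i = τ (i - 1))).card
      = 2 ^ n - ((Finset.Icc 1 (2 ^ n)).filter (fun i => τ i = τ (i - 1))).card := by
  have hpow : 2 ^ (n + 1) = 2 * 2 ^ n := by ring
  have himg : (Finset.Icc 1 (2 ^ (n + 1))).filter (fun i => τ i = τ (i - 1))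
      = ((Finset.Icc 1 (2 ^ n)).filter (fun j => ¬ τ j = τ (j - 1))).image (fun j => 2 * j) := by
    ext i
    simp only [Finset.mem_filter, Finset.mem_image, Finset.mem_Icc]
    constructor
    · rintro ⟨⟨h1, h2⟩, heq⟩
      rcases Nat.even_or_odd i with ⟨j, hj⟩ | ⟨j, hj⟩
      · have hij : i = 2 * j := by omega
        rw [hij] at heq
        have h2j1 : 2 * j - 1 = 2 * (j - 1) + 1 := by omega
        rw [hτe, h2j1, hτo] at heq
        have b1 := hτle j; have b2 := hτle (j - 1)
        exact ⟨j, ⟨⟨by omega, by omega⟩, by omega⟩, hij.symm⟩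
      · exfalso
        rw [hj] at heq
        have h' : 2 * j + 1 - 1 = 2 * j := by omega
        rw [h', hτo, hτe] at heq
        have := hτle j
        omega
    · rintro ⟨j, ⟨⟨h1, h2⟩, hne⟩, rfl⟩
      refine ⟨⟨by omega, by omega⟩, ?_⟩
      have h2j1 : 2 * j - 1 = 2 * (j - 1) + 1 := by omega
      rw [hτe, h2j1, hτo]
      have b1 := hτle j; have b2 := hτle (j - 1)
      omega
  rw [himg, Finset.card_image_of_injective _ (fun a b h => by omega)]
  have := Finset.card_filter_add_card_filter_not
    (s := Finset.Icc 1 (2 ^ n)) (p := fun i => τ i = τ (i - 1))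
  rw [Nat.card_Icc] at this
  omega

lemma tm_count (τ : ℕ → ℕ) (hτ0 : τ 0 = 0) (hτe : ∀ i, τ (2 * i) = τ i)
    (hτo : ∀ i, τ (2 * i + 1) = 1 - τ i) :
    ∀ n, (((Finset.Icc 1 (2 ^ n)).filter (fun i => τ i = τ (i - 1))).card : ℝ)
      = ((2 : ℝ) ^ n - (-1) ^ n) / 3 := by
  have hτle := tm_le_one τ hτ0 hτe hτo
  intro n
  induction n with
  | zero =>
    have h1 : τ 1 = 1 := by have := hτo 0; simpa [hτ0] using this
    simp [Finset.Icc_self, Finset.filter_singleton, h1, hτ0]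
  | succ n ih =>
    have hle : ((Finset.Icc 1 (2 ^ n)).filter (fun i => τ i = τ (i - 1))).card ≤ 2 ^ n := by
      refine le_trans (Finset.card_filter_le _ _) ?_
      simp [Nat.card_Icc]
    rw [tm_key τ hτle hτe hτo n, Nat.cast_sub hle]
    push_cast
    rw [ih, pow_succ, pow_succ]
    ring

lemma tm_sum (n : ℕ) :
    -∑ i ∈ Finset.Icc 1 n, (-(1 : ℝ) / 2) ^ i = (1 - (-(1 : ℝ) / 2) ^ n) / 3 := by
  induction n with
  | zero => simp
  | succ n ih =>
    rw [Finset.sum_Icc_succ_top (by omega : 1 ≤ n + 1)]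
    rw [pow_succ]
    linarith [ih]

/-- For the Thue–Morse sequence `τ` and every `n ≥ 1`, the number of indices
`1 ≤ i ≤ 2^n` with `τ_i = τ_{i-1}` equals `2^n · (-∑_{i=1}^n (-1/2)^i)`. -/
theorem stmt16 (τ : ℕ → ℕ)
    (hτ0 : τ 0 = 0) (hτe : ∀ i, τ (2 * i) = τ i) (hτo : ∀ i, τ (2 * i + 1) = 1 - τ i)
    (n : ℕ) (hn : 1 ≤ n) :
    (((Finset.Icc 1 (2 ^ n)).filter (fun i => τ i = τ (i - 1))).card : ℝ) =
      2 ^ n * (-∑ i ∈ Finset.Icc 1 n, (-(1 : ℝ) / 2) ^ i) := by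
  rw [tm_count τ hτ0 hτe hτo n, tm_sum n]
  have hp : (2 : ℝ) ^ n * (-(1 : ℝ) / 2) ^ n = (-1) ^ n := by
    rw [← mul_pow]; norm_num
  rw [← hp]
  ring
end

section
/- Let (τ_i)_{i≥0} be the Thue–Morse sequence. For each j ∈ {−1, 0, 1}, the density of the value j in the sequence (τ_i − τ_{i−1})_{i≥1} exists and equals 1/3; that is, lim_{n→∞} #{1 ≤ i ≤ n : τ_i − τ_{i−1} = j}/n = 1/3. -/
open Finset Filter

namespace Stmt17Aux

/-- Count of indices `i ∈ [1, n]` with `τ i - τ (i-1) = j`. -/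
def cnt (τ : ℕ → ℕ) (j : ℤ) (n : ℕ) : ℕ :=
  ((Finset.Icc 1 n).filter (fun i => (τ i : ℤ) - (τ (i - 1) : ℤ) = j)).card

lemma cnt_zero (τ : ℕ → ℕ) (j : ℤ) : cnt τ j 0 = 0 := by simp [cnt]

lemma cnt_succ (τ : ℕ → ℕ) (j : ℤ) (n : ℕ) :
    cnt τ j (n + 1) = cnt τ j n + if (τ (n + 1) : ℤ) - (τ n : ℤ) = j then 1 else 0 := by
  unfold cnt
  have h : Finset.Icc 1 (n + 1) = insert (n + 1) (Finset.Icc 1 n) := by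
    ext x; simp only [Finset.mem_Icc, Finset.mem_insert]; omega
  have hmem : n + 1 ∉ (Finset.Icc 1 n).filter (fun i => (τ i : ℤ) - (τ (i - 1) : ℤ) = j) := by
    simp [Finset.mem_Icc]
  rw [h, Finset.filter_insert]
  simp only [Nat.add_sub_cancel]
  by_cases hp : (τ (n + 1) : ℤ) - (τ n : ℤ) = j
  · rw [if_pos hp, if_pos hp, Finset.card_insert_of_notMem hmem]
  · rw [if_neg hp, if_neg hp, add_zero]

lemma tm_le (τ : ℕ → ℕ) (hτ0 : τ 0 = 0) (hτe : ∀ i, τ (2 * i) = τ i)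
    (hτo : ∀ i, τ (2 * i + 1) = 1 - τ i) : ∀ i, τ i ≤ 1 := by
  intro i
  induction i using Nat.strong_induction_on with
  | _ i ih =>
    rcases Nat.even_or_odd' i with ⟨k, rfl | rfl⟩
    · rcases Nat.eq_zero_or_pos k with rfl | hk
      · have := hτ0; rw [hτe]; omega
      · rw [hτe]; exact ih k (by omega)
    · rw [hτo]; omega

section

variable (τ : ℕ → ℕ) (hτ0 : τ 0 = 0) (hτe : ∀ i, τ (2 * i) = τ i)
  (hτo : ∀ i, τ (2 * i + 1) = 1 - τ i)

include hτ0 hτe hτo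

lemma cnt0_odd (m : ℕ) : cnt τ 0 (2 * m + 1) = cnt τ 0 (2 * m) := by
  rw [cnt_succ]
  have h1 := hτo m
  have h2 := hτe m
  have h3 := tm_le τ hτ0 hτe hτo m
  rw [if_neg (by omega), add_zero]

lemma cnt0_rec : ∀ m, cnt τ 0 (2 * m) + cnt τ 0 m = m := by
  intro m
  induction m with
  | zero => simp [cnt_zero]
  | succ m ih =>
    have e1 := hτo m
    have e3 : τ (2 * m + 1 + 1) = τ (m + 1) := by
      rw [show 2 * m + 1 + 1 = 2 * (m + 1) by ring, hτe]
    have b1 := tm_le τ hτ0 hτe hτo m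
    have b2 := tm_le τ hτ0 hτe hτo (m + 1)
    rw [show 2 * (m + 1) = (2 * m + 1) + 1 by ring, cnt_succ,
      cnt0_odd τ hτ0 hτe hτo, cnt_succ]
    by_cases h : τ (m + 1) = τ m
    · rw [if_neg (by omega), if_pos (by omega)]
      omega
    · rw [if_pos (by omega), if_neg (by omega)]
      omega

lemma cnt0_one : cnt τ 0 1 = 0 := by
  have h0 := hτ0
  have h1 : τ 1 = 1 - τ 0 := by simpa using hτo 0
  rw [show (1 : ℕ) = 0 + 1 from rfl, cnt_succ, cnt_zero]
  simp only [Nat.zero_add, zero_add]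
  rw [if_neg (by omega)]

lemma cnt0_bound : ∀ n, 1 ≤ n → |3 * (cnt τ 0 n : ℤ) - n| ≤ (Nat.log 2 n : ℤ) + 1 := by
  intro n
  induction n using Nat.strong_induction_on with
  | _ n ih =>
    intro hn
    rcases Nat.even_or_odd' n with ⟨m, rfl | rfl⟩
    · have hm : 1 ≤ m := by omega
      have hrec := cnt0_rec τ hτ0 hτe hτo m
      have hIH := ih m (by omega) hm
      have hlog : Nat.log 2 (2 * m) = Nat.log 2 m + 1 := by
        rw [show 2 * m = m * 2 by ring, Nat.log_mul_base (by norm_num) (by omega)]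
      have h1 : (cnt τ 0 (2 * m) : ℤ) = (m : ℤ) - cnt τ 0 m := by omega
      calc |3 * (cnt τ 0 (2 * m) : ℤ) - (2 * m : ℕ)|
          = |3 * (cnt τ 0 m : ℤ) - m| := by
            rw [h1, ← abs_neg]; congr 1; push_cast; ring
        _ ≤ (Nat.log 2 m : ℤ) + 1 := hIH
        _ ≤ (Nat.log 2 (2 * m) : ℤ) + 1 := by rw [hlog]; push_cast; omega
    · rcases Nat.eq_zero_or_pos m with rfl | hm
      · rw [cnt0_one τ hτ0 hτe hτo]
        simp
      · have hrec := cnt0_rec τ hτ0 hτe hτo m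
        have hIH := ih m (by omega) hm
        have hlog : Nat.log 2 (2 * m) = Nat.log 2 m + 1 := by
          rw [show 2 * m = m * 2 by ring, Nat.log_mul_base (by norm_num) (by omega)]
        have hlog2 : Nat.log 2 m + 1 ≤ Nat.log 2 (2 * m + 1) := by
          rw [← hlog]; exact Nat.log_mono_right (by omega)
        have h1 : (cnt τ 0 (2 * m + 1) : ℤ) = (m : ℤ) - cnt τ 0 m := by
          have := cnt0_odd τ hτ0 hτe hτo m
          omega
        calc |3 * (cnt τ 0 (2 * m + 1) : ℤ) - (2 * m + 1 : ℕ)|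
            = |(3 * (cnt τ 0 m : ℤ) - m) + 1| := by
              rw [h1, ← abs_neg]; congr 1; push_cast; ring
          _ ≤ |3 * (cnt τ 0 m : ℤ) - m| + |(1 : ℤ)| := abs_add_le _ _
          _ ≤ ((Nat.log 2 m : ℤ) + 1) + 1 := by
              have : |(1 : ℤ)| = 1 := by norm_num
              omega
          _ ≤ (Nat.log 2 (2 * m + 1) : ℤ) + 1 := by push_cast; omega

lemma cnt_sum (n : ℕ) : cnt τ 1 n + cnt τ 0 n + cnt τ (-1) n = n := by
  classical
  have key : ∀ i ∈ Finset.Icc 1 n,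
      ((if (τ i : ℤ) - (τ (i - 1) : ℤ) = 1 then 1 else 0)
        + (if (τ i : ℤ) - (τ (i - 1) : ℤ) = 0 then 1 else 0))
        + (if (τ i : ℤ) - (τ (i - 1) : ℤ) = -1 then 1 else 0) = (1 : ℕ) := by
    intro i _
    have b1 := tm_le τ hτ0 hτe hτo i
    have b2 := tm_le τ hτ0 hτe hτo (i - 1)
    have h : (τ i : ℤ) - (τ (i - 1) : ℤ) = 1 ∨ (τ i : ℤ) - (τ (i - 1) : ℤ) = 0 ∨
        (τ i : ℤ) - (τ (i - 1) : ℤ) = -1 := by omega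
    rcases h with h | h | h <;> simp [h]
  have e1 : cnt τ 1 n
      = ∑ i ∈ Finset.Icc 1 n, if (τ i : ℤ) - (τ (i - 1) : ℤ) = 1 then 1 else 0 := by
    unfold cnt; rw [Finset.card_eq_sum_ones, Finset.sum_filter]
  have e0 : cnt τ 0 n
      = ∑ i ∈ Finset.Icc 1 n, if (τ i : ℤ) - (τ (i - 1) : ℤ) = 0 then 1 else 0 := by
    unfold cnt; rw [Finset.card_eq_sum_ones, Finset.sum_filter]
  have em : cnt τ (-1) n
      = ∑ i ∈ Finset.Icc 1 n, if (τ i : ℤ) - (τ (i - 1) : ℤ) = -1 then 1 else 0 := by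
    unfold cnt; rw [Finset.card_eq_sum_ones, Finset.sum_filter]
  rw [e1, e0, em, ← Finset.sum_add_distrib, ← Finset.sum_add_distrib,
    Finset.sum_congr rfl key]
  simp

lemma tele (n : ℕ) : ∑ i ∈ Finset.Icc 1 n, ((τ i : ℤ) - (τ (i - 1) : ℤ)) = τ n := by
  induction n with
  | zero => simp [hτ0]
  | succ n ih =>
    rw [Finset.sum_Icc_succ_top (by omega : 1 ≤ n + 1), ih]
    simp only [Nat.add_sub_cancel]
    omega

lemma cnt_diff (n : ℕ) : (cnt τ 1 n : ℤ) - cnt τ (-1) n = τ n := by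
  classical
  have key : ∀ i ∈ Finset.Icc 1 n,
      ((if (τ i : ℤ) - (τ (i - 1) : ℤ) = 1 then (1 : ℤ) else 0)
        - (if (τ i : ℤ) - (τ (i - 1) : ℤ) = -1 then 1 else 0))
        = (τ i : ℤ) - (τ (i - 1) : ℤ) := by
    intro i _
    have b1 := tm_le τ hτ0 hτe hτo i
    have b2 := tm_le τ hτ0 hτe hτo (i - 1)
    have h : (τ i : ℤ) - (τ (i - 1) : ℤ) = 1 ∨ (τ i : ℤ) - (τ (i - 1) : ℤ) = 0 ∨
        (τ i : ℤ) - (τ (i - 1) : ℤ) = -1 := by omega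
    rcases h with h | h | h <;> simp [h]
  have e1 : (cnt τ 1 n : ℤ)
      = ∑ i ∈ Finset.Icc 1 n, if (τ i : ℤ) - (τ (i - 1) : ℤ) = 1 then (1 : ℤ) else 0 := by
    unfold cnt; exact (Finset.sum_boole _ _).symm
  have em : (cnt τ (-1) n : ℤ)
      = ∑ i ∈ Finset.Icc 1 n, if (τ i : ℤ) - (τ (i - 1) : ℤ) = -1 then (1 : ℤ) else 0 := by
    unfold cnt; exact (Finset.sum_boole _ _).symm
  rw [e1, em, ← Finset.sum_sub_distrib, Finset.sum_congr rfl key,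
    tele τ hτ0 hτe hτo]

end

/-- `(log₂ n + 1)/(3 n) → 0`. -/
lemma log_aux : Tendsto (fun n : ℕ => ((Nat.log 2 n : ℝ) + 1) / (3 * n)) atTop (nhds 0) := by
  have hlog : Tendsto (fun x : ℝ => Real.log x / x) atTop (nhds 0) := by
    simpa using Real.isLittleO_log_id_atTop.tendsto_div_nhds_zero
  have hinv : Tendsto (fun x : ℝ => 1 / x) atTop (nhds 0) := (by simpa [one_div] using tendsto_inv_atTop_zero (𝕜 := ℝ))
  have hR : Tendsto (fun x : ℝ => (Real.logb 2 x + 1) / (3 * x)) atTop (nhds 0) := by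
    have h1 : Tendsto (fun x : ℝ => (1 / (3 * Real.log 2)) * (Real.log x / x)
        + (1 / 3) * (1 / x)) atTop (nhds ((1 / (3 * Real.log 2)) * 0 + (1 / 3) * 0)) :=
      ((hlog.const_mul _)).add (hinv.const_mul _)
    have h2 : ∀ᶠ x : ℝ in atTop, (1 / (3 * Real.log 2)) * (Real.log x / x)
        + (1 / 3) * (1 / x) = (Real.logb 2 x + 1) / (3 * x) := by
      filter_upwards [eventually_gt_atTop (0 : ℝ)] with x hx
      have hl2 : Real.log 2 ≠ 0 := by
        have := Real.log_pos (by norm_num : (1 : ℝ) < 2); linarith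
      rw [Real.logb]
      field_simp
    simpa using (h1.congr' h2)
  have hcomp : Tendsto (fun n : ℕ => (Real.logb 2 n + 1) / (3 * n)) atTop (nhds 0) :=
    hR.comp tendsto_natCast_atTop_atTop
  apply squeeze_zero_norm' _ hcomp
  filter_upwards [eventually_ge_atTop 1] with n hn
  have hn0 : (0 : ℝ) < n := by exact_mod_cast hn
  have hnl : (Nat.log 2 n : ℝ) ≤ Real.logb 2 n := Real.natLog_le_logb n 2
  rw [Real.norm_eq_abs, abs_of_nonneg (by positivity)]
  gcongr

end Stmt17Aux

open Stmt17Aux in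
/-- For the Thue–Morse sequence `τ`, each value `j ∈ {-1, 0, 1}` has density `1/3`
in the difference sequence `(τ_i - τ_{i-1})_{i≥1}`. -/
theorem stmt17 (τ : ℕ → ℕ)
    (hτ0 : τ 0 = 0) (hτe : ∀ i, τ (2 * i) = τ i) (hτo : ∀ i, τ (2 * i + 1) = 1 - τ i) :
    ∀ j : ℤ, j ∈ ({-1, 0, 1} : Set ℤ) →
      Filter.Tendsto
        (fun n : ℕ =>
          (((Finset.Icc 1 n).filter (fun i => (τ i : ℤ) - (τ (i - 1) : ℤ) = j)).card : ℝ) / n)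
        Filter.atTop (nhds (1 / 3)) := by
  have hle := tm_le τ hτ0 hτe hτo
  -- density of j = 0 is 1/3
  have hF : Tendsto (fun n : ℕ => (cnt τ 0 n : ℝ) / n) atTop (nhds (1 / 3)) := by
    have hf0 : Tendsto (fun n : ℕ => (cnt τ 0 n : ℝ) / n - 1 / 3) atTop (nhds 0) := by
      apply squeeze_zero_norm' _ (log_aux)
      filter_upwards [eventually_ge_atTop 1] with n hn
      have hn0 : (0 : ℝ) < n := by exact_mod_cast hn
      have hb := cnt0_bound τ hτ0 hτe hτo n hn
      have hbR : |3 * (cnt τ 0 n : ℝ) - n| ≤ (Nat.log 2 n : ℝ) + 1 := by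
        exact_mod_cast hb
      have heq : (cnt τ 0 n : ℝ) / n - 1 / 3 = (3 * (cnt τ 0 n : ℝ) - n) / (3 * n) := by
        field_simp
      rw [Real.norm_eq_abs, heq, abs_div, abs_of_pos (by positivity : (0 : ℝ) < 3 * n)]
      gcongr
    have := hf0.add (tendsto_const_nhds (x := (1 / 3 : ℝ)))
    simpa using this
  -- τ n / n → 0
  have hT : Tendsto (fun n : ℕ => (τ n : ℝ) / n) atTop (nhds 0) := by
    apply squeeze_zero_norm' _ tendsto_one_div_atTop_nhds_zero_nat
    filter_upwards [eventually_ge_atTop 1] with n hn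
    have hn0 : (0 : ℝ) < n := by exact_mod_cast hn
    have h1 : (τ n : ℝ) ≤ 1 := by exact_mod_cast hle n
    rw [Real.norm_eq_abs, abs_of_nonneg (by positivity)]
    gcongr
  intro j hj
  have hj' : j = -1 ∨ j = 0 ∨ j = 1 := by simpa using hj
  rcases hj' with rfl | rfl | rfl
  · -- j = -1
    show Tendsto (fun n : ℕ => (cnt τ (-1) n : ℝ) / n) atTop (nhds (1 / 3))
    have hval : ∀ n, (cnt τ (-1) n : ℝ) = ((n : ℝ) - cnt τ 0 n - τ n) / 2 := by
      intro n
      have h1 := cnt_sum τ hτ0 hτe hτo n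
      have h2 := cnt_diff τ hτ0 hτe hτo n
      have h3 : 2 * (cnt τ (-1) n : ℤ) = (n : ℤ) - cnt τ 0 n - τ n := by omega
      have h4 : 2 * (cnt τ (-1) n : ℝ) = (n : ℝ) - cnt τ 0 n - τ n := by exact_mod_cast h3
      linarith
    have hlim : Tendsto (fun n : ℕ => ((1 : ℝ) - (cnt τ 0 n : ℝ) / n - (τ n : ℝ) / n) / 2)
        atTop (nhds ((1 - 1 / 3 - 0) / 2)) :=
      ((tendsto_const_nhds.sub hF).sub hT).div_const 2
    apply Tendsto.congr' _ (by norm_num at hlim ⊢; exact hlim)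
    filter_upwards [eventually_ge_atTop 1] with n hn
    have hn0 : (0 : ℝ) < n := by exact_mod_cast hn
    have hne : (n : ℝ) ≠ 0 := hn0.ne'
    rw [hval n]
    field_simp
    try ring
    try tauto
  · -- j = 0
    exact hF
  · -- j = 1
    show Tendsto (fun n : ℕ => (cnt τ 1 n : ℝ) / n) atTop (nhds (1 / 3))
    have hval : ∀ n, (cnt τ 1 n : ℝ) = ((n : ℝ) - cnt τ 0 n + τ n) / 2 := by
      intro n
      have h1 := cnt_sum τ hτ0 hτe hτo n
      have h2 := cnt_diff τ hτ0 hτe hτo n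
      have h3 : 2 * (cnt τ 1 n : ℤ) = (n : ℤ) - cnt τ 0 n + τ n := by omega
      have h4 : 2 * (cnt τ 1 n : ℝ) = (n : ℝ) - cnt τ 0 n + τ n := by exact_mod_cast h3
      linarith
    have hlim : Tendsto (fun n : ℕ => ((1 : ℝ) - (cnt τ 0 n : ℝ) / n + (τ n : ℝ) / n) / 2)
        atTop (nhds ((1 - 1 / 3 + 0) / 2)) :=
      ((tendsto_const_nhds.sub hF).add hT).div_const 2
    apply Tendsto.congr' _ (by norm_num at hlim ⊢; exact hlim)
    filter_upwards [eventually_ge_atTop 1] with n hn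
    have hn0 : (0 : ℝ) < n := by exact_mod_cast hn
    have hne : (n : ℝ) ≠ 0 := hn0.ne'
    rw [hval n]
    field_simp
    try ring
    try tauto
end

section
/- Let m be a positive integer and q ≥ q_c := (m+2+√(m(m+4)))/2. Let (n_i)_{i≥1} be any sequence of positive integers and let (c_i)_{i≥1} ∈ {−m,...,m}^ℕ be the concatenation (1(−1))^{n_1} 0^{n_2} (1(−1))^{n_3} 0^{n_4} ⋯ (alternating n_{2j−1} copies of the block 1(−1) with n_{2j} copies of the digit 0). Then (c_i) is the unique expansion of its value in base q over the alphabet {−m,...,m}: if (d_i) ∈ {−m,...,m}^ℕ satisfies Σ_{i=1}^∞ d_i/q^i = Σ_{i=1}^∞ c_i/q^i, then d_i = c_i for all i. -/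
/-- Block number `k` (k = 0,1,2,…) of the concatenation
`(1(-1))^{n_1} 0^{n_2} (1(-1))^{n_3} 0^{n_4} ⋯`: for even `k` it consists of `n k`
copies of the word `1(-1)`, for odd `k` of `n k` copies of the digit `0`. -/
def tmBlock (n : ℕ → ℕ) (k : ℕ) : List ℤ :=
  if k % 2 = 0 then (List.replicate (n k) ([1, -1] : List ℤ)).flatten
  else List.replicate (n k) (0 : ℤ)

/-- `concatSeq n i` is the `i`-th digit (i = 0,1,2,…) of the infinite concatenation
of the blocks `tmBlock n 0, tmBlock n 1, …`. -/
def concatSeq (n : ℕ → ℕ) (i : ℕ) : ℤ :=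
  (((List.range (i + 1)).map (tmBlock n)).flatten).getD i 0

noncomputable def tailSum (c : ℕ → ℤ) (x : ℝ) (p : ℕ) : ℝ :=
  ∑' j : ℕ, (c (p + j) : ℝ) * x ^ (j + 1)

def blockLen (n : ℕ → ℕ) (k : ℕ) : ℕ := if k % 2 = 0 then 2 * n k else n k

def Bsum (n : ℕ → ℕ) (k : ℕ) : ℕ := ∑ j ∈ Finset.range k, blockLen n j

lemma tmBlock_length (n : ℕ → ℕ) (k : ℕ) : (tmBlock n k).length = blockLen n k := by
  unfold tmBlock blockLen
  split <;> simp [List.length_flatten, List.map_replicate, mul_comm]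

lemma flatten_length (n : ℕ → ℕ) (N : ℕ) :
    (((List.range N).map (tmBlock n)).flatten).length = Bsum n N := by
  induction N with
  | zero => simp [Bsum]
  | succ N ih =>
    rw [List.range_succ, List.map_append, List.flatten_append]
    simp only [List.length_append, ih, Bsum, Finset.sum_range_succ]
    simp [tmBlock_length]

lemma blockLen_pos (n : ℕ → ℕ) (hn : ∀ k, 1 ≤ n k) (k : ℕ) : 1 ≤ blockLen n k := by
  unfold blockLen; have := hn k; split <;> omega

lemma le_Bsum (n : ℕ → ℕ) (hn : ∀ k, 1 ≤ n k) (k : ℕ) : k ≤ Bsum n k := by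
  induction k with
  | zero => simp [Bsum]
  | succ k ih =>
    have := blockLen_pos n hn k
    simp only [Bsum, Finset.sum_range_succ] at *
    omega

lemma getD_even_block (t o : ℕ) (ho : o < 2 * t) :
    ((List.replicate t ([1, -1] : List ℤ)).flatten).getD o 0
      = if o % 2 = 0 then 1 else -1 := by
  induction t generalizing o with
  | zero => omega
  | succ t ih =>
    rw [List.replicate_succ, List.flatten_cons]
    rcases Nat.lt_or_ge o 2 with h | h
    · interval_cases o <;> simp
    · rw [List.getD_append_right _ _ _ _ (by simpa using h)]
      have h2 : o - [(1:ℤ), -1].length = o - 2 := by simp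
      rw [h2, ih _ (by omega)]
      have : (o - 2) % 2 = o % 2 := by omega
      rw [this]

lemma concat_formula (n : ℕ → ℕ) (hn : ∀ k, 1 ≤ n k) (k i : ℕ)
    (h1 : Bsum n k ≤ i) (h2 : i < Bsum n (k + 1)) :
    concatSeq n i = (tmBlock n k).getD (i - Bsum n k) 0 := by
  have hki : k + 1 ≤ i + 1 := by
    have := le_Bsum n hn k; omega
  unfold concatSeq
  obtain ⟨t, ht⟩ : ∃ t, i + 1 = (k + 1) + t := ⟨i + 1 - (k+1), by omega⟩
  have hlen : (((List.range (k+1)).map (tmBlock n)).flatten).length = Bsum n (k+1) :=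
    flatten_length n (k+1)
  have hlenk : (((List.range k).map (tmBlock n)).flatten).length = Bsum n k :=
    flatten_length n k
  rw [ht, List.range_add, List.map_append, List.flatten_append,
    List.getD_append _ _ _ _ (by rw [hlen]; exact h2),
    List.range_succ, List.map_append, List.flatten_append,
    List.getD_append_right _ _ _ _ (by rw [hlenk]; exact h1), hlenk]
  simp

lemma exists_block (n : ℕ → ℕ) (hn : ∀ k, 1 ≤ n k) (i : ℕ) :
    ∃ k, Bsum n k ≤ i ∧ i < Bsum n (k + 1) := by
  classical
  set k := Nat.findGreatest (fun k => Bsum n k ≤ i) i with hk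
  refine ⟨k, Nat.findGreatest_spec (P := fun k => Bsum n k ≤ i) (Nat.zero_le i)
    (by simp [Bsum]), ?_⟩
  by_contra h
  push_neg at h
  have hki : k + 1 ≤ i := by
    have := le_Bsum n hn (k + 1); omega
  exact absurd h (Nat.findGreatest_is_greatest (P := fun k => Bsum n k ≤ i) (by omega) hki)

lemma Bsum_succ (n : ℕ → ℕ) (k : ℕ) : Bsum n (k + 1) = Bsum n k + blockLen n k := by
  simp [Bsum, Finset.sum_range_succ]
section structural
variable (n : ℕ → ℕ) (hn : ∀ k, 1 ≤ n k)
include hn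

lemma cs_block_even (k i : ℕ) (hk : k % 2 = 0) (h1 : Bsum n k ≤ i) (h2 : i < Bsum n (k + 1)) :
    concatSeq n i = if (i - Bsum n k) % 2 = 0 then 1 else -1 := by
  rw [concat_formula n hn k i h1 h2]
  have hlen : blockLen n k = 2 * n k := by unfold blockLen; simp [hk]
  have ho : i - Bsum n k < 2 * n k := by
    rw [Bsum_succ, hlen] at h2; omega
  unfold tmBlock
  rw [if_pos hk, getD_even_block _ _ ho]

lemma cs_block_odd (k i : ℕ) (hk : k % 2 ≠ 0) (h1 : Bsum n k ≤ i) (h2 : i < Bsum n (k + 1)) :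
    concatSeq n i = 0 := by
  rw [concat_formula n hn k i h1 h2]
  unfold tmBlock
  rw [if_neg hk]
  have hlen : blockLen n k = n k := by unfold blockLen; simp [hk]
  have ho : i - Bsum n k < n k := by rw [Bsum_succ, hlen] at h2; omega
  simp [List.getD_eq_getElem?_getD, List.getElem?_replicate, ho]

lemma cs_cases (i : ℕ) :
    concatSeq n i = -1 ∨ concatSeq n i = 0 ∨ concatSeq n i = 1 := by
  obtain ⟨k, h1, h2⟩ := exists_block n hn i
  by_cases hk : k % 2 = 0
  · rw [cs_block_even n hn k i hk h1 h2]; split <;> simp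
  · rw [cs_block_odd n hn k i hk h1 h2]; simp

lemma cs_one (i : ℕ) (h : concatSeq n i = 1) : concatSeq n (i + 1) = -1 := by
  obtain ⟨k, h1, h2⟩ := exists_block n hn i
  by_cases hk : k % 2 = 0
  · rw [cs_block_even n hn k i hk h1 h2] at h
    have ho : (i - Bsum n k) % 2 = 0 := by by_contra hc; simp [hc] at h
    have hlen : blockLen n k = 2 * n k := by unfold blockLen; simp [hk]
    have hB := Bsum_succ n k
    have h2' : i + 1 < Bsum n (k + 1) := by omega
    rw [cs_block_even n hn k (i+1) hk (by omega) h2']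
    have : (i + 1 - Bsum n k) % 2 = 1 := by omega
    simp [this]
  · rw [cs_block_odd n hn k i hk h1 h2] at h; exact absurd h (by norm_num)

lemma cs_neg (i : ℕ) (h : concatSeq n (i + 1) = -1) : concatSeq n i = 1 := by
  obtain ⟨k, h1, h2⟩ := exists_block n hn (i + 1)
  by_cases hk : k % 2 = 0
  · rw [cs_block_even n hn k (i+1) hk h1 h2] at h
    have ho : (i + 1 - Bsum n k) % 2 = 1 := by
      by_contra hc
      have : (i + 1 - Bsum n k) % 2 = 0 := by omega
      simp [this] at h
    have h1' : Bsum n k ≤ i := by omega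
    rw [cs_block_even n hn k i hk h1' (by omega)]
    have : (i - Bsum n k) % 2 = 0 := by omega
    simp [this]
  · rw [cs_block_odd n hn k (i+1) hk h1 h2] at h; exact absurd h (by norm_num)

lemma cs_ones (p : ℕ) : ∃ r, p ≤ r ∧ concatSeq n r = 1 := by
  refine ⟨Bsum n (2 * p), le_trans (by omega) (le_Bsum n hn (2 * p)), ?_⟩
  have hk : (2 * p) % 2 = 0 := by omega
  have h2 : Bsum n (2 * p) < Bsum n (2 * p + 1) := by
    rw [Bsum_succ]; have := blockLen_pos n hn (2 * p); omega
  rw [cs_block_even n hn (2 * p) _ hk le_rfl h2]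
  simp

end structural

section analytic

variable {c : ℕ → ℤ} {x : ℝ} {C : ℝ}

lemma summable_digit_s18 (hx0 : 0 < x) (hx1 : x < 1)
    (hC : ∀ i, |(c i : ℝ)| ≤ C) (p : ℕ) :
    Summable (fun j : ℕ => (c (p + j) : ℝ) * x ^ (j + 1)) := by
  have hgeo : Summable (fun j : ℕ => C * x ^ (j + 1)) := by
    have h := (summable_geometric_of_lt_one hx0.le hx1).mul_left (C * x)
    refine h.congr fun j => ?_
    rw [pow_succ]; ring
  refine Summable.of_abs (Summable.of_nonneg_of_le (fun j => abs_nonneg _) (fun j => ?_) hgeo)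
  rw [abs_mul, abs_pow, abs_of_pos hx0]
  exact mul_le_mul_of_nonneg_right (hC _) (pow_nonneg hx0.le _)

lemma tailSum_succ (hx0 : 0 < x) (hx1 : x < 1) (hC : ∀ i, |(c i : ℝ)| ≤ C) (p : ℕ) :
    tailSum c x p = (c p : ℝ) * x + x * tailSum c x (p + 1) := by
  have hs := summable_digit_s18 hx0 hx1 hC p
  have key := (Summable.sum_add_tsum_nat_add (f := fun j : ℕ => (c (p + j) : ℝ) * x ^ (j + 1)) 1 hs).symm
  have h2 : ∑' j : ℕ, (c (p + (j + 1)) : ℝ) * x ^ (j + 1 + 1)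
      = x * tailSum c x (p + 1) := by
    rw [tailSum, ← tsum_mul_left]
    refine tsum_congr fun j => ?_
    rw [show p + (j + 1) = p + 1 + j by ring]
    ring
  rw [tailSum, key, h2]
  norm_num

set_option maxHeartbeats 1000000 in
lemma tailSum_upper (hx0 : 0 < x) (hx : 2 * x ≤ 1)
    (habs : ∀ i, c i = -1 ∨ c i = 0 ∨ c i = 1)
    (h1 : ∀ i, c i = 1 → c (i + 1) = -1) (p : ℕ) :
    tailSum c x p ≤ x / (1 + x) := by
  have hx1 : x < 1 := by linarith
  have hC : ∀ i, |(c i : ℝ)| ≤ 1 := by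
    intro i; rcases habs i with h | h | h <;> simp [h]
  have hs := summable_digit_s18 hx0 hx1 hC p
  have hse : Summable (fun k : ℕ => (c (p + 2 * k) : ℝ) * x ^ (2 * k + 1)) :=
    hs.comp_injective (fun a b h => by omega)
  have hso : Summable (fun k : ℕ => (c (p + (2 * k + 1)) : ℝ) * x ^ (2 * k + 1 + 1)) :=
    hs.comp_injective (fun a b h => by omega)
  have heo := tsum_even_add_odd (f := fun j : ℕ => (c (p + j) : ℝ) * x ^ (j + 1)) hse hso
  rw [tailSum, ← heo, ← Summable.tsum_add hse hso]
  have hgeo : Summable (fun k : ℕ => (x - x ^ 2) * (x ^ 2) ^ k) :=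
    (summable_geometric_of_lt_one (by positivity) (by nlinarith)).mul_left _
  have hb : ∀ k : ℕ, (c (p + 2 * k) : ℝ) * x ^ (2 * k + 1)
      + (c (p + (2 * k + 1)) : ℝ) * x ^ (2 * k + 1 + 1)
      ≤ (x - x ^ 2) * (x ^ 2) ^ k := by
    intro k
    have hpow : (x - x ^ 2) * (x ^ 2) ^ k = x ^ (2 * k + 1) - x ^ (2 * k + 1 + 1) := by
      ring
    rw [hpow]
    have hxp : (0 : ℝ) < x ^ (2 * k + 1) := pow_pos hx0 _
    have hxs : x ^ (2 * k + 1 + 1) = x * x ^ (2 * k + 1) := by ring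
    rcases habs (p + 2 * k) with ha | ha | ha
    · rcases habs (p + (2 * k + 1)) with hb | hb | hb <;>
        rw [ha, hb] <;> push_cast <;> nlinarith
    · rcases habs (p + (2 * k + 1)) with hb | hb | hb <;>
        rw [ha, hb] <;> push_cast <;> nlinarith
    · have hb := h1 _ ha
      rw [show p + 2 * k + 1 = p + (2 * k + 1) by ring] at hb
      rw [ha, hb]; push_cast; nlinarith
  calc ∑' k : ℕ, ((c (p + 2 * k) : ℝ) * x ^ (2 * k + 1)
        + (c (p + (2 * k + 1)) : ℝ) * x ^ (2 * k + 1 + 1))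
      ≤ ∑' k : ℕ, (x - x ^ 2) * (x ^ 2) ^ k :=
        Summable.tsum_le_tsum hb (hse.add hso) hgeo
    _ = (x - x ^ 2) * (1 - x ^ 2)⁻¹ := by
        rw [tsum_mul_left, tsum_geometric_of_lt_one (by positivity) (by nlinarith)]
    _ = x / (1 + x) := by
        have hne1 : (1 : ℝ) - x ≠ 0 := by nlinarith
        have hne2 : (1 : ℝ) + x ≠ 0 := by nlinarith
        have hne : (1 : ℝ) - x ^ 2 ≠ 0 := by
          intro h; apply hne1; nlinarith [sq_nonneg x]
        field_simp
        ring

lemma partial_nonneg (hx0 : 0 < x) (hx : 2 * x ≤ 1)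
    (habs : ∀ i, c i = -1 ∨ c i = 0 ∨ c i = 1)
    (h1 : ∀ i, c i = 1 → c (i + 1) = -1)
    (h2 : ∀ i, c (i + 1) = -1 → c i = 1) :
    ∀ N p, c p ≠ -1 → 0 ≤ ∑ j ∈ Finset.range N, (c (p + j) : ℝ) * x ^ (j + 1) := by
  have hrec : ∀ N p, ∑ j ∈ Finset.range (N + 1), (c (p + j) : ℝ) * x ^ (j + 1)
      = (c p : ℝ) * x + x * ∑ j ∈ Finset.range N, (c (p + 1 + j) : ℝ) * x ^ (j + 1) := by
    intro N p
    rw [Finset.sum_range_succ' (fun j => (c (p + j) : ℝ) * x ^ (j + 1)) N, add_comm,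
      Finset.mul_sum]
    congr 1
    · norm_num
    refine Finset.sum_congr rfl fun j _ => ?_
    rw [show p + (j + 1) = p + 1 + j by ring]
    ring
  intro N
  induction N using Nat.strong_induction_on with
  | _ N ih =>
    intro p hp
    match N with
    | 0 => simp
    | 1 =>
      rw [hrec 0 p]
      simp only [Finset.range_zero, Finset.sum_empty, mul_zero, add_zero]
      rcases habs p with h | h | h
      · exact absurd h hp
      · simp [h]
      · rw [h]; push_cast; positivity
    | (M + 2) =>
      rcases habs p with h | h | h
      · exact absurd h hp
      · rw [hrec (M + 1) p, h]
        push_cast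
        rw [zero_mul, zero_add]
        have hp1 : c (p + 1) ≠ -1 := fun hc => by
          have := h2 p hc; rw [this] at h; norm_num at h
        have := ih (M + 1) (by omega) (p + 1) hp1
        positivity
      · have hc1 : c (p + 1) = -1 := h1 p h
        have hc2 : c (p + 2) ≠ -1 := fun hc => by
          have := h2 (p + 1) (by rw [show p + 1 + 1 = p + 2 by ring]; exact hc)
          rw [this] at hc1; norm_num at hc1
        rw [hrec (M + 1) p, hrec M (p + 1), h, hc1]
        push_cast
        have hM := ih M (by omega) (p + 2) hc2
        rw [show p + 1 + 1 = p + 2 by ring] at *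
        nlinarith [hM, mul_pos hx0 hx0, mul_nonneg (mul_pos hx0 hx0).le hM,
          mul_pos hx0 (show (0:ℝ) < 1 - x by linarith)]

lemma tailSum_nonneg (hx0 : 0 < x) (hx : 2 * x ≤ 1)
    (habs : ∀ i, c i = -1 ∨ c i = 0 ∨ c i = 1)
    (h1 : ∀ i, c i = 1 → c (i + 1) = -1)
    (h2 : ∀ i, c (i + 1) = -1 → c i = 1)
    (p : ℕ) (hp : c p ≠ -1) : 0 ≤ tailSum c x p := by
  have hx1 : x < 1 := by linarith
  have hC : ∀ i, |(c i : ℝ)| ≤ 1 := by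
    intro i; rcases habs i with h | h | h <;> simp [h]
  have hs := summable_digit_s18 hx0 hx1 hC p
  refine ge_of_tendsto hs.hasSum.tendsto_sum_nat ?_
  filter_upwards with N using partial_nonneg hx0 hx habs h1 h2 N p hp

lemma tailSum_pos (hx0 : 0 < x) (hx : 2 * x ≤ 1)
    (habs : ∀ i, c i = -1 ∨ c i = 0 ∨ c i = 1)
    (h1 : ∀ i, c i = 1 → c (i + 1) = -1)
    (h2 : ∀ i, c (i + 1) = -1 → c i = 1) :
    ∀ t p, c p ≠ -1 → c (p + t) = 1 → 0 < tailSum c x p := by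
  have hx1 : x < 1 := by linarith
  have hC : ∀ i, |(c i : ℝ)| ≤ 1 := by
    intro i; rcases habs i with h | h | h <;> simp [h]
  intro t
  induction t using Nat.strong_induction_on with
  | _ t ih =>
    intro p hp hpt
    rcases habs p with h | h | h
    · exact absurd h hp
    · -- c p = 0
      have ht0 : t ≠ 0 := by
        intro h0; rw [h0, Nat.add_zero, h] at hpt; norm_num at hpt
      have hp1 : c (p + 1) ≠ -1 := fun hc => by
        have := h2 p hc; rw [this] at h; norm_num at h
      have hpt' : c ((p + 1) + (t - 1)) = 1 := by
        rw [show p + 1 + (t - 1) = p + t by omega]; exact hpt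
      have hT1 := ih (t - 1) (by omega) (p + 1) hp1 hpt'
      rw [tailSum_succ hx0 hx1 hC p, h]
      push_cast
      nlinarith
    · -- c p = 1
      have hc1 : c (p + 1) = -1 := h1 p h
      have hc2 : c (p + 2) ≠ -1 := fun hc => by
        have := h2 (p + 1) (by rw [show p + 1 + 1 = p + 2 by ring]; exact hc)
        rw [this] at hc1; norm_num at hc1
      have hT2 : 0 ≤ tailSum c x (p + 2) := tailSum_nonneg hx0 hx habs h1 h2 _ hc2
      rw [tailSum_succ hx0 hx1 hC p, tailSum_succ hx0 hx1 hC (p + 1), h, hc1,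
        show p + 1 + 1 = p + 2 by ring]
      push_cast
      nlinarith [mul_nonneg (mul_pos hx0 hx0).le hT2,
        mul_pos hx0 (show (0:ℝ) < 1 - x by linarith)]

lemma tailSum_lower (hx0 : 0 < x) (hx : 2 * x ≤ 1)
    (habs : ∀ i, c i = -1 ∨ c i = 0 ∨ c i = 1)
    (h1 : ∀ i, c i = 1 → c (i + 1) = -1)
    (h2 : ∀ i, c (i + 1) = -1 → c i = 1)
    (h4 : ∀ p, ∃ r, p ≤ r ∧ c r = 1) (p : ℕ) :
    -x < tailSum c x p := by
  have hx1 : x < 1 := by linarith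
  have hC : ∀ i, |(c i : ℝ)| ≤ 1 := by
    intro i; rcases habs i with h | h | h <;> simp [h]
  by_cases hp : c p = -1
  · have hp1 : c (p + 1) ≠ -1 := fun hc => by
      have := h2 p hc; rw [this] at hp; norm_num at hp
    obtain ⟨r, hr1, hr2⟩ := h4 (p + 1)
    have hT1 : 0 < tailSum c x (p + 1) :=
      tailSum_pos hx0 hx habs h1 h2 (r - (p + 1)) (p + 1) hp1
        (by rw [show p + 1 + (r - (p + 1)) = r by omega]; exact hr2)
    rw [tailSum_succ hx0 hx1 hC p, hp]
    push_cast
    nlinarith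
  · have := tailSum_nonneg hx0 hx habs h1 h2 p hp
    nlinarith

lemma tailSum_abs (hx0 : 0 < x) (hx1 : x < 1) (hC : ∀ i, |(c i : ℝ)| ≤ C) (p : ℕ) :
    |tailSum c x p| ≤ C * x / (1 - x) := by
  have hs := summable_digit_s18 hx0 hx1 hC p
  have hgeo : Summable (fun j : ℕ => C * x ^ (j + 1)) := by
    have h := (summable_geometric_of_lt_one hx0.le hx1).mul_left (C * x)
    refine h.congr fun j => ?_
    rw [pow_succ]; ring
  have h1 : |tailSum c x p| ≤ ∑' j : ℕ, |(c (p + j) : ℝ) * x ^ (j + 1)| := by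
    rw [tailSum]
    exact norm_tsum_le_tsum_norm (f := fun j : ℕ => (c (p + j) : ℝ) * x ^ (j + 1)) hs.abs
  refine h1.trans ?_
  have h2 : ∑' j : ℕ, |(c (p + j) : ℝ) * x ^ (j + 1)| ≤ ∑' j : ℕ, C * x ^ (j + 1) := by
    refine Summable.tsum_le_tsum (fun j => ?_) hs.abs hgeo
    rw [abs_mul, abs_pow, abs_of_pos hx0]
    exact mul_le_mul_of_nonneg_right (hC _) (pow_nonneg hx0.le _)
  refine h2.trans ?_
  have h3 : ∑' j : ℕ, C * x ^ (j + 1) = C * x * (1 - x)⁻¹ := by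
    rw [show (fun j : ℕ => C * x ^ (j + 1)) = fun j : ℕ => (C * x) * x ^ j from
      funext fun j => by rw [pow_succ]; ring, tsum_mul_left,
      tsum_geometric_of_lt_one hx0.le hx1]
  rw [h3, div_eq_mul_inv]



end analytic

theorem stmt18 (m : ℕ) (hm : 1 ≤ m) (q : ℝ)
    (hq : ((m : ℝ) + 2 + Real.sqrt (m * (m + 4))) / 2 ≤ q)
    (n : ℕ → ℕ) (hn : ∀ k, 1 ≤ n k)
    (d : ℕ → ℤ) (hd : ∀ i, -(m : ℤ) ≤ d i ∧ d i ≤ (m : ℤ))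
    (hsum : ∑' i : ℕ, (d i : ℝ) / q ^ (i + 1) =
      ∑' i : ℕ, (concatSeq n i : ℝ) / q ^ (i + 1)) :
    ∀ i, d i = concatSeq n i := by
  -- basic facts about q
  have hm1 : (1 : ℝ) ≤ (m : ℝ) := by exact_mod_cast hm
  have hs0 : 0 ≤ Real.sqrt ((m : ℝ) * (m + 4)) := Real.sqrt_nonneg _
  have hsq : Real.sqrt ((m : ℝ) * (m + 4)) ^ 2 = (m : ℝ) * (m + 4) :=
    Real.sq_sqrt (by positivity)
  have hsqrt2 : (2 : ℝ) ≤ Real.sqrt ((m : ℝ) * (m + 4)) := by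
    rw [show (2 : ℝ) = Real.sqrt 4 by
      rw [show (4 : ℝ) = 2 ^ 2 by norm_num, Real.sqrt_sq (by norm_num)]]
    exact Real.sqrt_le_sqrt (by nlinarith)
  have hq2 : (5 : ℝ) / 2 ≤ q := by linarith
  have hq1 : (1 : ℝ) < q := by linarith
  have h2q : Real.sqrt ((m : ℝ) * (m + 4)) ≤ 2 * q - ((m : ℝ) + 2) := by linarith
  have key : (m : ℝ) * q ≤ (q - 1) ^ 2 := by
    have hP := pow_le_pow_left₀ hs0 h2q 2
    rw [hsq] at hP
    nlinarith
  set x : ℝ := q⁻¹ with hxdef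
  have hq0 : (0 : ℝ) < q := by linarith
  have hx0 : 0 < x := inv_pos.mpr hq0
  have hxq : x * q = 1 := inv_mul_cancel₀ (ne_of_gt hq0)
  have hx : 2 * x ≤ 1 := by
    rw [hxdef, inv_eq_one_div, mul_one_div, div_le_one hq0]
    linarith
  have hx1 : x < 1 := by linarith
  -- digit sequence facts
  set c : ℕ → ℤ := concatSeq n with hcdef
  have habs : ∀ i, c i = -1 ∨ c i = 0 ∨ c i = 1 := cs_cases n hn
  have h1 : ∀ i, c i = 1 → c (i + 1) = -1 := cs_one n hn
  have h2 : ∀ i, c (i + 1) = -1 → c i = 1 := cs_neg n hn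
  have h4 : ∀ p, ∃ r, p ≤ r ∧ c r = 1 := cs_ones n hn
  have hCc : ∀ i, |(c i : ℝ)| ≤ 1 := by
    intro i; rcases habs i with h | h | h <;> simp [h]
  have hCd : ∀ i, |(d i : ℝ)| ≤ (m : ℝ) := by
    intro i
    rw [abs_le]
    constructor
    · exact_mod_cast (hd i).1
    · exact_mod_cast (hd i).2
  set e : ℕ → ℤ := fun j => c j - d j with hedef
  have hCe : ∀ i, |(e i : ℝ)| ≤ (m : ℝ) + 1 := by
    intro i
    have hc := abs_le.mp (hCc i)
    have hdd := abs_le.mp (hCd i)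
    have hval : (e i : ℝ) = (c i : ℝ) - (d i : ℝ) := by
      simp only [hedef]; push_cast; ring
    rw [hval, abs_le]
    constructor <;> linarith [hc.1, hc.2, hdd.1, hdd.2]
  -- summability
  have hsc := summable_digit_s18 hx0 hx1 hCc
  have hsd := summable_digit_s18 hx0 hx1 hCd
  have hse := summable_digit_s18 hx0 hx1 hCe
  -- tailSum e = tailSum c - tailSum d
  have hsplit : ∀ p, tailSum e x p = tailSum c x p - tailSum d x p := by
    intro p
    rw [tailSum, tailSum, tailSum, ← Summable.tsum_sub (hsc p) (hsd p)]
    refine tsum_congr fun j => ?_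
    simp only [hedef]
    push_cast
    ring
  -- conversion of hsum
  have hconv : ∀ (f : ℕ → ℤ), tailSum f x 0 = ∑' i : ℕ, (f i : ℝ) / q ^ (i + 1) := by
    intro f
    refine tsum_congr fun j => ?_
    rw [Nat.zero_add, div_eq_mul_inv, ← inv_pow]
  have htot : tailSum e x 0 = 0 := by
    rw [hsplit, hconv, hconv, hsum, sub_self]
  -- main induction
  intro i
  induction i using Nat.strong_induction_on with
  | _ i ih =>
    have F0 : Summable (fun j : ℕ => (e j : ℝ) * x ^ (j + 1)) :=
      (hse 0).congr fun j => by rw [Nat.zero_add]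
    have htot' : ∑' j : ℕ, (e j : ℝ) * x ^ (j + 1) = 0 := by
      rw [← htot, tailSum]
      exact tsum_congr fun j => by rw [Nat.zero_add]
    have hz : ∑ j ∈ Finset.range i, (e j : ℝ) * x ^ (j + 1) = 0 :=
      Finset.sum_eq_zero fun j hj => by
        have hj' := ih j (Finset.mem_range.mp hj)
        have hz0 : e j = 0 := by simp [hedef, hj']
        rw [hz0]
        norm_num
    have hadd := Summable.sum_add_tsum_nat_add (f := fun j : ℕ => (e j : ℝ) * x ^ (j + 1)) i F0
    have htail0 : ∑' j : ℕ, (e (j + i) : ℝ) * x ^ (j + i + 1) = 0 := by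
      rw [hz, htot'] at hadd
      linarith
    have hshift : ∑' j : ℕ, (e (j + i) : ℝ) * x ^ (j + i + 1) = x ^ i * tailSum e x i := by
      rw [tailSum, ← tsum_mul_left]
      refine tsum_congr fun j => ?_
      rw [show j + i = i + j from Nat.add_comm j i,
        show i + j + 1 = i + (j + 1) by ring, pow_add]
      ring
    have htaili : tailSum e x i = 0 := by
      have hxe : x ^ i ≠ 0 := pow_ne_zero _ (ne_of_gt hx0)
      have h0 : x ^ i * tailSum e x i = 0 := by rw [← hshift]; exact htail0
      rcases mul_eq_zero.mp h0 with h | h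
      · exact absurd h hxe
      · exact h
    have hstep := tailSum_succ hx0 hx1 hCe i
    rw [htaili] at hstep
    have hei : (e i : ℝ) = - tailSum e x (i + 1) := by
      have hxne : x ≠ 0 := ne_of_gt hx0
      have h' : ((e i : ℝ) + tailSum e x (i + 1)) * x = 0 := by linear_combination -hstep
      rcases mul_eq_zero.mp h' with h | h
      · linarith
      · exact absurd h hxne
    have hA_up : tailSum c x (i + 1) ≤ x / (1 + x) := tailSum_upper hx0 hx habs h1 (i + 1)
    have hA_lo : -x < tailSum c x (i + 1) := tailSum_lower hx0 hx habs h1 h2 h4 (i + 1)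
    have hB := abs_le.mp (tailSum_abs hx0 hx1 hCd (i + 1))
    have e1 : (m : ℝ) * q * (x * x) = (m : ℝ) * x := by
      linear_combination ((m : ℝ) * x) * hxq
    have e2 : (q - 1) ^ 2 * (x * x) = (1 - x) ^ 2 := by
      linear_combination (x * q + 1 - 2 * x) * hxq
    have hkx := mul_le_mul_of_nonneg_right key (mul_nonneg hx0.le hx0.le)
    have hf1 : (m : ℝ) * x / (1 - x) ≤ 1 - x := by
      rw [div_le_iff₀ (by linarith : (0:ℝ) < 1 - x), ← pow_two]
      rw [e1, e2] at hkx
      exact hkx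
    have hf2 : x / (1 + x) < x := by
      rw [div_lt_iff₀ (by linarith : (0:ℝ) < 1 + x)]
      have hxx := mul_pos hx0 hx0
      ring_nf
      nlinarith [hxx]
    have heiv : (e i : ℝ) = tailSum d x (i + 1) - tailSum c x (i + 1) := by
      rw [hei, hsplit]; ring
    have habs_lt : |(e i : ℝ)| < 1 := by
      rw [abs_lt]
      constructor
      · rw [heiv]; linarith [hB.1, hf1, hA_up, hf2]
      · rw [heiv]; linarith [hB.2, hf1, hA_lo]
    have hint : |e i| < 1 := by
      have : ((|e i| : ℤ) : ℝ) < 1 := by rwa [← Int.cast_abs] at habs_lt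
      exact_mod_cast this
    have hzero : e i = 0 := Int.abs_lt_one_iff.mp hint
    have : c i - d i = 0 := by simpa [hedef] using hzero
    omega
end
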